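/- arXiv:math-ph/0110029 — 10 statements merged into one kernel-verified Lean document; each statement's English description precedes it below -/
import Mathlib

section
/- For any initial data t₀ ∈ ℝ, h₀ > 0, h₁ ∈ ℝ, there exists a unique solution h : ℝ → ℝ, defined and positive on all of ℝ, of the differential equation h(t)³(h''(t) + h'(t)) = 1 with h(t₀) = h₀ and h'(t₀) = h₁. -/
open Set Real intervalIntegral

noncomputable section ODEhaux

/-- truncated `x⁻³` -/
def gcut (ε x : ℝ) : ℝ := ((max x ε) ^ 3)⁻¹

lemma gcut_pos {ε : ℝ} (hε : 0 < ε) (x : ℝ) : 0 < gcut ε x := by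
  have h : 0 < max x ε := lt_max_of_lt_right hε
  unfold gcut; positivity

lemma gcut_le {ε : ℝ} (hε : 0 < ε) (x : ℝ) : gcut ε x ≤ (ε ^ 3)⁻¹ := by
  unfold gcut
  have h : ε ^ 3 ≤ (max x ε) ^ 3 := by
    gcongr; exact le_max_right _ _
  exact inv_anti₀ (by positivity) h

lemma gcut_eq {ε x : ℝ} (hx : ε ≤ x) : gcut ε x = (x ^ 3)⁻¹ := by
  rw [gcut, max_eq_left hx]

lemma gcut_continuous {ε : ℝ} (hε : 0 < ε) : Continuous (gcut ε) := by
  apply Continuous.inv₀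
  · exact (continuous_id.max continuous_const).pow 3
  · intro x
    have h : 0 < max x ε := lt_max_of_lt_right hε
    positivity

lemma inv3_lipschitzOn {ε : ℝ} (hε : 0 < ε) :
    LipschitzOnWith ⟨3 * (ε ^ 4)⁻¹, by positivity⟩ (fun x : ℝ => (x ^ 3)⁻¹) (Ici ε) := by
  apply (convex_Ici ε).lipschitzOnWith_of_nnnorm_hasDerivWithin_le
    (f' := fun x => -3 * (x ^ 4)⁻¹)
  · intro x hx
    have hx0 : x ≠ 0 := by
      have : (0:ℝ) < x := lt_of_lt_of_le hε hx
      positivity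
    have h := hasDerivAt_zpow (-3) x (Or.inl hx0)
    norm_num [zpow_neg, show ((-3:ℤ) - 1) = -4 by ring] at h
    exact (by linarith : (-3:ℝ) * (x ^ 4)⁻¹ = -(3 * (x ^ 4)⁻¹)) ▸ h.hasDerivWithinAt
  · intro x hx
    have hx' : (0:ℝ) < x := lt_of_lt_of_le hε hx
    apply NNReal.coe_le_coe.mp
    have h4 : (x ^ 4)⁻¹ ≤ (ε ^ 4)⁻¹ := by
      apply inv_anti₀ (by positivity)
      gcongr
      exact hx
    show |(-3 : ℝ) * (x ^ 4)⁻¹| ≤ 3 * (ε ^ 4)⁻¹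
    rw [abs_mul, abs_neg, abs_of_nonneg (by positivity : (0:ℝ) ≤ (x ^ 4)⁻¹)]
    norm_num
    linarith


lemma gcut_lipschitz {ε : ℝ} (hε : 0 < ε) :
    LipschitzWith ⟨3 * (ε ^ 4)⁻¹, by positivity⟩ (gcut ε) := by
  have hmax : LipschitzWith 1 (fun x : ℝ => max x ε) := (LipschitzWith.id (α := ℝ)).max_const ε
  have hmaps : Set.MapsTo (fun x : ℝ => max x ε) Set.univ (Ici ε) := by
    intro x _; exact le_max_right x ε
  have := ((inv3_lipschitzOn hε).comp hmax.lipschitzOnWith hmaps)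
  exact (lipschitzOnWith_univ.mp this).weaken (le_of_eq (mul_one _))

/-- the vector field of the (truncated) system -/
def Fv (ε : ℝ) (p : ℝ × ℝ) : ℝ × ℝ := (p.2, gcut ε p.1 - p.2)

lemma Fv_lipschitz {ε : ℝ} (hε : 0 < ε) : ∃ K : NNReal, LipschitzWith K (Fv ε) := by
  have h1 : LipschitzWith 1 (fun p : ℝ × ℝ => p.2) := LipschitzWith.prod_snd
  have h2 : LipschitzWith _ (fun p : ℝ × ℝ => gcut ε p.1) :=
    (gcut_lipschitz hε).comp LipschitzWith.prod_fst
  exact ⟨_, (h1.prodMk (h2.sub h1))⟩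

lemma Fv_norm_le {ε : ℝ} (hε : 0 < ε) (p : ℝ × ℝ) : ‖Fv ε p‖ ≤ ‖p‖ + (ε ^ 3)⁻¹ := by
  have h2 : |p.2| ≤ ‖p‖ := by
    rw [Prod.norm_def]; exact le_max_right _ _
  have hg : |gcut ε p.1| ≤ (ε ^ 3)⁻¹ := by
    rw [abs_of_pos (gcut_pos hε _)]; exact gcut_le hε _
  rw [Fv, Prod.norm_def]
  apply max_le
  · have : ‖p‖ ≤ ‖p‖ + (ε ^ 3)⁻¹ := by
      have : (0:ℝ) < (ε ^ 3)⁻¹ := by positivity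
      linarith
    simpa using le_trans h2 this
  · calc ‖gcut ε p.1 - p.2‖ ≤ |gcut ε p.1| + |p.2| := norm_sub_le _ _
      _ ≤ ‖p‖ + (ε ^ 3)⁻¹ := by linarith

/-- the (truncated) potential -/
def Vf (ε x : ℝ) : ℝ := (2 * ε ^ 2)⁻¹ - ∫ t in ε..x, gcut ε t

lemma Vf_hasDerivAt {ε : ℝ} (hε : 0 < ε) (x : ℝ) :
    HasDerivAt (Vf ε) (-(gcut ε x)) x := by
  have := ((gcut_continuous hε).integral_hasStrictDerivAt ε x).hasDerivAt
  exact this.const_sub _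

lemma Vf_ge {ε x : ℝ} (hε : 0 < ε) (hx : x ≤ ε) : (2 * ε ^ 2)⁻¹ ≤ Vf ε x := by
  rw [Vf, le_sub_iff_add_le]
  have h : (0:ℝ) ≤ ∫ t in x..ε, gcut ε t :=
    intervalIntegral.integral_nonneg hx (fun u _ => (gcut_pos hε u).le)
  rw [intervalIntegral.integral_symm]
  linarith

lemma Vf_eq {ε x : ℝ} (hε : 0 < ε) (hx : ε ≤ x) : Vf ε x = (2 * x ^ 2)⁻¹ := by
  have hder : ∀ t ∈ uIcc ε x, HasDerivAt (fun y : ℝ => -(2 * y ^ 2)⁻¹) (gcut ε t) t := by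
    intro t ht
    rw [uIcc_of_le hx] at ht
    have ht0 : 0 < t := lt_of_lt_of_le hε ht.1
    have h1 : HasDerivAt (fun y : ℝ => 2 * y ^ 2) (2 * (2 * t ^ 1)) t :=
      (hasDerivAt_pow 2 t).const_mul 2
    have h2 := (h1.inv (by positivity)).neg
    refine h2.congr_deriv ?_
    rw [gcut_eq ht.1]
    field_simp
  have := intervalIntegral.integral_eq_sub_of_hasDerivAt hder
    ((gcut_continuous hε).intervalIntegrable _ _)
  rw [Vf, this]
  ring

lemma Vf_nonneg {ε : ℝ} (hε : 0 < ε) (x : ℝ) : 0 ≤ Vf ε x := by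
  rcases le_total x ε with h | h
  · exact le_trans (by positivity) (Vf_ge hε h)
  · rw [Vf_eq hε h]
    have : 0 < x := lt_of_lt_of_le hε h
    positivity


/-- energy -/
def Eng (ε : ℝ) (p : ℝ × ℝ) : ℝ := p.2 ^ 2 / 2 + Vf ε p.1

lemma Eng_nonneg {ε : ℝ} (hε : 0 < ε) (p : ℝ × ℝ) : 0 ≤ Eng ε p := by
  have := Vf_nonneg hε p.1
  rw [Eng]; nlinarith

lemma comp_fst_hasDerivWithinAt {f : ℝ → ℝ × ℝ} {v : ℝ × ℝ} {s : Set ℝ} {t : ℝ}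
    (hf : HasDerivWithinAt f v s t) :
    HasDerivWithinAt (fun u => (f u).1) v.1 s t :=
  (ContinuousLinearMap.fst ℝ ℝ ℝ).hasFDerivAt.comp_hasDerivWithinAt t hf

lemma comp_snd_hasDerivWithinAt {f : ℝ → ℝ × ℝ} {v : ℝ × ℝ} {s : Set ℝ} {t : ℝ}
    (hf : HasDerivWithinAt f v s t) :
    HasDerivWithinAt (fun u => (f u).2) v.2 s t :=
  (ContinuousLinearMap.snd ℝ ℝ ℝ).hasFDerivAt.comp_hasDerivWithinAt t hf

lemma Eng_hasDerivWithinAt {ε : ℝ} (hε : 0 < ε) {f : ℝ → ℝ × ℝ} {s : Set ℝ} {t : ℝ}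
    (hf : HasDerivWithinAt f (Fv ε (f t)) s t) :
    HasDerivWithinAt (fun u => Eng ε (f u)) (-((f t).2 ^ 2)) s t := by
  have hx : HasDerivWithinAt (fun u => (f u).1) ((f t).2) s t := comp_fst_hasDerivWithinAt hf
  have hy : HasDerivWithinAt (fun u => (f u).2) (gcut ε (f t).1 - (f t).2) s t :=
    comp_snd_hasDerivWithinAt hf
  have h1 := (hy.pow 2).div_const 2
  have h2 : HasDerivWithinAt (fun u => Vf ε ((f u).1)) (-(gcut ε (f t).1) * (f t).2) s t :=
    (Vf_hasDerivAt hε _).comp_hasDerivWithinAt t hx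
  have := h1.add h2
  exact this.congr_deriv (by ring)

section energy

variable {ε a b : ℝ} {f : ℝ → ℝ × ℝ}

lemma eng_anti (hε : 0 < ε)
    (hf : ∀ t ∈ Icc a b, HasDerivWithinAt f (Fv ε (f t)) (Icc a b) t) :
    AntitoneOn (fun t => Eng ε (f t)) (Icc a b) := by
  apply antitoneOn_of_hasDerivWithinAt_nonpos (convex_Icc a b)
    (f' := fun t => -((f t).2 ^ 2))
  · exact fun t ht => (Eng_hasDerivWithinAt hε (hf t ht)).continuousWithinAt
  · intro x hx
    rw [interior_Icc] at hx
    exact (Eng_hasDerivWithinAt hε ((hf x (Ioo_subset_Icc_self hx)).mono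
      Ioo_subset_Icc_self)).mono (by rw [interior_Icc])
  · intro x _
    nlinarith [sq_nonneg (f x).2]

lemma eng_mono_exp (hε : 0 < ε)
    (hf : ∀ t ∈ Icc a b, HasDerivWithinAt f (Fv ε (f t)) (Icc a b) t) :
    MonotoneOn (fun t => Eng ε (f t) * Real.exp (2 * t)) (Icc a b) := by
  apply monotoneOn_of_hasDerivWithinAt_nonneg (convex_Icc a b)
    (f' := fun t => -((f t).2 ^ 2) * Real.exp (2 * t) + Eng ε (f t) * (Real.exp (2 * t) * 2))
  · intro t ht
    exact ((Eng_hasDerivWithinAt hε (hf t ht)).continuousWithinAt).mul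
      (Real.continuous_exp.comp (continuous_const.mul continuous_id)).continuousWithinAt
  · intro x hx
    rw [interior_Icc] at hx
    have hE : HasDerivWithinAt (fun u => Eng ε (f u)) (-((f x).2 ^ 2)) (Ioo a b) x :=
      (Eng_hasDerivWithinAt hε (hf x (Ioo_subset_Icc_self hx))).mono Ioo_subset_Icc_self
    have hexp : HasDerivWithinAt (fun u : ℝ => Real.exp (2 * u)) (Real.exp (2 * x) * 2) (Ioo a b) x := by
      have := ((hasDerivAt_id x).const_mul 2).exp
      simpa using this.hasDerivWithinAt
    have := hE.mul hexp
    rw [interior_Icc]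
    exact this
  · intro x hx
    rw [interior_Icc] at hx
    have h1 := Vf_nonneg hε (f x).1
    have h2 := Real.exp_pos (2 * x)
    rw [Eng]
    nlinarith

lemma eng_bound (hε : 0 < ε) {t₀ t : ℝ}
    (hf : ∀ t ∈ Icc a b, HasDerivWithinAt f (Fv ε (f t)) (Icc a b) t)
    (ht₀ : t₀ ∈ Icc a b) (ht : t ∈ Icc a b) :
    Eng ε (f t) ≤ Eng ε (f t₀) * Real.exp (2 * (b - a)) := by
  have hE0 : 0 ≤ Eng ε (f t₀) := Eng_nonneg hε _
  rcases le_total t t₀ with h | h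
  · have hm := eng_mono_exp hε hf ht ht₀ h
    have hexp : Real.exp (2 * t₀) ≤ Real.exp (2 * t) * Real.exp (2 * (b - a)) := by
      rw [← Real.exp_add]
      apply Real.exp_le_exp.mpr
      have := ht.1; have := ht₀.2
      linarith
    have h3 : Eng ε (f t) * Real.exp (2 * t) ≤
        (Eng ε (f t₀) * Real.exp (2 * (b - a))) * Real.exp (2 * t) := by
      calc Eng ε (f t) * Real.exp (2 * t) ≤ Eng ε (f t₀) * Real.exp (2 * t₀) := hm
        _ ≤ Eng ε (f t₀) * (Real.exp (2 * t) * Real.exp (2 * (b - a))) := by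
            apply mul_le_mul_of_nonneg_left hexp hE0
        _ = (Eng ε (f t₀) * Real.exp (2 * (b - a))) * Real.exp (2 * t) := by ring
    exact le_of_mul_le_mul_right h3 (Real.exp_pos _)
  · have hm := eng_anti hε hf ht₀ ht h
    have : (1:ℝ) ≤ Real.exp (2 * (b - a)) := by
      apply Real.one_le_exp
      have := ht₀.1; have := ht.2
      linarith
    nlinarith [Eng_nonneg hε (f t)]

end energy


lemma hasDerivWithinAt_singleton'' {f : ℝ → ℝ × ℝ} {v : ℝ × ℝ} {x : ℝ} :
    HasDerivWithinAt f v {x} x := by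
  rw [HasDerivWithinAt, nhdsWithin_singleton, hasDerivAtFilter_iff_isLittleO]
  simp [Asymptotics.isLittleO_pure]

/-- uniform time step -/
def dstep (ε B : ℝ) : ℝ := (B + 1 + (ε ^ 3)⁻¹)⁻¹

lemma dstep_pos {ε B : ℝ} (hε : 0 < ε) (hB : 0 ≤ B) : 0 < dstep ε B := by
  rw [dstep]; positivity

lemma picard_step {ε B : ℝ} (hε : 0 < ε) (hB : 0 ≤ B) (s₀ : ℝ) (p₀ : ℝ × ℝ)
    (hp₀ : ‖p₀‖ ≤ B) :
    ∃ f : ℝ → ℝ × ℝ, f s₀ = p₀ ∧ ∀ t ∈ Icc (s₀ - dstep ε B) (s₀ + dstep ε B),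
      HasDerivWithinAt f (Fv ε (f t)) (Icc (s₀ - dstep ε B) (s₀ + dstep ε B)) t := by
  obtain ⟨K, hK⟩ := Fv_lipschitz hε
  have hδ := dstep_pos hε hB
  have hC : (0:ℝ) < B + 1 + (ε ^ 3)⁻¹ := by positivity
  have hpl : IsPicardLindelof (fun _ : ℝ => Fv ε) (tmin := s₀ - dstep ε B)
      (tmax := s₀ + dstep ε B) ⟨s₀, by constructor <;> linarith⟩
      p₀ 1 0 (Real.toNNReal (B + 1 + (ε ^ 3)⁻¹)) K := by
    constructor
    · exact fun _ _ => hK.lipschitzOnWith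
    · exact fun _ _ => continuousOn_const
    · intro t _ x hx
      rw [NNReal.coe_one] at hx
      rw [Real.coe_toNNReal _ hC.le]
      have hx' : ‖x‖ ≤ B + 1 := by
        calc ‖x‖ ≤ ‖p₀‖ + 1 := norm_le_norm_add_const_of_dist_le (Metric.mem_closedBall.mp hx)
          _ ≤ B + 1 := by linarith
      calc ‖Fv ε x‖ ≤ ‖x‖ + (ε ^ 3)⁻¹ := Fv_norm_le hε x
        _ ≤ B + 1 + (ε ^ 3)⁻¹ := by linarith
    · rw [Real.coe_toNNReal _ hC.le, NNReal.coe_one, NNReal.coe_zero, sub_zero]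
      show (B + 1 + (ε ^ 3)⁻¹) * max (s₀ + dstep ε B - s₀) (s₀ - (s₀ - dstep ε B)) ≤ 1
      rw [show s₀ + dstep ε B - s₀ = dstep ε B by ring,
        show s₀ - (s₀ - dstep ε B) = dstep ε B by ring, max_self, dstep,
        mul_inv_cancel₀ (ne_of_gt hC)]
  exact hpl.exists_eq_forall_mem_Icc_hasDerivWithinAt₀

section glue

variable {ε l r δ' : ℝ} {f g : ℝ → ℝ × ℝ}

lemma glue_right (hl : l ≤ r) (hδ : 0 < δ')
    (hf : ∀ t ∈ Icc l r, HasDerivWithinAt f (Fv ε (f t)) (Icc l r) t)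
    (hg : ∀ t ∈ Icc (r - δ') (r + δ'),
      HasDerivWithinAt g (Fv ε (g t)) (Icc (r - δ') (r + δ')) t)
    (hgf : g r = f r) :
    ∃ F, (∀ t ∈ Icc l r, F t = f t) ∧
      ∀ t ∈ Icc l (r + δ'), HasDerivWithinAt F (Fv ε (F t)) (Icc l (r + δ')) t := by
  classical
  refine ⟨fun t => if t ≤ r then f t else g t, fun t ht => if_pos ht.2, ?_⟩
  set F := fun t => if t ≤ r then f t else g t with hF
  have hFf : ∀ t, t ≤ r → F t = f t := fun t ht => if_pos ht
  have hFg : ∀ t, r ≤ t → F t = g t := by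
    intro t ht
    rcases eq_or_lt_of_le ht with h | h
    · rw [← h, hF]; simp [hgf]
    · exact if_neg (not_le.mpr h)
  intro t ht
  rcases lt_trichotomy t r with h | h | h
  · apply (hasDerivWithinAt_inter (Iio_mem_nhds h)).mp
    have hsub : Icc l (r + δ') ∩ Iio r ⊆ Icc l r :=
      fun u hu => ⟨hu.1.1, le_of_lt (mem_Iio.mp hu.2)⟩
    have h3 := ((hf t ⟨ht.1, h.le⟩).mono hsub).congr
      (fun u hu => hFf u (le_of_lt (mem_Iio.mp hu.2))) (hFf t h.le)
    rwa [hFf t h.le]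
  · subst h
    have h1 : HasDerivWithinAt F (Fv ε (F t)) (Icc l (t + δ') ∩ Iic t) t := by
      have hsub : Icc l (t + δ') ∩ Iic t ⊆ Icc l t := fun u hu => ⟨hu.1.1, mem_Iic.mp hu.2⟩
      have h3 := ((hf t ⟨ht.1, le_refl t⟩).mono hsub).congr
        (fun u hu => hFf u (mem_Iic.mp hu.2)) (hFf t le_rfl)
      rwa [hFf t le_rfl]
    have h2 : HasDerivWithinAt F (Fv ε (F t)) (Icc l (t + δ') ∩ Ici t) t := by
      have hsub : Icc l (t + δ') ∩ Ici t ⊆ Icc (t - δ') (t + δ') := fun u hu =>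
        ⟨by have := mem_Ici.mp hu.2; linarith, hu.1.2⟩
      have hmem : t ∈ Icc (t - δ') (t + δ') := by constructor <;> linarith
      have h3 := ((hg t hmem).mono hsub).congr
        (fun u hu => hFg u (mem_Ici.mp hu.2)) (hFg t le_rfl)
      rw [hFf t le_rfl, ← hgf]
      exact h3
    have h4 := h1.union h2
    rwa [← Set.inter_union_distrib_left, Set.Iic_union_Ici, Set.inter_univ] at h4
  · apply (hasDerivWithinAt_inter (Ioi_mem_nhds h)).mp
    have hsub : Icc l (r + δ') ∩ Ioi r ⊆ Icc (r - δ') (r + δ') := fun u hu =>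
      ⟨by have := le_of_lt (mem_Ioi.mp hu.2); linarith, hu.1.2⟩
    have hmem : t ∈ Icc (r - δ') (r + δ') := ⟨by linarith, ht.2⟩
    have h3 := ((hg t hmem).mono hsub).congr
      (fun u hu => hFg u (le_of_lt (mem_Ioi.mp hu.2))) (hFg t h.le)
    rwa [hFg t h.le]

lemma glue_left (hl : l ≤ r) (hδ : 0 < δ')
    (hf : ∀ t ∈ Icc l r, HasDerivWithinAt f (Fv ε (f t)) (Icc l r) t)
    (hg : ∀ t ∈ Icc (l - δ') (l + δ'),
      HasDerivWithinAt g (Fv ε (g t)) (Icc (l - δ') (l + δ')) t)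
    (hgf : g l = f l) :
    ∃ F, (∀ t ∈ Icc l r, F t = f t) ∧
      ∀ t ∈ Icc (l - δ') r, HasDerivWithinAt F (Fv ε (F t)) (Icc (l - δ') r) t := by
  classical
  refine ⟨fun t => if l ≤ t then f t else g t, fun t ht => if_pos ht.1, ?_⟩
  set F := fun t => if l ≤ t then f t else g t with hF
  have hFf : ∀ t, l ≤ t → F t = f t := fun t ht => if_pos ht
  have hFg : ∀ t, t ≤ l → F t = g t := by
    intro t ht
    rcases eq_or_lt_of_le ht with h | h
    · rw [h, hF]; simp [hgf]
    · exact if_neg (not_le.mpr h)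
  intro t ht
  rcases lt_trichotomy t l with h | h | h
  · apply (hasDerivWithinAt_inter (Iio_mem_nhds h)).mp
    have hsub : Icc (l - δ') r ∩ Iio l ⊆ Icc (l - δ') (l + δ') := fun u hu =>
      ⟨hu.1.1, by have := le_of_lt (mem_Iio.mp hu.2); linarith⟩
    have hmem : t ∈ Icc (l - δ') (l + δ') := ⟨ht.1, by linarith⟩
    have h3 := ((hg t hmem).mono hsub).congr
      (fun u hu => hFg u (le_of_lt (mem_Iio.mp hu.2))) (hFg t h.le)
    rwa [hFg t h.le]
  · subst h
    have h1 : HasDerivWithinAt F (Fv ε (F t)) (Icc (t - δ') r ∩ Iic t) t := by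
      have hsub : Icc (t - δ') r ∩ Iic t ⊆ Icc (t - δ') (t + δ') := fun u hu =>
        ⟨hu.1.1, by have := mem_Iic.mp hu.2; linarith⟩
      have hmem : t ∈ Icc (t - δ') (t + δ') := by constructor <;> linarith
      have h3 := ((hg t hmem).mono hsub).congr
        (fun u hu => hFg u (mem_Iic.mp hu.2)) (hFg t le_rfl)
      rw [hFf t le_rfl, ← hgf]
      exact h3
    have h2 : HasDerivWithinAt F (Fv ε (F t)) (Icc (t - δ') r ∩ Ici t) t := by
      have hsub : Icc (t - δ') r ∩ Ici t ⊆ Icc t r := fun u hu =>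
        ⟨mem_Ici.mp hu.2, hu.1.2⟩
      have h3 := ((hf t ⟨le_refl t, hl⟩).mono hsub).congr
        (fun u hu => hFf u (mem_Ici.mp hu.2)) (hFf t le_rfl)
      rwa [hFf t le_rfl]
    have h4 := h1.union h2
    rwa [← Set.inter_union_distrib_left, Set.Iic_union_Ici, Set.inter_univ] at h4
  · apply (hasDerivWithinAt_inter (Ioi_mem_nhds h)).mp
    have hsub : Icc (l - δ') r ∩ Ioi l ⊆ Icc l r := fun u hu =>
      ⟨le_of_lt (mem_Ioi.mp hu.2), hu.1.2⟩
    have h3 := ((hf t ⟨h.le, ht.2⟩).mono hsub).congr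
      (fun u hu => hFf u (le_of_lt (mem_Ioi.mp hu.2))) (hFf t h.le)
    rwa [hFf t h.le]

end glue


lemma exists_sol_trunc {ε B : ℝ} (hε : 0 < ε) (hB : 1 ≤ B) (t₀ : ℝ) (p₀ : ℝ × ℝ)
    (N : ℕ)
    (hap : ∀ a b : ℝ, a ≤ t₀ → t₀ ≤ b → b - a ≤ 2 * N * dstep ε B →
      ∀ f : ℝ → ℝ × ℝ, f t₀ = p₀ →
      (∀ t ∈ Icc a b, HasDerivWithinAt f (Fv ε (f t)) (Icc a b) t) →
      ∀ t ∈ Icc a b, ‖f t‖ ≤ B) :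
    ∀ n : ℕ, n ≤ N → ∃ f : ℝ → ℝ × ℝ, f t₀ = p₀ ∧
      ∀ t ∈ Icc (t₀ - n * dstep ε B) (t₀ + n * dstep ε B),
        HasDerivWithinAt f (Fv ε (f t)) (Icc (t₀ - n * dstep ε B) (t₀ + n * dstep ε B)) t := by
  have hδ : 0 < dstep ε B := dstep_pos hε (by linarith)
  set δ := dstep ε B with hδdef
  intro n
  induction n with
  | zero =>
    intro _
    refine ⟨fun _ => p₀, rfl, ?_⟩
    intro t ht
    have he : t₀ - (0:ℕ) * δ = t₀ := by push_cast; ring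
    have he' : t₀ + (0:ℕ) * δ = t₀ := by push_cast; ring
    rw [he, he'] at ht ⊢
    rw [Icc_self] at ht ⊢
    rw [mem_singleton_iff] at ht
    subst ht
    exact hasDerivWithinAt_singleton''
  | succ n ih =>
    intro hn
    obtain ⟨f, hf0, hf⟩ := ih (by omega)
    have hnN : (n:ℝ) + 1 ≤ N := by exact_mod_cast hn
    set l := t₀ - n * δ with hl
    set r := t₀ + n * δ with hr
    have hnδ : 0 ≤ (n:ℝ) * δ := by positivity
    have hlr : l ≤ r := by rw [hl, hr]; linarith
    have ht₀m : t₀ ∈ Icc l r := ⟨by rw [hl]; linarith, by rw [hr]; linarith⟩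
    have hlen1 : r - l ≤ 2 * N * δ := by
      rw [hl, hr]; ring_nf; nlinarith [hδ]
    have hfr : ‖f r‖ ≤ B :=
      hap l r ht₀m.1 ht₀m.2 hlen1 f hf0 hf r ⟨hlr, le_rfl⟩
    obtain ⟨g, hg0, hg⟩ := picard_step hε (by linarith) r (f r) hfr
    obtain ⟨f2, hf2eq, hf2⟩ := glue_right hlr hδ hf hg hg0
    have hf20 : f2 t₀ = p₀ := by rw [hf2eq t₀ ht₀m, hf0]
    have hlen2 : (r + δ) - l ≤ 2 * N * δ := by
      rw [hl, hr]; ring_nf; nlinarith [hδ]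
    have hfl : ‖f2 l‖ ≤ B :=
      hap l (r + δ) ht₀m.1 (by linarith [ht₀m.2]) hlen2 f2 hf20 hf2 l ⟨le_rfl, by linarith⟩
    obtain ⟨g2, hg20, hg2l⟩ := picard_step hε (by linarith) l (f2 l) hfl
    obtain ⟨f3, hf3eq, hf3⟩ := glue_left (by linarith : l ≤ r + δ) hδ hf2 hg2l hg20
    have ht₀m2 : t₀ ∈ Icc l (r + δ) := ⟨ht₀m.1, by linarith [ht₀m.2]⟩
    refine ⟨f3, by rw [hf3eq t₀ ht₀m2, hf20], ?_⟩
    have e1 : t₀ - ((n:ℕ)+1 : ℕ) * δ = l - δ := by rw [hl]; push_cast; ring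
    have e2 : t₀ + ((n:ℕ)+1 : ℕ) * δ = r + δ := by rw [hr]; push_cast; ring
    rw [e1, e2]
    exact hf3

/-- the true vector field -/
def Ft (p : ℝ × ℝ) : ℝ × ℝ := (p.2, (p.1 ^ 3)⁻¹ - p.2)

lemma Fv_eq_Ft {ε : ℝ} {p : ℝ × ℝ} (h : ε ≤ p.1) : Fv ε p = Ft p := by
  rw [Fv, Ft, gcut_eq h]

lemma apriori {ε B CE : ℝ} (hε : 0 < ε) {t₀ a b : ℝ} {p₀ : ℝ × ℝ}
    (ha : a ≤ t₀) (hb : t₀ ≤ b)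
    (hE : Eng ε p₀ * Real.exp (2 * (b - a)) ≤ CE)
    (hεCE : CE + 1 ≤ (2 * ε ^ 2)⁻¹)
    (hB : |p₀.1| + Real.sqrt (2 * CE) * (b - a) + Real.sqrt (2 * CE) ≤ B)
    {f : ℝ → ℝ × ℝ} (hf0 : f t₀ = p₀)
    (hf : ∀ t ∈ Icc a b, HasDerivWithinAt f (Fv ε (f t)) (Icc a b) t) :
    ∀ t ∈ Icc a b, ε < (f t).1 ∧ ‖f t‖ ≤ B := by
  have ht₀ : t₀ ∈ Icc a b := ⟨ha, hb⟩
  have hCE : ∀ t ∈ Icc a b, Eng ε (f t) ≤ CE := by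
    intro t ht
    refine (eng_bound hε hf ht₀ ht).trans ?_
    rw [hf0]
    exact hE
  have hCE0 : 0 ≤ CE := le_trans (Eng_nonneg hε (f t₀)) (hCE t₀ ht₀)
  have hy : ∀ t ∈ Icc a b, |(f t).2| ≤ Real.sqrt (2 * CE) := by
    intro t ht
    rw [← Real.sqrt_sq_eq_abs]
    apply Real.sqrt_le_sqrt
    have h1 := hCE t ht
    have h2 := Vf_nonneg hε (f t).1
    rw [Eng] at h1
    nlinarith
  have hxd : ∀ t ∈ Icc a b, |(f t).1 - p₀.1| ≤ Real.sqrt (2 * CE) * (b - a) := by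
    intro t ht
    have hd : ∀ u ∈ Icc a b, HasDerivWithinAt (fun w => (f w).1) ((f u).2) (Icc a b) u :=
      fun u hu => comp_fst_hasDerivWithinAt (hf u hu)
    have hbd : ∀ u ∈ Icc a b, ‖(f u).2‖ ≤ Real.sqrt (2 * CE) := by
      intro u hu; rw [Real.norm_eq_abs]; exact hy u hu
    have h1 := (convex_Icc a b).norm_image_sub_le_of_norm_hasDerivWithin_le hd hbd ht₀ ht
    rw [hf0, Real.norm_eq_abs, Real.norm_eq_abs] at h1
    have h2 : |t - t₀| ≤ b - a := by
      rw [abs_sub_le_iff]; constructor <;> [linarith [ht.2]; linarith [ht.1]]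
    have h3 : Real.sqrt (2 * CE) * |t - t₀| ≤ Real.sqrt (2 * CE) * (b - a) :=
      mul_le_mul_of_nonneg_left h2 (Real.sqrt_nonneg _)
    linarith
  intro t ht
  constructor
  · by_contra hle
    push_neg at hle
    have h1 := Vf_ge hε hle
    have h2 := hCE t ht
    have h3 : Vf ε (f t).1 ≤ Eng ε (f t) := by
      rw [Eng]; nlinarith [sq_nonneg (f t).2]
    linarith
  · rw [Prod.norm_def]
    apply max_le
    · rw [Real.norm_eq_abs]
      have h1 := hxd t ht
      have h2 := abs_sub_abs_le_abs_sub (f t).1 p₀.1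
      linarith [Real.sqrt_nonneg (2*CE)]
    · rw [Real.norm_eq_abs]
      have h1 := hy t ht
      have h3 : 0 ≤ Real.sqrt (2 * CE) * (b - a) := by
        apply mul_nonneg (Real.sqrt_nonneg _); linarith
      linarith [abs_nonneg p₀.1]


lemma exists_sol_T (t₀ h₀ h₁ T : ℝ) (hh₀ : 0 < h₀) (hT : 0 < T) :
    ∃ f : ℝ → ℝ × ℝ, f t₀ = (h₀, h₁) ∧
      ∀ t ∈ Ioo (t₀ - T) (t₀ + T), HasDerivAt f (Ft (f t)) t ∧ 0 < (f t).1 := by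
  set E₀ : ℝ := h₁ ^ 2 / 2 + (2 * h₀ ^ 2)⁻¹ with hE₀
  have hE₀0 : 0 ≤ E₀ := by rw [hE₀]; positivity
  set CE : ℝ := (E₀ + 1) * Real.exp (4 * (T + 1)) with hCEdef
  have hexp1 : (1:ℝ) ≤ Real.exp (4 * (T + 1)) := Real.one_le_exp (by linarith)
  have hCE1 : 1 ≤ CE := by rw [hCEdef]; nlinarith
  have hCE0 : (0:ℝ) ≤ CE := by linarith
  have hsq : 0 < Real.sqrt (2 * CE + 2) := Real.sqrt_pos.mpr (by linarith)
  set ε : ℝ := min h₀ (Real.sqrt (2 * CE + 2))⁻¹ with hεdef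
  have hε : 0 < ε := lt_min hh₀ (by positivity)
  have hεh₀ : ε ≤ h₀ := min_le_left _ _
  have hεCE : CE + 1 ≤ (2 * ε ^ 2)⁻¹ := by
    have h1 : ε ≤ (Real.sqrt (2 * CE + 2))⁻¹ := min_le_right _ _
    have h2 : ε ^ 2 ≤ ((Real.sqrt (2 * CE + 2))⁻¹) ^ 2 := pow_le_pow_left₀ hε.le h1 2
    have h3 : ((Real.sqrt (2 * CE + 2))⁻¹) ^ 2 = (2 * CE + 2)⁻¹ := by
      rw [inv_pow, Real.sq_sqrt (by linarith : (0:ℝ) ≤ 2 * CE + 2)]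
    rw [h3] at h2
    have h4 : 2 * ε ^ 2 ≤ (CE + 1)⁻¹ := by
      have h5 : (CE + 1)⁻¹ = 2 * (2 * CE + 2)⁻¹ := by
        rw [show 2 * CE + 2 = 2 * (CE + 1) by ring, mul_inv]
        field_simp
      rw [h5]; linarith
    calc CE + 1 = ((CE + 1)⁻¹)⁻¹ := by rw [inv_inv]
      _ ≤ (2 * ε ^ 2)⁻¹ := inv_anti₀ (by positivity) h4
  set B : ℝ := |h₀| + Real.sqrt (2 * CE) * (2 * (T + 1)) + Real.sqrt (2 * CE) + 1 with hBdef
  have hsq2 : (0:ℝ) ≤ Real.sqrt (2 * CE) := Real.sqrt_nonneg _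
  have hB1 : 1 ≤ B := by
    rw [hBdef]
    have := abs_nonneg h₀
    nlinarith
  have hδ : 0 < dstep ε B := dstep_pos hε (by linarith)
  set N : ℕ := ⌈T / dstep ε B⌉₊ with hN
  have hTN : T ≤ (N:ℝ) * dstep ε B := by
    have h1 := Nat.le_ceil (T / dstep ε B)
    calc T = T / dstep ε B * dstep ε B := by field_simp
      _ ≤ (N:ℝ) * dstep ε B := mul_le_mul_of_nonneg_right h1 hδ.le
  have hδ1 : dstep ε B ≤ 1 := by
    rw [dstep]
    have hεi : (0:ℝ) ≤ (ε ^ 3)⁻¹ := by positivity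
    apply inv_le_one_of_one_le₀
    linarith
  have hNδ : (N:ℝ) * dstep ε B ≤ T + 1 := by
    have h1 : (N:ℝ) < T / dstep ε B + 1 := Nat.ceil_lt_add_one (by positivity)
    have h2 : (N:ℝ) * dstep ε B < (T / dstep ε B + 1) * dstep ε B :=
      mul_lt_mul_of_pos_right h1 hδ
    rw [add_mul, div_mul_cancel₀ _ hδ.ne'] at h2
    linarith
  have hEng : Eng ε (h₀, h₁) = E₀ := by
    rw [Eng, hE₀]
    simp only
    rw [Vf_eq hε hεh₀]
  have hap : ∀ a b : ℝ, a ≤ t₀ → t₀ ≤ b → b - a ≤ 2 * N * dstep ε B →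
      ∀ f : ℝ → ℝ × ℝ, f t₀ = (h₀, h₁) →
      (∀ t ∈ Icc a b, HasDerivWithinAt f (Fv ε (f t)) (Icc a b) t) →
      ∀ t ∈ Icc a b, ε < (f t).1 ∧ ‖f t‖ ≤ B := by
    intro a b ha hb hlen f hf0 hf
    have hlen2 : b - a ≤ 2 * (T + 1) := by
      have : 2 * ((N:ℝ) * dstep ε B) ≤ 2 * (T + 1) := by linarith
      calc b - a ≤ 2 * N * dstep ε B := hlen
        _ = 2 * ((N:ℝ) * dstep ε B) := by ring
        _ ≤ 2 * (T + 1) := this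
    apply apriori hε ha hb ?_ hεCE ?_ hf0 hf
    · rw [hEng]
      have h2 : Real.exp (2 * (b - a)) ≤ Real.exp (4 * (T + 1)) :=
        Real.exp_le_exp.mpr (by linarith)
      calc E₀ * Real.exp (2 * (b - a)) ≤ E₀ * Real.exp (4 * (T + 1)) :=
            mul_le_mul_of_nonneg_left h2 hE₀0
        _ ≤ (E₀ + 1) * Real.exp (4 * (T + 1)) := by nlinarith [Real.exp_pos (4 * (T + 1))]
        _ = CE := by rw [hCEdef]
    · have h2 : Real.sqrt (2 * CE) * (b - a) ≤ Real.sqrt (2 * CE) * (2 * (T + 1)) :=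
        mul_le_mul_of_nonneg_left hlen2 hsq2
      rw [hBdef]
      simp only
      linarith
  obtain ⟨f, hf0, hf⟩ := exists_sol_trunc hε hB1 t₀ (h₀, h₁) N
    (fun a b ha hb hlen g hg0 hg t ht => (hap a b ha hb hlen g hg0 hg t ht).2) N le_rfl
  refine ⟨f, hf0, ?_⟩
  intro t ht
  have hNδ0 : (0:ℝ) ≤ (N:ℝ) * dstep ε B := by positivity
  have ht' : t ∈ Ioo (t₀ - N * dstep ε B) (t₀ + N * dstep ε B) := by
    obtain ⟨h1, h2⟩ := ht
    constructor <;> [linarith; linarith]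
  have htIcc : t ∈ Icc (t₀ - N * dstep ε B) (t₀ + N * dstep ε B) := Ioo_subset_Icc_self ht'
  have hprop := hap (t₀ - N * dstep ε B) (t₀ + N * dstep ε B) (by linarith)
    (by linarith) (le_of_eq (by ring)) f hf0 hf t htIcc
  have hpos : 0 < (f t).1 := lt_trans hε hprop.1
  have hda : HasDerivAt f (Fv ε (f t)) t := (hf t htIcc).hasDerivAt (Icc_mem_nhds ht'.1 ht'.2)
  rw [Fv_eq_Ft hprop.1.le] at hda
  exact ⟨hda, hpos⟩


lemma comp_fst_hasDerivAt {f : ℝ → ℝ × ℝ} {v : ℝ × ℝ} {t : ℝ}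
    (hf : HasDerivAt f v t) : HasDerivAt (fun u => (f u).1) v.1 t :=
  (ContinuousLinearMap.fst ℝ ℝ ℝ).hasFDerivAt.comp_hasDerivAt t hf

lemma comp_snd_hasDerivAt {f : ℝ → ℝ × ℝ} {v : ℝ × ℝ} {t : ℝ}
    (hf : HasDerivAt f v t) : HasDerivAt (fun u => (f u).2) v.2 t :=
  (ContinuousLinearMap.snd ℝ ℝ ℝ).hasFDerivAt.comp_hasDerivAt t hf

lemma Ft_lipschitzOn {ε : ℝ} (hε : 0 < ε) :
    ∃ K : NNReal, LipschitzOnWith K Ft {p : ℝ × ℝ | ε ≤ p.1} := by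
  obtain ⟨K, hK⟩ := Fv_lipschitz hε
  refine ⟨K, fun p hp q hq => ?_⟩
  rw [← Fv_eq_Ft hp, ← Fv_eq_Ft hq]
  exact hK p q

lemma unique_on {a b t₀ : ℝ} (ht₀ : t₀ ∈ Ioo a b) {f g : ℝ → ℝ × ℝ}
    (hf : ∀ t ∈ Ioo a b, HasDerivAt f (Ft (f t)) t ∧ 0 < (f t).1)
    (hg : ∀ t ∈ Ioo a b, HasDerivAt g (Ft (g t)) t ∧ 0 < (g t).1)
    (heq : f t₀ = g t₀) : EqOn f g (Ioo a b) := by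
  intro τ hτ
  set a' : ℝ := (a + min τ t₀) / 2 with ha'
  set b' : ℝ := (max τ t₀ + b) / 2 with hb'
  have hat : a < min τ t₀ := lt_min hτ.1 ht₀.1
  have htb : max τ t₀ < b := max_lt hτ.2 ht₀.2
  have hmin1 : min τ t₀ ≤ τ := min_le_left _ _
  have hmin2 : min τ t₀ ≤ t₀ := min_le_right _ _
  have hmax1 : τ ≤ max τ t₀ := le_max_left _ _
  have hmax2 : t₀ ≤ max τ t₀ := le_max_right _ _
  have hIcc : Icc a' b' ⊆ Ioo a b := by
    intro u hu
    rw [ha'] at hu; rw [hb'] at hu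
    constructor
    · have := hu.1; linarith
    · have := hu.2; linarith
  have ht₀' : t₀ ∈ Ioo a' b' := by
    rw [ha', hb']; constructor <;> [linarith; linarith]
  have hτ' : τ ∈ Icc a' b' := by
    rw [ha', hb']; constructor <;> [linarith; linarith]
  have hfc : ContinuousOn (fun t => (f t).1) (Icc a' b') :=
    fun t ht => ((comp_fst_hasDerivAt (hf t (hIcc ht)).1).continuousAt).continuousWithinAt
  have hgc : ContinuousOn (fun t => (g t).1) (Icc a' b') :=
    fun t ht => ((comp_fst_hasDerivAt (hg t (hIcc ht)).1).continuousAt).continuousWithinAt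
  have hne : (Icc a' b').Nonempty := ⟨t₀, Ioo_subset_Icc_self ht₀'⟩
  obtain ⟨cf, hcf, hcfm⟩ := isCompact_Icc.exists_isMinOn hne hfc
  obtain ⟨cg, hcg, hcgm⟩ := isCompact_Icc.exists_isMinOn hne hgc
  set ε₀ : ℝ := min ((f cf).1) ((g cg).1) with hε₀def
  have hε₀ : 0 < ε₀ := lt_min (hf cf (hIcc hcf)).2 (hg cg (hIcc hcg)).2
  obtain ⟨K, hK⟩ := Ft_lipschitzOn hε₀
  have key := ODE_solution_unique_of_mem_Icc (v := fun _ : ℝ => Ft)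
    (s := fun _ => {p : ℝ × ℝ | ε₀ ≤ p.1}) (K := K) (fun _ _ => hK) ht₀'
    (fun t ht => ((hf t (hIcc ht)).1.continuousAt).continuousWithinAt)
    (fun t ht => (hf t (hIcc (Ioo_subset_Icc_self ht))).1)
    (fun t ht => by
      have h1 := isMinOn_iff.mp hcfm t (Ioo_subset_Icc_self ht)
      have h2 : ε₀ ≤ (f cf).1 := min_le_left _ _
      exact le_trans h2 h1)
    (fun t ht => ((hg t (hIcc ht)).1.continuousAt).continuousWithinAt)
    (fun t ht => (hg t (hIcc (Ioo_subset_Icc_self ht))).1)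
    (fun t ht => by
      have h1 := isMinOn_iff.mp hcgm t (Ioo_subset_Icc_self ht)
      have h2 : ε₀ ≤ (g cg).1 := min_le_right _ _
      exact le_trans h2 h1)
    heq
  exact key hτ'

lemma unique_global {t₀ : ℝ} {f g : ℝ → ℝ × ℝ}
    (hf : ∀ t, HasDerivAt f (Ft (f t)) t ∧ 0 < (f t).1)
    (hg : ∀ t, HasDerivAt g (Ft (g t)) t ∧ 0 < (g t).1)
    (heq : f t₀ = g t₀) : f = g := by
  funext t
  have h0 : (0:ℝ) ≤ |t - t₀| := abs_nonneg _
  have h1 : t ∈ Ioo (t₀ - (|t - t₀| + 1)) (t₀ + (|t - t₀| + 1)) := by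
    constructor
    · linarith [neg_abs_le (t - t₀)]
    · linarith [le_abs_self (t - t₀)]
  have ht₀ : t₀ ∈ Ioo (t₀ - (|t - t₀| + 1)) (t₀ + (|t - t₀| + 1)) := by
    constructor <;> linarith
  exact unique_on ht₀ (fun u _ => hf u) (fun u _ => hg u) heq h1

lemma exists_sol_global (t₀ h₀ h₁ : ℝ) (hh₀ : 0 < h₀) :
    ∃ f : ℝ → ℝ × ℝ, f t₀ = (h₀, h₁) ∧ ∀ t, HasDerivAt f (Ft (f t)) t ∧ 0 < (f t).1 := by
  have hex : ∀ n : ℕ, ∃ f : ℝ → ℝ × ℝ, f t₀ = (h₀, h₁) ∧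
      ∀ t ∈ Ioo (t₀ - ((n:ℝ) + 1)) (t₀ + ((n:ℝ) + 1)),
        HasDerivAt f (Ft (f t)) t ∧ 0 < (f t).1 :=
    fun n => exists_sol_T t₀ h₀ h₁ ((n:ℝ) + 1) hh₀ (by positivity)
  choose Fn hFn0 hFn using hex
  have hmono : ∀ m n : ℕ, m ≤ n → ∀ t ∈ Ioo (t₀ - ((m:ℝ) + 1)) (t₀ + ((m:ℝ) + 1)),
      Fn m t = Fn n t := by
    intro m n hmn t ht
    have hmn' : (m:ℝ) ≤ n := by exact_mod_cast hmn
    have hsub : Ioo (t₀ - ((m:ℝ) + 1)) (t₀ + ((m:ℝ) + 1)) ⊆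
        Ioo (t₀ - ((n:ℝ) + 1)) (t₀ + ((n:ℝ) + 1)) :=
      Ioo_subset_Ioo (by linarith) (by linarith)
    have ht₀m : t₀ ∈ Ioo (t₀ - ((m:ℝ) + 1)) (t₀ + ((m:ℝ) + 1)) := by
      constructor <;> [linarith [Nat.cast_nonneg (α := ℝ) m]; linarith [Nat.cast_nonneg (α := ℝ) m]]
    exact unique_on ht₀m (hFn m) (fun u hu => hFn n u (hsub hu))
      (by rw [hFn0 m, hFn0 n]) ht
  have hmem : ∀ t : ℝ, t ∈ Ioo (t₀ - ((⌈|t - t₀|⌉₊:ℝ) + 1)) (t₀ + ((⌈|t - t₀|⌉₊:ℝ) + 1)) := by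
    intro t
    have h1 : |t - t₀| ≤ (⌈|t - t₀|⌉₊:ℝ) := Nat.le_ceil _
    constructor
    · linarith [neg_abs_le (t - t₀)]
    · linarith [le_abs_self (t - t₀)]
  have hGF : ∀ (n : ℕ) (t : ℝ), t ∈ Ioo (t₀ - ((n:ℝ) + 1)) (t₀ + ((n:ℝ) + 1)) →
      Fn ⌈|t - t₀|⌉₊ t = Fn n t := by
    intro n t ht
    rcases le_total (⌈|t - t₀|⌉₊) n with h | h
    · exact hmono _ n h t (hmem t)
    · exact (hmono n _ h t ht).symm
  refine ⟨fun t => Fn ⌈|t - t₀|⌉₊ t, ?_, ?_⟩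
  · show Fn ⌈|t₀ - t₀|⌉₊ t₀ = (h₀, h₁)
    rw [hGF 0 t₀ (by constructor <;> [norm_num; norm_num]), hFn0 0]
  · intro t
    have hta := hmem t
    have heq2 : ∀ᶠ s in nhds t, Fn ⌈|s - t₀|⌉₊ s = Fn ⌈|t - t₀|⌉₊ s := by
      filter_upwards [isOpen_Ioo.mem_nhds hta] with s hs using hGF _ s hs
    constructor
    · have hd := (hFn _ t hta).1
      exact hd.congr_of_eventuallyEq heq2
    · exact (hFn _ t hta).2

end ODEhaux

/-- For any initial data `t₀ ∈ ℝ`, `h₀ > 0`, `h₁ ∈ ℝ`, there exists a unique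
solution `h : ℝ → ℝ`, defined and positive on all of `ℝ`, of the differential
equation `h³ (h'' + h') = 1` with `h t₀ = h₀` and `h' t₀ = h₁`. -/
theorem stmt_0 (t₀ h₀ h₁ : ℝ) (hh₀ : 0 < h₀) :
    ∃! h : ℝ → ℝ,
      (∀ t, 0 < h t) ∧
      (∀ t, DifferentiableAt ℝ h t) ∧
      (∀ t, DifferentiableAt ℝ (deriv h) t) ∧
      (∀ t, (h t) ^ 3 * (deriv (deriv h) t + deriv h t) = 1) ∧
      h t₀ = h₀ ∧ deriv h t₀ = h₁ := by
  obtain ⟨f, hf0, hf⟩ := exists_sol_global t₀ h₀ h₁ hh₀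
  have hdx : ∀ t, HasDerivAt (fun u => (f u).1) ((f t).2) t :=
    fun t => comp_fst_hasDerivAt (hf t).1
  have hderiv : deriv (fun u => (f u).1) = fun t => (f t).2 :=
    funext fun t => (hdx t).deriv
  have hdy : ∀ t, HasDerivAt (fun u => (f u).2) (((f t).1 ^ 3)⁻¹ - (f t).2) t :=
    fun t => comp_snd_hasDerivAt (hf t).1
  refine ⟨fun t => (f t).1, ⟨fun t => (hf t).2, fun t => (hdx t).differentiableAt, ?_, ?_, ?_, ?_⟩, ?_⟩
  · intro t
    rw [hderiv]
    exact (hdy t).differentiableAt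
  · intro t
    have h2 : deriv (deriv fun u => (f u).1) t = ((f t).1 ^ 3)⁻¹ - (f t).2 := by
      rw [hderiv]
      exact (hdy t).deriv
    rw [h2, hderiv]
    have hpos := (hf t).2
    rw [sub_add_cancel]
    exact mul_inv_cancel₀ (by positivity)
  · show (f t₀).1 = h₀
    rw [hf0]
  · rw [hderiv]
    show (f t₀).2 = h₁
    rw [hf0]
  · rintro k ⟨hkpos, hkd, hkd2, hkode, hk0, hk1⟩
    have hgkd : ∀ t, HasDerivAt (fun u => (k u, deriv k u)) (Ft (k t, deriv k t)) t ∧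
        (0:ℝ) < (k t, deriv k t).1 := by
      intro t
      refine ⟨?_, hkpos t⟩
      have hd : HasDerivAt (fun u => (k u, deriv k u)) (deriv k t, deriv (deriv k) t) t :=
        ((hkd t).hasDerivAt).prodMk ((hkd2 t).hasDerivAt)
      have he : Ft (k t, deriv k t) = (deriv k t, deriv (deriv k) t) := by
        rw [Ft, Prod.mk.injEq]
        refine ⟨rfl, ?_⟩
        have h3 := hkode t
        have h4 : (k t) ^ 3 ≠ 0 := pow_ne_zero _ (hkpos t).ne'
        rw [sub_eq_iff_eq_add, inv_eq_one_div, div_eq_iff h4]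
        linarith
      rw [he]
      exact hd
    have hgk0 : (fun u => (k u, deriv k u)) t₀ = f t₀ := by
      rw [hf0]
      simp only
      rw [hk0, hk1]
    have hglob := unique_global hgkd hf hgk0
    funext t
    have h5 : (k t, deriv k t) = f t := congrFun hglob t
    exact congrArg Prod.fst h5
end

section
/- Let (x(t), y(t)), t ∈ [t₀,∞), solve x' = y, y' = x⁻³ − y with x(t) > 0. Then there exists T ≥ t₀ such that for all t ≥ s ≥ T, √2·(t + c(s))^{1/4} ≤ x(t) ≤ y(s) + √2·(t + c(s))^{1/4}, where c(s) = x(s)⁴/4 − s. -/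
open Set Real Filter

lemma mono_aux {f f' : ℝ → ℝ} {a b : ℝ} (hab : a ≤ b)
    (hf : ∀ t ∈ Icc a b, HasDerivAt f (f' t) t)
    (h' : ∀ t ∈ Icc a b, 0 ≤ f' t) : f a ≤ f b := by
  have H := monotoneOn_of_deriv_nonneg (convex_Icc a b)
    (fun t ht => (hf t ht).continuousAt.continuousWithinAt)
    (fun t ht => by
      rw [interior_Icc] at ht
      exact (hf t (Ioo_subset_Icc_self ht)).differentiableAt.differentiableWithinAt)
    (fun t ht => by
      rw [interior_Icc] at ht
      rw [(hf t (Ioo_subset_Icc_self ht)).deriv]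
      exact h' t (Ioo_subset_Icc_self ht))
  exact H (left_mem_Icc.2 hab) (right_mem_Icc.2 hab) hab

lemma anti_aux {f f' : ℝ → ℝ} {a b : ℝ} (hab : a ≤ b)
    (hf : ∀ t ∈ Icc a b, HasDerivAt f (f' t) t)
    (h' : ∀ t ∈ Icc a b, f' t ≤ 0) : f b ≤ f a := by
  have := mono_aux (f := fun t => -f t) (f' := fun t => -f' t) hab
    (fun t ht => (hf t ht).neg) (fun t ht => neg_nonneg.2 (h' t ht))
  simp only [neg_le_neg_iff] at this
  exact this

lemma sqrt2_rpow (a : ℝ) (ha : 0 < a) :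
    Real.sqrt 2 * (a ^ 4 / 4) ^ ((1:ℝ)/4) = a := by
  have hs : Real.sqrt 2 ^ 4 = 4 := by
    rw [show (4:ℕ) = 2*2 from rfl, pow_mul, Real.sq_sqrt (by norm_num : (0:ℝ) ≤ 2)]
    norm_num
  have h4 : a ^ 4 / 4 = (a / Real.sqrt 2) ^ 4 := by
    rw [div_pow, hs]
  rw [h4, show ((1:ℝ)/4) = ((4:ℕ):ℝ)⁻¹ by norm_num,
    Real.pow_rpow_inv_natCast (by positivity) (by norm_num)]
  have h2 : Real.sqrt 2 ≠ 0 := by positivity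
  field_simp

lemma inv_cube_le {b u : ℝ} (hu : 0 < u) (hb : Real.sqrt 2 * u ^ ((1:ℝ)/4) ≤ b) :
    (b ^ 3)⁻¹ ≤ Real.sqrt 2 * ((1:ℝ)/4 * u ^ ((1:ℝ)/4 - 1)) := by
  have hv : 0 < u ^ ((1:ℝ)/4) := Real.rpow_pos_of_pos hu _
  have hs2 : Real.sqrt 2 * Real.sqrt 2 = 2 := Real.mul_self_sqrt (by norm_num)
  have hs0 : 0 < Real.sqrt 2 := Real.sqrt_pos.2 (by norm_num)
  have hb0 : 0 < Real.sqrt 2 * u ^ ((1:ℝ)/4) := mul_pos hs0 hv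
  have h1 : (Real.sqrt 2 * u ^ ((1:ℝ)/4)) ^ 3 ≤ b ^ 3 :=
    pow_le_pow_left₀ hb0.le hb 3
  have h2 : (b ^ 3)⁻¹ ≤ ((Real.sqrt 2 * u ^ ((1:ℝ)/4)) ^ 3)⁻¹ :=
    inv_anti₀ (by positivity) h1
  refine h2.trans_eq ?_
  have h3 : (u ^ ((1:ℝ)/4)) ^ 3 = u ^ ((3:ℝ)/4) := by
    rw [← Real.rpow_natCast (u ^ ((1:ℝ)/4)) 3, ← Real.rpow_mul hu.le]
    norm_num
  have h4 : u ^ ((1:ℝ)/4 - 1) = (u ^ ((3:ℝ)/4))⁻¹ := by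
    rw [show ((1:ℝ)/4 - 1) = -((3:ℝ)/4) by norm_num, Real.rpow_neg hu.le]
  have h5 : 0 < u ^ ((3:ℝ)/4) := Real.rpow_pos_of_pos hu _
  rw [mul_pow, h3, h4]
  rw [mul_inv]
  have h6 : (Real.sqrt 2 ^ 3)⁻¹ = Real.sqrt 2 / 4 := by
    rw [pow_succ, pow_two, hs2]
    refine inv_eq_of_mul_eq_one_right ?_
    calc (2 * Real.sqrt 2) * (Real.sqrt 2 / 4) = (Real.sqrt 2 * Real.sqrt 2) / 2 := by ring
      _ = 1 := by rw [hs2]; norm_num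
  rw [h6]
  ring

set_option maxHeartbeats 1000000 in
/-- If `(x(t), y(t))`, `t ∈ [t₀,∞)`, solves `x' = y`, `y' = x⁻³ − y` with `x > 0`,
then there is `T ≥ t₀` such that for all `t ≥ s ≥ T`,
`√2 (t + c(s))^{1/4} ≤ x(t) ≤ y(s) + √2 (t + c(s))^{1/4}` with `c(s) = x(s)⁴/4 − s`. -/
theorem stmt_2 (t₀ : ℝ) (x y : ℝ → ℝ)
    (hx_pos : ∀ t ∈ Ici t₀, 0 < x t)
    (hx : ∀ t ∈ Ici t₀, HasDerivAt x (y t) t)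
    (hy : ∀ t ∈ Ici t₀, HasDerivAt y ((x t ^ 3)⁻¹ - y t) t) :
    ∃ T ∈ Ici t₀, ∀ s t : ℝ, T ≤ s → s ≤ t →
      Real.sqrt 2 * (t + (x s ^ 4 / 4 - s)) ^ ((1 : ℝ) / 4) ≤ x t ∧
      x t ≤ y s + Real.sqrt 2 * (t + (x s ^ 4 / 4 - s)) ^ ((1 : ℝ) / 4) := by
  have hx3 : ∀ t ∈ Ici t₀, (0:ℝ) < x t ^ 3 := fun t ht => pow_pos (hx_pos t ht) 3
  -- derivative of W τ = exp τ * (x τ^3 * y τ - 1)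
  have hW : ∀ t ∈ Ici t₀, HasDerivAt (fun τ => Real.exp τ * (x τ ^ 3 * y τ - 1))
      (Real.exp t * (3 * x t ^ 2 * y t ^ 2)) t := by
    intro t ht
    have hp : HasDerivAt (fun τ => x τ ^ 3) (3 * x t ^ 2 * y t) t := by
      have hp0 := (hx t ht).pow 3
      have he : ((3:ℕ):ℝ) * x t ^ (3-1) * y t = 3 * x t ^ 2 * y t := by
        push_cast
        ring
      rw [he] at hp0
      exact hp0
    have h1 : HasDerivAt (fun τ => x τ ^ 3 * y τ - 1)
        ((3 * x t ^ 2 * y t) * y t + x t ^ 3 * ((x t ^ 3)⁻¹ - y t)) t :=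
      (hp.mul (hy t ht)).sub_const 1
    have h2 := (Real.hasDerivAt_exp t).mul h1
    refine h2.congr_deriv ?_
    have hne : x t ^ 3 ≠ 0 := (hx3 t ht).ne'
    rw [mul_sub (x t ^ 3), mul_inv_cancel₀ hne]
    ring
  have monoW : ∀ a b, t₀ ≤ a → a ≤ b →
      Real.exp a * (x a ^ 3 * y a - 1) ≤ Real.exp b * (x b ^ 3 * y b - 1) := by
    intro a b ha hab
    exact mono_aux hab (f' := fun t => Real.exp t * (3 * x t ^ 2 * y t ^ 2))
      (fun t htt => hW t (le_trans ha htt.1))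
      (fun t htt => by positivity)
  -- Y = exp * y
  have hY : ∀ t ∈ Ici t₀, HasDerivAt (fun τ => Real.exp τ * y τ)
      (Real.exp t * (x t ^ 3)⁻¹) t := by
    intro t ht
    have := (Real.hasDerivAt_exp t).mul (hy t ht)
    refine this.congr_deriv ?_
    ring
  have monoY : ∀ a b, t₀ ≤ a → a ≤ b → Real.exp a * y a ≤ Real.exp b * y b := by
    intro a b ha hab
    exact mono_aux hab (f' := fun t => Real.exp t * (x t ^ 3)⁻¹)
      (fun t htt => hY t (le_trans ha htt.1))
      (fun t htt => by
        have := hx3 t (le_trans ha htt.1)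
        positivity)
  -- Step A : y is eventually positive
  have stepA : ∃ t₁, t₀ ≤ t₁ ∧ 0 < y t₁ := by
    by_contra hcon
    push_neg at hcon
    have hxle : ∀ t, t₀ ≤ t → x t ≤ x t₀ := by
      intro t ht
      exact anti_aux ht (f' := y) (fun τ hτ => hx τ hτ.1) (fun τ hτ => hcon τ hτ.1)
    set M := x t₀ with hMdef
    have hM0 : 0 < M := hx_pos t₀ self_mem_Ici
    have key : ∀ t, t₀ ≤ t →
        Real.exp t₀ * y t₀ + (Real.exp t - Real.exp t₀) * (M ^ 3)⁻¹ ≤ Real.exp t * y t := by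
      intro t ht
      have hmm := mono_aux ht (f := fun τ => Real.exp τ * y τ - Real.exp τ * (M ^ 3)⁻¹)
        (f' := fun τ => Real.exp τ * (x τ ^ 3)⁻¹ - Real.exp τ * (M ^ 3)⁻¹)
        (fun τ hτ => (hY τ hτ.1).sub ((Real.hasDerivAt_exp τ).mul_const _))
        (fun τ hτ => by
          have h1 : 0 < x τ := hx_pos τ hτ.1
          have h2 : x τ ≤ M := hxle τ hτ.1
          have h3 : (M ^ 3)⁻¹ ≤ (x τ ^ 3)⁻¹ :=
            inv_anti₀ (pow_pos h1 3) (pow_le_pow_left₀ h1.le h2 3)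
          nlinarith [Real.exp_pos τ])
      nlinarith [hmm]
    have hM3 : (0:ℝ) < (M ^ 3)⁻¹ := by positivity
    have htend : Tendsto (fun t => Real.exp t * (M ^ 3)⁻¹) atTop atTop :=
      Real.tendsto_exp_atTop.atTop_mul_const hM3
    obtain ⟨t, ht⟩ := ((htend.eventually_gt_atTop
      (Real.exp t₀ * ((M ^ 3)⁻¹ - y t₀))).and (eventually_ge_atTop t₀)).exists
    obtain ⟨ht1, ht2⟩ := ht
    have hk := key t ht2
    have hyt : y t ≤ 0 := hcon t ht2
    nlinarith [Real.exp_pos t, mul_nonpos_of_nonneg_of_nonpos (Real.exp_pos t).le hyt]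
  obtain ⟨t₁, ht₁0, hyt₁⟩ := stepA
  have hypos1 : ∀ t, t₁ ≤ t → 0 < y t := by
    intro t ht
    have h1 := monoY t₁ t ht₁0 ht
    nlinarith [Real.exp_pos t, Real.exp_pos t₁, mul_pos (Real.exp_pos t₁) hyt₁]
  have hIci1 : ∀ t, t₁ ≤ t → t ∈ Ici t₀ := fun t ht => le_trans ht₁0 ht
  have hxmono1 : ∀ a b, t₁ ≤ a → a ≤ b → x a ≤ x b := by
    intro a b ha hab
    exact mono_aux hab (f' := y) (fun τ hτ => hx τ (hIci1 τ (le_trans ha hτ.1)))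
      (fun τ hτ => (hypos1 τ (le_trans ha hτ.1)).le)
  have hm : 0 < x t₁ := hx_pos t₁ ht₁0
  -- Step C : w is eventually nonnegative
  have stepC : ∃ T, t₁ ≤ T ∧ 0 ≤ x T ^ 3 * y T - 1 := by
    by_contra hcon
    push_neg at hcon
    set m := x t₁ with hmdef
    clear_value m
    have hm3 : (0:ℝ) < m ^ 3 := pow_pos hm 3
    have hxlin : ∀ t, t₁ ≤ t → x t ≤ m + (t - t₁) * (m ^ 3)⁻¹ := by
      intro t ht
      have haa := anti_aux ht (f := fun τ => x τ - (m + (τ - t₁) * (m ^ 3)⁻¹))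
        (f' := fun τ => y τ - (m ^ 3)⁻¹)
        (fun τ hτ => by
          have h2 : HasDerivAt (fun τ : ℝ => m + (τ - t₁) * (m ^ 3)⁻¹) ((m ^ 3)⁻¹) τ := by
            have := (((hasDerivAt_id τ).sub_const t₁).mul_const ((m ^ 3)⁻¹)).const_add m
            simpa using this
          exact (hx τ (hIci1 τ hτ.1)).sub h2)
        (fun τ hτ => by
          have h1 := hcon τ hτ.1
          have h2 : m ≤ x τ := hmdef ▸ hxmono1 t₁ τ le_rfl hτ.1
          have h3 : 0 < x τ := hx_pos τ (hIci1 τ hτ.1)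
          have h5 : 0 < y τ := hypos1 τ hτ.1
          have h6 : y τ * m ^ 3 ≤ y τ * x τ ^ 3 :=
            mul_le_mul_of_nonneg_left (pow_le_pow_left₀ hm.le h2 3) h5.le
          nlinarith [mul_inv_cancel₀ hm3.ne'])
      nlinarith [haa]
    have hwlb : ∀ t, t₁ ≤ t → -Real.exp t₁ ≤ Real.exp t * (x t ^ 3 * y t - 1) := by
      intro t ht
      have h1 := monoW t₁ t ht₁0 ht
      have h2 : -1 < x t₁ ^ 3 * y t₁ - 1 := by
        rw [← hmdef]
        nlinarith [mul_pos hm3 hyt₁]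
      nlinarith [Real.exp_pos t₁]
    set t₂ := t₁ + 1 with ht₂def
    clear_value t₂
    have hwhalf : ∀ t, t₂ ≤ t → (1:ℝ)/2 ≤ x t ^ 3 * y t := by
      intro t ht
      have h1 := hwlb t (by linarith)
      have h2 : Real.exp t₁ * 2 ≤ Real.exp t := by
        have h3 : Real.exp t₂ ≤ Real.exp t := Real.exp_le_exp.2 ht
        rw [ht₂def, Real.exp_add] at h3
        nlinarith [Real.exp_pos t₁, Real.exp_one_gt_d9]
      nlinarith [Real.exp_pos t₁, Real.exp_pos t]
    -- choose t₃
    set B := m + (1 + |t₁|) * (m ^ 3)⁻¹ with hBdef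
    clear_value B
    have hB0 : 0 < B := by
      rw [hBdef]
      have h1 : (0:ℝ) < (m ^ 3)⁻¹ := inv_pos.2 hm3
      nlinarith [mul_pos (by linarith [abs_nonneg t₁] : (0:ℝ) < 1 + |t₁|) h1]
    set C := (4 * B ^ 4 + 3) * Real.exp t₂ with hCdef
    clear_value C
    obtain ⟨t₃, h3⟩ := (((Real.tendsto_exp_div_pow_atTop 4).eventually_ge_atTop C).and
      (eventually_ge_atTop (max t₂ 1))).exists
    obtain ⟨h3a, h3b⟩ := h3
    have ht₃2 : t₂ ≤ t₃ := le_trans (le_max_left _ _) h3b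
    have ht₃1 : (1:ℝ) ≤ t₃ := le_trans (le_max_right _ _) h3b
    have ht₃pos : (0:ℝ) < t₃ := by linarith
    have hexp3 : C * t₃ ^ 4 ≤ Real.exp t₃ := by
      rw [le_div_iff₀ (by positivity)] at h3a
      exact h3a
    set L := m + (t₃ - t₁) * (m ^ 3)⁻¹ with hLdef
    clear_value L
    have hL0 : 0 < L := by
      have h4 : t₁ ≤ t₃ := by
        have : t₁ ≤ t₂ := by linarith
        linarith
      have h5 : 0 ≤ (t₃ - t₁) * (m ^ 3)⁻¹ :=
        mul_nonneg (by linarith) (by positivity)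
      linarith
    have hLB : L ≤ B * t₃ := by
      have h4 : -t₁ ≤ |t₁| := neg_le_abs t₁
      have h5 : (0:ℝ) < (m ^ 3)⁻¹ := by positivity
      have h6 : |t₁| * (m ^ 3)⁻¹ ≤ |t₁| * (m ^ 3)⁻¹ * t₃ := by
        nlinarith [mul_nonneg (mul_nonneg (abs_nonneg t₁) h5.le)
          (by linarith : (0:ℝ) ≤ t₃ - 1)]
      rw [hLdef, hBdef]
      nlinarith [abs_nonneg t₁]
    -- monotone function G
    have hG := mono_aux ht₃2
      (f := fun τ => Real.exp τ * (x τ ^ 3 * y τ - 1) * (4 * L ^ 4) - 3 * Real.exp τ)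
      (f' := fun τ => Real.exp τ * (3 * x τ ^ 2 * y τ ^ 2) * (4 * L ^ 4) - 3 * Real.exp τ)
      (fun τ hτ => by
        have h4 : t₁ ≤ τ := by
          have := hτ.1; linarith
        exact ((hW τ (hIci1 τ h4)).mul_const _).sub ((Real.hasDerivAt_exp τ).const_mul 3))
      (fun τ hτ => by
        have h4 : t₁ ≤ τ := by have := hτ.1; linarith
        have hX : 0 < x τ := hx_pos τ (hIci1 τ h4)
        have hw2 := hwhalf τ hτ.1
        have hXL : x τ ≤ L := by
          have := hxlin τ h4
          have h5 : (0:ℝ) < (m ^ 3)⁻¹ := by positivity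
          have h6 : τ ≤ t₃ := hτ.2
          rw [hLdef]
          nlinarith
        have hX4 : x τ ^ 4 ≤ L ^ 4 := pow_le_pow_left₀ hX.le hXL 4
        have hcore : (1:ℝ) ≤ 4 * L ^ 4 * (x τ ^ 2 * y τ ^ 2) := by
          nlinarith [sq_nonneg (x τ ^ 3 * y τ - 1/2), sq_nonneg (x τ * y τ),
            mul_nonneg (sq_nonneg (x τ * y τ)) (sub_nonneg.2 hX4)]
        have h9 := mul_le_mul_of_nonneg_left hcore (Real.exp_pos τ).le
        show 0 ≤ Real.exp τ * (3 * x τ ^ 2 * y τ ^ 2) * (4 * L ^ 4) - 3 * Real.exp τ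
        nlinarith [Real.exp_pos τ, h9])
    -- lower bound of G at t₂, upper bound at t₃, contradiction
    have hG2 : -(4 * L ^ 4 + 3) * Real.exp t₂ ≤
        Real.exp t₂ * (x t₂ ^ 3 * y t₂ - 1) * (4 * L ^ 4) - 3 * Real.exp t₂ := by
      have h4 := hwlb t₂ (by linarith)
      have h5 : Real.exp t₁ ≤ Real.exp t₂ := Real.exp_le_exp.2 (by linarith)
      nlinarith [pow_pos hL0 4]
    have hw3 : x t₃ ^ 3 * y t₃ - 1 < 0 := hcon t₃ (by linarith)
    have hG3 : Real.exp t₃ * (x t₃ ^ 3 * y t₃ - 1) * (4 * L ^ 4) - 3 * Real.exp t₃ <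
        -3 * Real.exp t₃ := by
      nlinarith [Real.exp_pos t₃, pow_pos hL0 4,
        mul_pos (Real.exp_pos t₃) (neg_pos.2 hw3)]
    have hL4 : L ^ 4 ≤ B ^ 4 * t₃ ^ 4 := by
      have := pow_le_pow_left₀ hL0.le hLB 4
      calc L ^ 4 ≤ (B * t₃) ^ 4 := this
        _ = B ^ 4 * t₃ ^ 4 := by ring
    have ht34 : (1:ℝ) ≤ t₃ ^ 4 := by
      have := pow_le_pow_left₀ (by norm_num : (0:ℝ) ≤ 1) ht₃1 4
      simpa using this
    -- 3 exp t₃ < (4 L⁴ + 3) exp t₂ ≤ (4 B⁴ t₃⁴ + 3 t₃⁴) exp t₂ = C t₃⁴ ≤ exp t₃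
    have hfinal : Real.exp t₃ < Real.exp t₃ := by
      have h7 : 3 * Real.exp t₃ < (4 * L ^ 4 + 3) * Real.exp t₂ := by nlinarith
      have h8 : (4 * L ^ 4 + 3) * Real.exp t₂ ≤ C * t₃ ^ 4 := by
        rw [hCdef]
        nlinarith [Real.exp_pos t₂]
      nlinarith [Real.exp_pos t₃]
    exact absurd hfinal (lt_irrefl _)
  obtain ⟨T, hT1, hwT0⟩ := stepC
  have hT0 : t₀ ≤ T := le_trans ht₁0 hT1
  have hIciT : ∀ t, T ≤ t → t ∈ Ici t₀ := fun t ht => le_trans hT0 ht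
  have hwT : ∀ t, T ≤ t → 0 ≤ x t ^ 3 * y t - 1 := by
    intro t ht
    have h1 := monoW T t hT0 ht
    nlinarith [Real.exp_pos t, Real.exp_pos T,
      mul_nonneg (Real.exp_pos T).le hwT0]
  have hyT : ∀ t, T ≤ t → 0 < y t := fun t ht => hypos1 t (le_trans hT1 ht)
  -- monotone u τ = x τ^4/4 - τ
  have hu : ∀ s τ, T ≤ s → s ≤ τ → x s ^ 4 / 4 - s ≤ x τ ^ 4 / 4 - τ := by
    intro s τ hs hsτ
    exact mono_aux hsτ (f := fun τ => x τ ^ 4 / 4 - τ)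
      (f' := fun τ => x τ ^ 3 * y τ - 1)
      (fun ρ hρ => by
        have h1 : ρ ∈ Ici t₀ := hIciT ρ (le_trans hs hρ.1)
        have h2 : HasDerivAt (fun τ => x τ ^ 4 / 4) (x ρ ^ 3 * y ρ) ρ := by
          have h2a := ((hx ρ h1).pow 4).div_const 4
          have he : ((4:ℕ):ℝ) * x ρ ^ (4-1) * y ρ / 4 = x ρ ^ 3 * y ρ := by
            push_cast
            ring
          rw [he] at h2a
          exact h2a
        exact h2.sub (hasDerivAt_id' ρ))
      (fun ρ hρ => hwT ρ (le_trans hs hρ.1))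
  -- lower bound
  have hlow : ∀ s τ, T ≤ s → s ≤ τ →
      Real.sqrt 2 * (τ + (x s ^ 4 / 4 - s)) ^ ((1:ℝ)/4) ≤ x τ := by
    intro s τ hs hsτ
    have h1 := hu s τ hs hsτ
    have h2 : 0 < x s := hx_pos s (hIciT s hs)
    have h3 : 0 < x τ := hx_pos τ (hIciT τ (le_trans hs hsτ))
    have h4 : (0:ℝ) ≤ τ + (x s ^ 4 / 4 - s) := by nlinarith [pow_pos h2 4]
    calc Real.sqrt 2 * (τ + (x s ^ 4 / 4 - s)) ^ ((1:ℝ)/4)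
        ≤ Real.sqrt 2 * (x τ ^ 4 / 4) ^ ((1:ℝ)/4) := by
          apply mul_le_mul_of_nonneg_left
            (Real.rpow_le_rpow h4 (by linarith) (by norm_num)) (Real.sqrt_nonneg 2)
      _ = x τ := sqrt2_rpow _ h3
  refine ⟨T, hT0, fun s t hs hst => ?_⟩
  have hsont : T ≤ t := le_trans hs hst
  have h2 : 0 < x s := hx_pos s (hIciT s hs)
  have hcpos : ∀ τ, s ≤ τ → 0 < τ + (x s ^ 4 / 4 - s) := by
    intro τ hτ
    nlinarith [pow_pos h2 4]
  constructor
  · exact hlow s t hs hst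
  · -- upper bound via anti_aux on g τ = x τ + y τ - √2 (τ + c)^{1/4}
    have hg := anti_aux hst
      (f := fun τ => x τ + y τ - Real.sqrt 2 * (τ + (x s ^ 4 / 4 - s)) ^ ((1:ℝ)/4))
      (f' := fun τ => (x τ ^ 3)⁻¹ -
        Real.sqrt 2 * ((1:ℝ)/4 * (τ + (x s ^ 4 / 4 - s)) ^ ((1:ℝ)/4 - 1)))
      (fun τ hτ => by
        have h5 : τ ∈ Ici t₀ := hIciT τ (le_trans hs hτ.1)
        have h6 : 0 < τ + (x s ^ 4 / 4 - s) := hcpos τ hτ.1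
        have hrd : HasDerivAt (fun τ => Real.sqrt 2 * (τ + (x s ^ 4 / 4 - s)) ^ ((1:ℝ)/4))
            (Real.sqrt 2 * ((1:ℝ)/4 * (τ + (x s ^ 4 / 4 - s)) ^ ((1:ℝ)/4 - 1))) τ := by
          have hb := (Real.hasDerivAt_rpow_const (x := τ + (x s ^ 4 / 4 - s))
            (p := (1:ℝ)/4) (Or.inl h6.ne')).comp τ ((hasDerivAt_id τ).add_const _)
          simpa using hb.const_mul (Real.sqrt 2)
        have := ((hx τ h5).add (hy τ h5)).sub hrd
        refine this.congr_deriv ?_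
        ring
      )
      (fun τ hτ => by
        have h6 : 0 < τ + (x s ^ 4 / 4 - s) := hcpos τ hτ.1
        have h7 := hlow s τ hs hτ.1
        have h8 := inv_cube_le h6 h7
        linarith)
    have h9 : s + (x s ^ 4 / 4 - s) = x s ^ 4 / 4 := by ring
    rw [h9, sqrt2_rpow _ h2] at hg
    have h10 : 0 < y t := hyT t hsont
    linarith
end

section
/- If h solves h³(h'' + h') = 1 on [t₀,∞) with h(t₀) = h₀ > 0, then there exists T ≥ t₀ such that h'(t) > 0 for all t > T. -/
open Set

/-- If `h` solves `h³(h'' + h') = 1` on `[t₀,∞)` with `h t₀ = h₀ > 0`, then there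
exists `T ≥ t₀` such that `h'(t) > 0` for all `t > T`. -/
theorem stmt_3 (t₀ h₀ : ℝ) (h : ℝ → ℝ) (hh₀ : 0 < h₀) (hinit : h t₀ = h₀)
    (hpos : ∀ t ∈ Ici t₀, 0 < h t)
    (hdiff : ∀ t ∈ Ici t₀, DifferentiableAt ℝ h t)
    (hdiff' : ∀ t ∈ Ici t₀, DifferentiableAt ℝ (deriv h) t)
    (hode : ∀ t ∈ Ici t₀, (h t) ^ 3 * (deriv (deriv h) t + deriv h t) = 1) :
    ∃ T ∈ Ici t₀, ∀ t, T < t → 0 < deriv h t := by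
  set φ : ℝ → ℝ := fun t => Real.exp t * deriv h t with hφdef
  have hφderiv : ∀ t ∈ Ici t₀, HasDerivAt φ (Real.exp t / (h t) ^ 3) t := by
    intro t ht
    have h1 : HasDerivAt (deriv h) (deriv (deriv h) t) t := (hdiff' t ht).hasDerivAt
    have h2 : HasDerivAt Real.exp (Real.exp t) t := Real.hasDerivAt_exp t
    have h3 := h2.mul h1
    have hpt := hpos t ht
    have hodet := hode t ht
    have heq : Real.exp t * deriv h t + Real.exp t * deriv (deriv h) t
        = Real.exp t / (h t) ^ 3 := by
      field_simp
      nlinarith [Real.exp_pos t]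
    rw [heq] at h3
    exact h3
  have hφcont : ContinuousOn φ (Ici t₀) :=
    fun t ht => (hφderiv t ht).continuousAt.continuousWithinAt
  have hφmono : StrictMonoOn φ (Ici t₀) := by
    apply strictMonoOn_of_deriv_pos (convex_Ici t₀) hφcont
    intro x hx
    rw [interior_Ici] at hx
    rw [(hφderiv x (Ioi_subset_Ici_self hx)).deriv]
    exact div_pos (Real.exp_pos x) (pow_pos (hpos x (Ioi_subset_Ici_self hx)) 3)
  have hex : ∃ s ∈ Ici t₀, 0 < deriv h s := by
    by_contra hcon
    push_neg at hcon
    -- h is antitone, so h ≤ h₀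
    have hanti : AntitoneOn h (Ici t₀) := by
      apply antitoneOn_of_deriv_nonpos (convex_Ici t₀)
      · exact fun t ht => (hdiff t ht).continuousAt.continuousWithinAt
      · intro x hx
        rw [interior_Ici] at hx
        exact (hdiff x (Ioi_subset_Ici_self hx)).differentiableWithinAt
      · intro x hx
        rw [interior_Ici] at hx
        exact hcon x (Ioi_subset_Ici_self hx)
    set F : ℝ → ℝ := fun t => φ t - Real.exp t / h₀ ^ 3 with hFdef
    have hFderiv : ∀ t ∈ Ici t₀, HasDerivAt F
        (Real.exp t / (h t) ^ 3 - Real.exp t / h₀ ^ 3) t := by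
      intro t ht
      exact (hφderiv t ht).sub ((Real.hasDerivAt_exp t).div_const _)
    have hFmono : MonotoneOn F (Ici t₀) := by
      apply monotoneOn_of_deriv_nonneg (convex_Ici t₀)
      · exact fun t ht => (hFderiv t ht).continuousAt.continuousWithinAt
      · intro x hx
        rw [interior_Ici] at hx
        exact (hFderiv x (Ioi_subset_Ici_self hx)).differentiableAt.differentiableWithinAt
      · intro x hx
        rw [interior_Ici] at hx
        rw [(hFderiv x (Ioi_subset_Ici_self hx)).deriv]
        have hle : h x ≤ h₀ := by
          have := hanti (self_mem_Ici) (Ioi_subset_Ici_self hx) (le_of_lt hx)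
          rw [hinit] at this
          exact this
        have hx0 := hpos x (Ioi_subset_Ici_self hx)
        have hpow : (h x) ^ 3 ≤ h₀ ^ 3 := pow_le_pow_left₀ (le_of_lt hx0) hle 3
        have : Real.exp x / h₀ ^ 3 ≤ Real.exp x / (h x) ^ 3 :=
          div_le_div_of_nonneg_left (le_of_lt (Real.exp_pos x))
            (pow_pos hx0 3) hpow
        linarith
    set M : ℝ := |F t₀| * h₀ ^ 3 + 1 with hMdef
    have hM : 0 < M := by positivity
    set t₁ : ℝ := max t₀ (Real.log M) with ht₁def
    have ht₁ : t₀ ≤ t₁ := le_max_left _ _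
    have hFt₁ : F t₀ ≤ F t₁ := hFmono self_mem_Ici ht₁ ht₁
    have hexp : M ≤ Real.exp t₁ := by
      calc M = Real.exp (Real.log M) := (Real.exp_log hM).symm
        _ ≤ Real.exp t₁ := Real.exp_le_exp.mpr (le_max_right _ _)
    have hφpos : 0 < φ t₁ := by
      have h1 : φ t₁ = F t₁ + Real.exp t₁ / h₀ ^ 3 := by simp [hFdef]
      have h2 : |F t₀| + 1 / h₀ ^ 3 ≤ Real.exp t₁ / h₀ ^ 3 := by
        rw [hMdef] at hexp
        rw [le_div_iff₀ (by positivity)]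
        have hone : (1 / h₀ ^ 3) * h₀ ^ 3 = 1 := by field_simp
        nlinarith [hexp]
      have h3 : -F t₀ ≤ |F t₀| := neg_le_abs _
      have h4 : 0 < 1 / h₀ ^ 3 := by positivity
      clear_value φ F M t₁
      linarith
    have : deriv h t₁ ≤ 0 := hcon t₁ ht₁
    have hexp1 := Real.exp_pos t₁
    simp only [hφdef] at hφpos
    nlinarith
  obtain ⟨s, hs, hds⟩ := hex
  refine ⟨s, hs, fun t hts => ?_⟩
  have htI : t ∈ Ici t₀ := le_trans hs (le_of_lt hts)
  have hlt : φ s < φ t := hφmono hs htI hts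
  have hφs : 0 < φ s := mul_pos (Real.exp_pos s) hds
  have hφt : 0 < φ t := lt_trans hφs hlt
  have hexp1 := Real.exp_pos t
  simp only [hφdef] at hφt
  nlinarith
end

section
/- If h solves h³(h'' + h') = 1 on [t₀,∞) with h(t₀) = h₀ > 0, then h(t) = √2 · t^{1/4} + O(1) as t → +∞. -/
open Set Filter Real

lemma monoIci {f f' : ℝ → ℝ} {a : ℝ}
    (hc : ContinuousOn f (Ici a))
    (hd : ∀ t ∈ Ioi a, HasDerivAt f (f' t) t)
    (h0 : ∀ t ∈ Ioi a, 0 ≤ f' t) :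
    MonotoneOn f (Ici a) := by
  apply monotoneOn_of_deriv_nonneg (convex_Ici a) hc
  · intro t ht; rw [interior_Ici] at ht
    exact (hd t ht).differentiableAt.differentiableWithinAt
  · intro t ht; rw [interior_Ici] at ht
    rw [(hd t ht).deriv]; exact h0 t ht

lemma antiIci {f f' : ℝ → ℝ} {a : ℝ}
    (hc : ContinuousOn f (Ici a))
    (hd : ∀ t ∈ Ioi a, HasDerivAt f (f' t) t)
    (h0 : ∀ t ∈ Ioi a, f' t ≤ 0) :
    AntitoneOn f (Ici a) := by
  apply antitoneOn_of_deriv_nonpos (convex_Ici a) hc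
  · intro t ht; rw [interior_Ici] at ht
    exact (hd t ht).differentiableAt.differentiableWithinAt
  · intro t ht; rw [interior_Ici] at ht
    rw [(hd t ht).deriv]; exact h0 t ht

lemma boot {G f' : ℝ → ℝ} {T C : ℝ} {β : ℤ} (hβ : -1 ≤ β) (hC : 0 < C) (hT : 2 ≤ T)
    (hGc : ContinuousOn G (Ici T))
    (hGd : ∀ t ∈ Ioi T, HasDerivAt G (f' t) t)
    (hle : ∀ t ∈ Ioi T, f' t + G t ≤ C * t ^ β) :
    ∃ C', 0 < C' ∧ ∀ t ∈ Ici T, G t ≤ C' * t ^ β := by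
  have hTpos : (0:ℝ) < T := by linarith
  set ρ : ℝ → ℝ := fun t => Real.exp t * (G t - 2 * C * t ^ β) with hρdef
  have hzc : ContinuousOn (fun t : ℝ => t ^ β) (Ici T) := fun t ht =>
    (continuousAt_zpow₀ t β (Or.inl (ne_of_gt (lt_of_lt_of_le hTpos ht)))).continuousWithinAt
  have hρc : ContinuousOn ρ (Ici T) :=
    Real.continuous_exp.continuousOn.mul (hGc.sub (continuousOn_const.mul hzc))
  have hρd : ∀ t ∈ Ioi T, HasDerivAt ρ
      (Real.exp t * (G t - 2*C*t^β) + Real.exp t * (f' t - 2*C*((β:ℝ) * t^(β-1)))) t := by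
    intro t ht
    have ht0 : t ≠ 0 := ne_of_gt (lt_trans hTpos ht)
    exact (Real.hasDerivAt_exp t).mul
      ((hGd t ht).sub ((hasDerivAt_zpow β t (Or.inl ht0)).const_mul (2*C)))
  have hρanti : AntitoneOn ρ (Ici T) := by
    apply antiIci hρc hρd
    intro t ht
    have htT : T < t := ht
    have ht2 : (2:ℝ) ≤ t := le_of_lt (lt_of_le_of_lt hT htT)
    have ht0 : (0:ℝ) < t := by linarith
    have hne : t ≠ 0 := ne_of_gt ht0
    have hkey : C * t ^ β ≤ 2*C*t^β + 2*C*((β:ℝ) * t^(β-1)) := by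
      have htβ : t ^ β = t ^ (β-1) * t := by
        rw [zpow_sub_one₀ hne]; field_simp
      have hz1 : (0:ℝ) < t ^ (β-1) := zpow_pos ht0 _
      have h2β : 0 ≤ t + 2*(β:ℝ) := by
        have : (-1:ℝ) ≤ (β:ℝ) := by exact_mod_cast hβ
        linarith
      nlinarith [mul_nonneg (mul_nonneg (le_of_lt hC) (le_of_lt hz1)) h2β]
    have := hle t ht
    have hexp : (0:ℝ) < Real.exp t := Real.exp_pos t
    nlinarith [hexp]
  refine ⟨2*C + |ρ T| + 1, by positivity, ?_⟩
  intro t ht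
  have htT : T ≤ t := ht
  have ht1 : (1:ℝ) ≤ t := by linarith
  have ht0 : (0:ℝ) < t := by linarith
  have hρle : ρ t ≤ ρ T := hρanti self_mem_Ici ht htT
  have hexp0 : (0:ℝ) < Real.exp t := Real.exp_pos t
  have hGt : G t ≤ 2*C*t^β + ρ T * Real.exp (-t) := by
    have h3 : (G t - 2*C*t^β) * Real.exp t ≤ ρ T := by
      have hρt : ρ t = Real.exp t * (G t - 2*C*t^β) := rfl
      nlinarith [hρle]
    have h4 : G t - 2*C*t^β ≤ ρ T / Real.exp t := (le_div_iff₀ hexp0).mpr h3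
    rw [Real.exp_neg, ← div_eq_mul_inv]
    linarith
  have hexple : Real.exp (-t) ≤ t ^ β := by
    have hte : t ≤ Real.exp t := by linarith [Real.add_one_le_exp t]
    have h1 : Real.exp (-t) ≤ t⁻¹ := by
      rw [Real.exp_neg]
      exact inv_anti₀ ht0 hte
    have h2 : t⁻¹ = t ^ (-1 : ℤ) := (zpow_neg_one t).symm
    have h3 : t ^ (-1 : ℤ) ≤ t ^ β := zpow_le_zpow_right₀ ht1 hβ
    linarith [h2 ▸ h1]
  have hz0 : (0:ℝ) < t ^ β := zpow_pos ht0 _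
  calc G t ≤ 2*C*t^β + ρ T * Real.exp (-t) := hGt
    _ ≤ 2*C*t^β + |ρ T| * Real.exp (-t) := by
        have := Real.exp_pos (-t)
        nlinarith [le_abs_self (ρ T)]
    _ ≤ 2*C*t^β + |ρ T| * t ^ β := by
        nlinarith [abs_nonneg (ρ T)]
    _ ≤ (2*C + |ρ T| + 1) * t ^ β := by nlinarith

lemma wgrow {w f' : ℝ → ℝ} {T C : ℝ} {β : ℕ} (hC : 0 < C) (hT : 1 ≤ T)
    (hwc : ContinuousOn w (Ici T))
    (hwd : ∀ t ∈ Ioi T, HasDerivAt w (f' t) t)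
    (hle : ∀ t ∈ Ioi T, f' t ≤ 4 + C * t ^ β) :
    ∃ K, 0 < K ∧ ∀ t ∈ Ici T, w t ≤ K * t ^ (β+1) := by
  set K := C + 5 + |w T| with hK
  have hKpos : 0 < K := by positivity
  refine ⟨K, hKpos, ?_⟩
  set ρ : ℝ → ℝ := fun t => K * t ^ (β+1) - w t with hρdef
  have hρc : ContinuousOn ρ (Ici T) :=
    (continuousOn_const.mul (continuousOn_pow (β+1))).sub hwc
  have hρd : ∀ t ∈ Ioi T, HasDerivAt ρ (K * (((β:ℝ)+1) * t ^ β) - f' t) t := by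
    intro t ht
    have := ((hasDerivAt_pow (β+1) t).const_mul K).sub (hwd t ht)
    refine this.congr_deriv ?_
    simp only [Nat.add_sub_cancel]
    push_cast
    ring
  have hρmono : MonotoneOn ρ (Ici T) := by
    apply monoIci hρc hρd
    intro t ht
    have ht1 : (1:ℝ) ≤ t := le_of_lt (lt_of_le_of_lt hT ht)
    have htβ : (1:ℝ) ≤ t ^ β := one_le_pow₀ ht1
    have h1 : f' t ≤ 4 + C * t ^ β := hle t ht
    have h2 : (4:ℝ) + C * t ^ β ≤ K * (((β:ℝ)+1) * t ^ β) := by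
      have hb0 : (0:ℝ) ≤ (β:ℝ) := Nat.cast_nonneg β
      have : (4:ℝ) + C * t ^ β ≤ (C + 4) * t ^ β := by nlinarith
      have h3 : (C + 4) * t ^ β ≤ K * t ^ β := by nlinarith [abs_nonneg (w T)]
      have h5 : (0:ℝ) ≤ K * ((β:ℝ) * t ^ β) := by positivity
      nlinarith [h5]
    linarith
  intro t ht
  have hρT : 0 ≤ ρ T := by
    have hT1 : (1:ℝ) ≤ T ^ (β+1) := one_le_pow₀ hT
    have : w T ≤ |w T| := le_abs_self _
    have : K ≤ K * T ^ (β+1) := by nlinarith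
    simp only [hρdef]
    nlinarith [le_abs_self (w T)]
  have h6 := hρmono self_mem_Ici ht ht
  simp only [hρdef] at h6 hρT ⊢
  linarith

set_option maxHeartbeats 2000000 in
/-- If `h` solves `h³(h'' + h') = 1` on `[t₀,∞)` with `h t₀ = h₀ > 0`, then
`h(t) = √2 · t^{1/4} + O(1)` as `t → +∞`. -/
theorem stmt_4 (t₀ h₀ : ℝ) (h : ℝ → ℝ) (hh₀ : 0 < h₀) (hinit : h t₀ = h₀)
    (hpos : ∀ t ∈ Ici t₀, 0 < h t)
    (hdiff : ∀ t ∈ Ici t₀, DifferentiableAt ℝ h t)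
    (hdiff' : ∀ t ∈ Ici t₀, DifferentiableAt ℝ (deriv h) t)
    (hode : ∀ t ∈ Ici t₀, (h t) ^ 3 * (deriv (deriv h) t + deriv h t) = 1) :
    (fun t : ℝ => h t - Real.sqrt 2 * t ^ ((1 : ℝ) / 4)) =O[atTop]
      (fun _ : ℝ => (1 : ℝ)) := by
  set d1 := deriv h with hd1def
  set d2 := deriv (deriv h) with hd2def
  have hne : ∀ t ∈ Ici t₀, h t ≠ 0 := fun t ht => ne_of_gt (hpos t ht)
  have hds : ∀ t ∈ Ici t₀, HasDerivAt h (d1 t) t := fun t ht => (hdiff t ht).hasDerivAt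
  have hds' : ∀ t ∈ Ici t₀, HasDerivAt d1 (d2 t) t := fun t ht => (hdiff' t ht).hasDerivAt
  have hCh : ContinuousOn h (Ici t₀) := fun t ht => (hdiff t ht).continuousAt.continuousWithinAt
  have hCd1 : ContinuousOn d1 (Ici t₀) :=
    fun t ht => (hdiff' t ht).continuousAt.continuousWithinAt
  have hODE : ∀ t ∈ Ici t₀, d2 t = ((h t)^3)⁻¹ - d1 t := by
    intro t ht
    have h1 := hode t ht
    have h2 := hne t ht
    have h3 : (h t)^3 ≠ 0 := pow_ne_zero _ h2
    field_simp
    linear_combination h1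
  set G : ℝ → ℝ := fun t => (h t)^3 * d1 t - 1 with hGdef
  set w : ℝ → ℝ := fun t => (h t)^4 with hwdef
  have hGd : ∀ t ∈ Ioi t₀, HasDerivAt G (3*(h t)^2*(d1 t)^2 - G t) t := by
    intro t ht
    have ht' : t ∈ Ici t₀ := mem_Ici.mpr (le_of_lt ht)
    have hp := (((hds t ht').pow 3).mul (hds' t ht')).sub_const 1
    refine hp.congr_deriv ?_
    simp only [Pi.pow_apply]
    rw [hODE t ht']
    have h2 := hne t ht'
    field_simp
    ring
  have hwd : ∀ t ∈ Ioi t₀, HasDerivAt w (4*(G t + 1)) t := by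
    intro t ht
    have ht' : t ∈ Ici t₀ := mem_Ici.mpr (le_of_lt ht)
    have hp := (hds t ht').pow 4
    refine hp.congr_deriv ?_
    simp only [hGdef]
    push_cast
    ring
  have hGc : ContinuousOn G (Ici t₀) := ((hCh.pow 3).mul hCd1).sub continuousOn_const
  have hwc : ContinuousOn w (Ici t₀) := hCh.pow 4
  -- E = exp * G is monotone
  have hEmono : MonotoneOn (fun t => Real.exp t * G t) (Ici t₀) := by
    apply monoIci (Real.continuous_exp.continuousOn.mul hGc)
      (fun t ht => (Real.hasDerivAt_exp t).mul (hGd t ht))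
    intro t ht
    have : Real.exp t * G t + Real.exp t * (3*(h t)^2*(d1 t)^2 - G t)
        = Real.exp t * (3*(h t)^2*(d1 t)^2) := by ring
    rw [this]
    positivity
  -- there is a point with positive derivative
  have hP : ∃ t₁, t₀ < t₁ ∧ 0 < d1 t₁ := by
    by_contra hcon
    push_neg at hcon
    have hd1np : ∀ t ∈ Ioi t₀, d1 t ≤ 0 := fun t ht => hcon t ht
    have hanti : AntitoneOn h (Ici t₀) := antiIci hCh (fun t ht => hds t (mem_Ici.mpr (le_of_lt ht))) hd1np
    have hub : ∀ t ∈ Ici t₀, h t ≤ h₀ := by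
      intro t ht
      rw [← hinit]
      exact hanti self_mem_Ici ht ht
    set c : ℝ := (h₀^3)⁻¹ with hcdef
    have hcpos : 0 < c := by positivity
    set g : ℝ → ℝ := fun t => Real.exp t * d1 t - c * Real.exp t with hgdef
    have hgd : ∀ t ∈ Ioi t₀, HasDerivAt g
        ((Real.exp t * d1 t + Real.exp t * d2 t) - c * Real.exp t) t := by
      intro t ht
      exact ((Real.hasDerivAt_exp t).mul (hds' t (mem_Ici.mpr (le_of_lt ht)))).sub
        ((Real.hasDerivAt_exp t).const_mul c)
    have hgc : ContinuousOn g (Ici t₀) :=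
      (Real.continuous_exp.continuousOn.mul hCd1).sub
        (continuousOn_const.mul Real.continuous_exp.continuousOn)
    have hgmono : MonotoneOn g (Ici t₀) := by
      apply monoIci hgc hgd
      intro t ht
      have ht' : t ∈ Ici t₀ := mem_Ici.mpr (le_of_lt ht)
      have h1 : Real.exp t * d1 t + Real.exp t * d2 t = Real.exp t * ((h t)^3)⁻¹ := by
        rw [hODE t ht']
        ring
      rw [h1]
      have h2 : (h t)^3 ≤ h₀^3 := pow_le_pow_left₀ (hpos t ht').le (hub t ht') 3
      have h3 : c ≤ ((h t)^3)⁻¹ := by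
        rw [hcdef]
        exact inv_anti₀ (pow_pos (hpos t ht') 3) h2
      have h4 : 0 < Real.exp t := Real.exp_pos t
      nlinarith
    -- pick a large time
    set X : ℝ := (|g t₀| + 1) * h₀^3 with hXdef
    have hXpos : 0 < X := by
      simp only [hXdef]
      positivity
    set t₁ : ℝ := max (t₀ + 1) (Real.log X + 1) with ht₁def
    have ht₁gt : t₀ < t₁ := lt_of_lt_of_le (by linarith) (le_max_left _ _)
    have hexpX : X < Real.exp t₁ := by
      calc X = Real.exp (Real.log X) := (Real.exp_log hXpos).symm
        _ < Real.exp t₁ := by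
            apply Real.exp_lt_exp.mpr
            exact lt_of_lt_of_le (by linarith) (le_max_right _ _)
    have hg1 := hgmono self_mem_Ici (le_of_lt ht₁gt) (le_of_lt ht₁gt)
    -- g t₁ ≥ g t₀, so exp t₁ * d1 t₁ ≥ g t₀ + c * exp t₁ > 0
    have h5 : Real.exp t₁ * d1 t₁ ≥ g t₀ + c * Real.exp t₁ := by
      simp only [hgdef] at hg1 ⊢
      linarith
    have h6 : c * Real.exp t₁ > |g t₀| + 1 := by
      have : c * X = |g t₀| + 1 := by
        rw [hXdef, hcdef]
        field_simp
      nlinarith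
    have h7 : 0 < Real.exp t₁ * d1 t₁ := by
      have := neg_abs_le (g t₀)
      linarith
    have h9 : 0 < Real.exp t₁ := Real.exp_pos t₁
    have h8 : 0 < d1 t₁ := by
      by_contra hle
      push_neg at hle
      nlinarith
    exact absurd h8 (not_lt.mpr (hd1np t₁ ht₁gt))
  -- main bound on w
  have HW : ∃ T C, 0 < C ∧ t₀ ≤ T ∧ (1:ℝ) ≤ T ∧
      ∀ t, T ≤ t → |w t - 4*t| ≤ C * t ^ ((3:ℝ)/4) := by
    obtain ⟨t₁, ht₁, hd1t₁⟩ := hP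
    have hIci₁ : Ici t₁ ⊆ Ici t₀ := Ici_subset_Ici.mpr (le_of_lt ht₁)
    have hIoi₁ : Ioi t₁ ⊆ Ioi t₀ := Ioi_subset_Ioi (le_of_lt ht₁)
    by_cases hcase : ∃ t₂, t₀ < t₂ ∧ 0 ≤ G t₂
    · -- Case B : G eventually nonnegative
      obtain ⟨t₂, ht₂, hGt₂⟩ := hcase
      have hIci₂ : Ici t₂ ⊆ Ici t₀ := Ici_subset_Ici.mpr (le_of_lt ht₂)
      have hIoi₂ : Ioi t₂ ⊆ Ioi t₀ := Ioi_subset_Ioi (le_of_lt ht₂)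
      have hGnn : ∀ t, t₂ ≤ t → 0 ≤ G t := by
        intro t ht
        have hE : Real.exp t₂ * G t₂ ≤ Real.exp t * G t :=
          hEmono (hIci₂ self_mem_Ici) (hIci₂ (mem_Ici.mpr ht)) ht
        have he : (0:ℝ) < Real.exp t := Real.exp_pos t
        have he₂ : (0:ℝ) < Real.exp t₂ := Real.exp_pos t₂
        by_contra hcon
        push_neg at hcon
        nlinarith
      have hd1pos : ∀ t, t₂ ≤ t → 0 < d1 t := by
        intro t ht
        have hG := hGnn t ht
        have hp := hpos t (hIci₂ (mem_Ici.mpr ht))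
        simp only [hGdef] at hG
        nlinarith [pow_pos hp 3]
      have hd2np : ∀ t, t₂ < t → d2 t ≤ 0 := by
        intro t ht
        have ht' : t ∈ Ici t₀ := hIci₂ (mem_Ici.mpr (le_of_lt ht))
        have hG := hGnn t (le_of_lt ht)
        have hp := hpos t ht'
        have h3p : (0:ℝ) < (h t)^3 := pow_pos hp 3
        have h1 : ((h t)^3)⁻¹ ≤ d1 t := by
          have h2 : 1 ≤ d1 t * (h t)^3 := by
            simp only [hGdef] at hG
            nlinarith
          have := (div_le_iff₀ h3p).mpr h2
          rwa [one_div] at this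
        rw [hODE t ht']
        linarith
      have hd1anti : AntitoneOn d1 (Ici t₂) :=
        antiIci (hCd1.mono hIci₂)
          (fun t ht => hds' t (hIci₂ (mem_Ici.mpr (le_of_lt ht))))
          (fun t ht => hd2np t ht)
      -- chord bound via MVT
      have hchordP : ∀ t, t₂ < t → d1 t * (t - t₂) ≤ h t - h t₂ := by
        intro t ht
        have hICC : Icc t₂ t ⊆ Ici t₀ := (Icc_subset_Ici_self).trans hIci₂
        obtain ⟨c, hc, hslope⟩ := exists_hasDerivAt_eq_slope h d1 ht
          (hCh.mono hICC) (fun x hx => hds x (hICC ⟨le_of_lt hx.1, le_of_lt hx.2⟩))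
        have hd1c : d1 t ≤ d1 c :=
          hd1anti (mem_Ici.mpr (le_of_lt hc.1)) (mem_Ici.mpr (le_trans (le_of_lt hc.1) (le_of_lt hc.2))) (le_of_lt hc.2)
        have htt : (0:ℝ) < t - t₂ := by linarith
        have h1 : d1 c * (t - t₂) = h t - h t₂ := by
          rw [hslope]
          field_simp
        nlinarith
      have hlin : ∀ t, t₂ < t → h t ≤ h t₂ + d1 t₂ * (t - t₂) := by
        intro t ht
        have hICC : Icc t₂ t ⊆ Ici t₀ := (Icc_subset_Ici_self).trans hIci₂
        obtain ⟨c, hc, hslope⟩ := exists_hasDerivAt_eq_slope h d1 ht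
          (hCh.mono hICC) (fun x hx => hds x (hICC ⟨le_of_lt hx.1, le_of_lt hx.2⟩))
        have hd1c : d1 c ≤ d1 t₂ :=
          hd1anti self_mem_Ici (mem_Ici.mpr (le_of_lt hc.1)) (le_of_lt hc.1)
        have htt : (0:ℝ) < t - t₂ := by linarith
        have h1 : d1 c * (t - t₂) = h t - h t₂ := by
          rw [hslope]
          field_simp
        nlinarith
      -- base time
      set T₀ : ℝ := max (2*|t₂| + 2) 2 with hT₀def
      have hT₀2 : (2:ℝ) ≤ T₀ := le_max_right _ _
      have hT₀t₂ : t₂ < T₀ := by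
        have h1 : 2*|t₂| + 2 ≤ T₀ := le_max_left _ _
        have h2 := le_abs_self t₂
        have h3 := abs_nonneg t₂
        linarith
      have hT₀t₀ : t₀ < T₀ := lt_trans ht₂ hT₀t₂
      have hhalf : ∀ t, T₀ ≤ t → t/2 ≤ t - t₂ := by
        intro t ht
        have h1 : 2*|t₂| + 2 ≤ T₀ := le_max_left _ _
        have h2 := le_abs_self t₂
        linarith
      -- lower bound for w
      have hwmono : MonotoneOn (fun t => w t - 4*t) (Ici t₂) := by
        apply monoIci ((hwc.mono hIci₂).sub (continuousOn_const.mul continuousOn_id))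
          (f' := fun t => 4*(G t + 1) - 4*1)
        · intro t ht
          exact (hwd t (hIoi₂ ht)).sub ((hasDerivAt_id t).const_mul 4)
        · intro t ht
          have := hGnn t (le_of_lt ht)
          linarith
      have hwlow : ∀ t, t₂ ≤ t → w t₂ - 4*t₂ ≤ w t - 4*t := by
        intro t ht
        exact hwmono self_mem_Ici (mem_Ici.mpr ht) ht
      -- generic f-bound step
      have hfb : ∀ T K : ℝ, ∀ n m : ℤ, m + 2 = n → T₀ ≤ T → 0 < K →
          (∀ t, T ≤ t → w t ≤ K * t^n) →
          ∀ t, T ≤ t → 3*(h t)^2*(d1 t)^2 ≤ 12*K * t^m := by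
        intro T K n m hm hTT hK hw t ht
        have hT0t : T₀ ≤ t := le_trans hTT ht
        have ht2 : (2:ℝ) ≤ t := le_trans hT₀2 hT0t
        have ht0 : (0:ℝ) < t := by linarith
        have htne : t ≠ 0 := ne_of_gt ht0
        have ht₂t : t₂ < t := lt_of_lt_of_le hT₀t₂ hT0t
        have htIci : t ∈ Ici t₀ := le_of_lt (lt_of_lt_of_le hT₀t₀ hT0t)
        have hhx : t/2 ≤ t - t₂ := hhalf t hT0t
        have hd1p : 0 < d1 t := hd1pos t (le_of_lt ht₂t)
        have hcb : d1 t * (t - t₂) ≤ h t - h t₂ := hchordP t ht₂t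
        have hht₂ : 0 < h t₂ := hpos t₂ (hIci₂ self_mem_Ici)
        have hpt : 0 < h t := hpos t htIci
        have h2 : d1 t * t ≤ 2 * h t := by nlinarith
        have h4 : 3*(h t)^2*(d1 t)^2 * t^2 ≤ 12 * w t := by
          simp only [hwdef]
          nlinarith [mul_self_le_mul_self (mul_nonneg hd1p.le ht0.le) h2,
            sq_nonneg (h t), mul_pos hpt hpt]
        have h5 : w t ≤ K * t^n := hw t ht
        have ht2pos : (0:ℝ) < t^2 := by positivity
        rw [← mul_le_mul_iff_of_pos_right ht2pos]
        have hzz : t^m * t^2 = t^n := by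
          have hmn : m + ((2:ℕ):ℤ) = n := by push_cast; omega
          rw [show (t:ℝ)^2 = t^((2:ℕ):ℤ) by rw [zpow_natCast], ← zpow_add₀ htne, hmn]
        calc 3*(h t)^2*(d1 t)^2 * t^2 ≤ 12 * w t := h4
          _ ≤ 12 * (K * t^n) := by linarith
          _ = 12*K * t^m * t^2 := by rw [mul_assoc (12*K), hzz]; ring
      -- boot application
      have hbootApp : ∀ T C : ℝ, ∀ β : ℤ, -1 ≤ β → 0 < C → T₀ ≤ T →
          (∀ t, T ≤ t → 3*(h t)^2*(d1 t)^2 ≤ C * t^β) →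
          ∃ C', 0 < C' ∧ ∀ t, T ≤ t → G t ≤ C' * t^β := by
        intro T C β hβ hC hTT hf
        have hT2 : (2:ℝ) ≤ T := le_trans hT₀2 hTT
        have hsub : Ici T ⊆ Ici t₀ :=
          Ici_subset_Ici.mpr (le_of_lt (lt_of_lt_of_le hT₀t₀ hTT))
        have hsub' : Ioi T ⊆ Ioi t₀ :=
          Ioi_subset_Ioi (le_of_lt (lt_of_lt_of_le hT₀t₀ hTT))
        obtain ⟨C', hC', hG⟩ := boot (f' := fun t => 3*(h t)^2*(d1 t)^2 - G t)
          hβ hC hT2 (hGc.mono hsub) (fun t ht => hGd t (hsub' ht))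
          (fun t ht => by
            show 3*(h t)^2*(d1 t)^2 - G t + G t ≤ C * t^β
            have := hf t (le_of_lt ht)
            linarith)
        exact ⟨C', hC', fun t ht => hG t (mem_Ici.mpr ht)⟩
      -- wgrow application
      have hwApp : ∀ T C' : ℝ, ∀ n : ℤ, 0 ≤ n → 0 < C' → T₀ ≤ T →
          (∀ t, T ≤ t → G t ≤ C' * t^n) →
          ∃ K, 0 < K ∧ ∀ t, T ≤ t → w t ≤ K * t^(n+1) := by
        intro T C' n hn hC' hTT hG
        have hT2 : (2:ℝ) ≤ T := le_trans hT₀2 hTT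
        have hT1 : (1:ℝ) ≤ T := by linarith
        have hsub : Ici T ⊆ Ici t₀ :=
          Ici_subset_Ici.mpr (le_of_lt (lt_of_lt_of_le hT₀t₀ hTT))
        have hsub' : Ioi T ⊆ Ioi t₀ :=
          Ioi_subset_Ioi (le_of_lt (lt_of_lt_of_le hT₀t₀ hTT))
        obtain ⟨K, hK, hw'⟩ := wgrow (β := n.toNat) (C := 4*C')
          (f' := fun t => 4*(G t + 1)) (by positivity) hT1
          (hwc.mono hsub) (fun t ht => hwd t (hsub' ht))
          (fun t ht => by
            have hG1 := hG t (le_of_lt ht)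
            have hzp : t^n = t^(n.toNat) := by
              rw [← zpow_natCast t n.toNat, Int.toNat_of_nonneg hn]
            rw [hzp] at hG1
            show 4*(G t + 1) ≤ 4 + 4*C' * t^(n.toNat)
            linarith)
        refine ⟨K, hK, fun t ht => ?_⟩
        have h1 := hw' t (mem_Ici.mpr ht)
        have hzp : t^(n+1) = t^(n.toNat + 1) := by
          rw [← zpow_natCast t (n.toNat + 1)]
          congr 1
          push_cast
          rw [Int.toNat_of_nonneg hn]
        rw [hzp]
        exact h1
      -- initial bound : w ≤ a⁴ t⁴
      have hht₂ : 0 < h t₂ := hpos t₂ (hIci₂ self_mem_Ici)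
      have hd1t₂ : 0 < d1 t₂ := hd1pos t₂ le_rfl
      set a : ℝ := h t₂ + d1 t₂ + d1 t₂ * |t₂| with hadef
      have hapos : 0 < a := by
        have := abs_nonneg t₂
        simp only [hadef]
        positivity
      have hw4' : ∀ t, T₀ ≤ t → w t ≤ a^4 * t^(4:ℤ) := by
        intro t ht
        have ht2 : (2:ℝ) ≤ t := le_trans hT₀2 ht
        have ht0 : (0:ℝ) < t := by linarith
        have ht₂t : t₂ < t := lt_of_lt_of_le hT₀t₂ ht
        have htIci : t ∈ Ici t₀ := le_of_lt (lt_of_lt_of_le hT₀t₀ ht)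
        have hpt : 0 < h t := hpos t htIci
        have hl := hlin t ht₂t
        have hat : h t ≤ a * t := by
          simp only [hadef]
          nlinarith [neg_abs_le t₂,
            mul_nonneg hd1t₂.le (mul_nonneg (abs_nonneg t₂) (by linarith : (0:ℝ) ≤ t - 1)),
            mul_nonneg hht₂.le (by linarith : (0:ℝ) ≤ t - 1)]
        have h2 : (h t)^4 ≤ (a*t)^4 := pow_le_pow_left₀ hpt.le hat 4
        have h3 : t^(4:ℤ) = t^(4:ℕ) := by
          rw [← zpow_natCast t 4]
          norm_num
        simp only [hwdef]
        rw [h3]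
        calc (h t)^4 ≤ (a*t)^4 := h2
          _ = a^4 * t^(4:ℕ) := by ring
      -- bootstrap chain
      have hf2 := hfb T₀ (a^4) 4 2 (by norm_num) le_rfl (by positivity) hw4'
      obtain ⟨C₁, hC₁, hG₁⟩ := hbootApp T₀ (12*a^4) 2 (by norm_num) (by positivity) le_rfl hf2
      obtain ⟨K₁, hK₁, hw₁⟩ := hwApp T₀ C₁ 2 (by norm_num) hC₁ le_rfl hG₁
      have hf1 := hfb T₀ K₁ (2+1) 1 (by norm_num) le_rfl hK₁ hw₁
      obtain ⟨C₂, hC₂, hG₂⟩ := hbootApp T₀ (12*K₁) 1 (by norm_num) (by positivity) le_rfl hf1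
      obtain ⟨K₂, hK₂, hw₂⟩ := hwApp T₀ C₂ 1 (by norm_num) hC₂ le_rfl hG₂
      have hf0 := hfb T₀ K₂ (1+1) 0 (by norm_num) le_rfl hK₂ hw₂
      obtain ⟨C₃, hC₃, hG₃⟩ := hbootApp T₀ (12*K₂) 0 (by norm_num) (by positivity) le_rfl hf0
      obtain ⟨K₃, hK₃, hw₃⟩ := hwApp T₀ C₃ 0 (by norm_num) hC₃ le_rfl hG₃
      have hfm1 := hfb T₀ K₃ (0+1) (-1) (by norm_num) le_rfl hK₃ hw₃
      obtain ⟨C₄, hC₄, hG₄⟩ := hbootApp T₀ (12*K₃) (-1) (by norm_num) (by positivity) le_rfl hfm1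
      -- final upper bound via sqrt barrier
      have hσ : MonotoneOn (fun t => 4*t + 8*C₄*Real.sqrt t - w t) (Ici T₀) := by
        apply monoIci
          (f' := fun t => (4*1 + 8*C₄*(1/(2*Real.sqrt t))) - 4*(G t + 1))
        · exact ((continuousOn_const.mul continuousOn_id).add
            (continuousOn_const.mul Real.continuous_sqrt.continuousOn)).sub
            (hwc.mono (Ici_subset_Ici.mpr (le_of_lt hT₀t₀)))
        · intro t ht
          have ht0 : (0:ℝ) < t := by
            have := le_of_lt (lt_of_le_of_lt hT₀2 ht)
            linarith [lt_of_le_of_lt hT₀2 ht]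
          exact (((hasDerivAt_id t).const_mul 4).add
            ((Real.hasDerivAt_sqrt (ne_of_gt ht0)).const_mul (8*C₄))).sub
            (hwd t (Ioi_subset_Ioi (le_of_lt hT₀t₀) ht))
        · intro t ht
          have ht2 : (2:ℝ) < t := lt_of_le_of_lt hT₀2 ht
          have ht0 : (0:ℝ) < t := by linarith
          have ht1 : (1:ℝ) ≤ t := by linarith
          have hG4 := hG₄ t (le_of_lt ht)
          have hinv : t^(-1:ℤ) = t⁻¹ := zpow_neg_one t
          rw [hinv] at hG4
          have hs0 : (0:ℝ) < Real.sqrt t := Real.sqrt_pos.mpr ht0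
          have hs1 : (1:ℝ) ≤ Real.sqrt t := by
            have := Real.sqrt_le_sqrt ht1
            rwa [Real.sqrt_one] at this
          have hst : Real.sqrt t ≤ t := by
            nlinarith [Real.sq_sqrt ht0.le]
          have h1 : C₄ * t⁻¹ ≤ C₄ * (Real.sqrt t)⁻¹ :=
            mul_le_mul_of_nonneg_left (inv_anti₀ hs0 hst) hC₄.le
          have h2 : 8*C₄*(1/(2*Real.sqrt t)) = 4*(C₄ * (Real.sqrt t)⁻¹) := by
            field_simp
            ring
          rw [h2]
          linarith
      -- conclude case B
      set B : ℝ := 8*C₄ + |4*T₀ + 8*C₄*Real.sqrt T₀ - w T₀| + |w t₂ - 4*t₂| + 1 with hBdef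
      have hBpos : 0 < B := by
        simp only [hBdef]
        positivity
      refine ⟨T₀, B, hBpos, le_of_lt hT₀t₀, by linarith, ?_⟩
      intro t ht
      have ht2 : (2:ℝ) ≤ t := le_trans hT₀2 ht
      have ht0 : (0:ℝ) < t := by linarith
      have ht1 : (1:ℝ) ≤ t := by linarith
      have hσT : 4*T₀ + 8*C₄*Real.sqrt T₀ - w T₀ ≤ 4*t + 8*C₄*Real.sqrt t - w t :=
        hσ self_mem_Ici (mem_Ici.mpr ht) ht
      have hlow : w t₂ - 4*t₂ ≤ w t - 4*t :=
        hwlow t (le_of_lt (lt_of_lt_of_le hT₀t₂ ht))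
      have hsrp : Real.sqrt t ≤ t ^ ((3:ℝ)/4) := by
        rw [Real.sqrt_eq_rpow]
        exact Real.rpow_le_rpow_of_exponent_le ht1 (by norm_num)
      have hs0 : (0:ℝ) ≤ Real.sqrt t := Real.sqrt_nonneg t
      have hrp1 : (1:ℝ) ≤ t ^ ((3:ℝ)/4) := by
        calc (1:ℝ) = 1 ^ ((3:ℝ)/4) := (Real.one_rpow _).symm
          _ ≤ t ^ ((3:ℝ)/4) := Real.rpow_le_rpow (by norm_num) ht1 (by norm_num)
      rw [abs_le]
      have hA1 := le_abs_self (4*T₀ + 8*C₄*Real.sqrt T₀ - w T₀)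
      have hA2 := neg_abs_le (4*T₀ + 8*C₄*Real.sqrt T₀ - w T₀)
      have hB1 := le_abs_self (w t₂ - 4*t₂)
      have hB2 := neg_abs_le (w t₂ - 4*t₂)
      have habs1 := abs_nonneg (4*T₀ + 8*C₄*Real.sqrt T₀ - w T₀)
      have habs2 := abs_nonneg (w t₂ - 4*t₂)
      constructor
      · -- lower : -B t^{3/4} ≤ w t - 4t
        have h5 : (0:ℝ) ≤ (t ^ ((3:ℝ)/4) - 1) * B := mul_nonneg (by linarith) hBpos.le
        nlinarith
      · -- upper : w t - 4t ≤ B t^{3/4}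
        have h5 : (0:ℝ) ≤ (t ^ ((3:ℝ)/4) - 1) * B := mul_nonneg (by linarith) hBpos.le
        have h6 : 8*C₄*Real.sqrt t ≤ 8*C₄* t ^ ((3:ℝ)/4) := by
          apply mul_le_mul_of_nonneg_left hsrp (by positivity)
        nlinarith
    · -- Case A : G always negative
      push_neg at hcase
      have hGt₁ : -1 < G t₁ := by
        have h1 : 0 < (h t₁)^3 * d1 t₁ := by
          have := hpos t₁ (le_of_lt ht₁)
          positivity
        simp only [hGdef]
        linarith
      have hGlb : ∀ t, t₁ ≤ t → -(Real.exp t₁) * Real.exp (-t) ≤ G t := by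
        intro t ht
        have hmem₁ : t₁ ∈ Ici t₀ := le_of_lt ht₁
        have hmem : t ∈ Ici t₀ := le_trans (le_of_lt ht₁) ht
        have hE : Real.exp t₁ * G t₁ ≤ Real.exp t * G t := hEmono hmem₁ hmem ht
        have he : (0:ℝ) < Real.exp t := Real.exp_pos t
        have he₁ : (0:ℝ) < Real.exp t₁ := Real.exp_pos t₁
        have h2 : -(Real.exp t₁) ≤ G t * Real.exp t := by
          nlinarith [mul_pos he₁ (by linarith : (0:ℝ) < G t₁ + 1), mul_comm (G t) (Real.exp t)]
        have h3 : -(Real.exp t₁) * Real.exp (-t) = (-(Real.exp t₁)) / Real.exp t := by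
          rw [Real.exp_neg, div_eq_mul_inv]
        rw [h3]
        exact (div_le_iff₀ he).mpr h2
      -- upper bound : w t - 4t antitone
      have hu : AntitoneOn (fun t => w t - 4*t) (Ici t₁) := by
        apply antiIci ((hwc.mono hIci₁).sub (continuousOn_const.mul continuousOn_id))
          (f' := fun t => 4*(G t + 1) - 4*1)
        · intro t ht
          exact (hwd t (hIoi₁ ht)).sub ((hasDerivAt_id t).const_mul 4)
        · intro t ht
          have := hcase t (hIoi₁ ht)
          linarith
      -- lower bound
      have hv : MonotoneOn (fun t => w t - 4*t - 4*Real.exp t₁ * Real.exp (-t)) (Ici t₁) := by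
        apply monoIci
        · apply (((hwc.mono hIci₁).sub (continuousOn_const.mul continuousOn_id)).sub
            (continuousOn_const.mul (Real.continuous_exp.comp continuous_neg).continuousOn))
        · intro t ht
          have hexpneg : HasDerivAt (fun s : ℝ => Real.exp (-s)) (-Real.exp (-t)) t := by
            have := (Real.hasDerivAt_exp (-t)).comp t (hasDerivAt_neg t)
            refine this.congr_deriv ?_
            ring
          exact ((hwd t (hIoi₁ ht)).sub ((hasDerivAt_id t).const_mul 4)).sub
            (hexpneg.const_mul (4*Real.exp t₁))
        · intro t ht
          have h1 := hGlb t (le_of_lt ht)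
          have he : (0:ℝ) < Real.exp (-t) := Real.exp_pos _
          have he₁ : (0:ℝ) < Real.exp t₁ := Real.exp_pos t₁
          simp only [mul_one]
          nlinarith
      set Ca : ℝ := |w t₁ - 4*t₁| + |w t₁ - 4*t₁ - 4*Real.exp t₁ * Real.exp (-t₁)| + 1
        with hCadef
      have hCapos : 0 < Ca := by
        simp only [hCadef]
        positivity
      refine ⟨max t₁ 1, Ca, hCapos, le_trans (le_of_lt ht₁) (le_max_left _ _),
        le_max_right _ _, ?_⟩
      intro t ht
      have htt₁ : t₁ ≤ t := le_trans (le_max_left _ _) ht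
      have ht1 : (1:ℝ) ≤ t := le_trans (le_max_right _ _) ht
      have hub : w t - 4*t ≤ w t₁ - 4*t₁ := hu self_mem_Ici htt₁ htt₁
      have hlb : w t₁ - 4*t₁ - 4*Real.exp t₁ * Real.exp (-t₁)
          ≤ w t - 4*t - 4*Real.exp t₁ * Real.exp (-t) := hv self_mem_Ici htt₁ htt₁
      have hrp1 : (1:ℝ) ≤ t ^ ((3:ℝ)/4) := by
        calc (1:ℝ) = 1 ^ ((3:ℝ)/4) := (Real.one_rpow _).symm
          _ ≤ t ^ ((3:ℝ)/4) := Real.rpow_le_rpow (by norm_num) ht1 (by norm_num)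
      have he : (0:ℝ) < Real.exp (-t) := Real.exp_pos _
      have he₁ : (0:ℝ) < Real.exp t₁ := Real.exp_pos t₁
      rw [abs_le]
      constructor
      · have h2 := neg_abs_le (w t₁ - 4*t₁ - 4*Real.exp t₁ * Real.exp (-t₁))
        have h4 : (0:ℝ) ≤ Real.exp t₁ * Real.exp (-t) := (mul_pos he₁ he).le
        have h5 : (0:ℝ) ≤ (t ^ ((3:ℝ)/4) - 1) * Ca :=
          mul_nonneg (by linarith) hCapos.le
        have h6 := abs_nonneg (w t₁ - 4*t₁)
        nlinarith
      · have h1 := le_abs_self (w t₁ - 4*t₁)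
        have h5 : (0:ℝ) ≤ (t ^ ((3:ℝ)/4) - 1) * Ca :=
          mul_nonneg (by linarith) hCapos.le
        have h6 := abs_nonneg (w t₁ - 4*t₁ - 4*Real.exp t₁ * Real.exp (-t₁))
        nlinarith
  -- conclude
  obtain ⟨T, C, hC, hTt₀, hT1, hWb⟩ := HW
  rw [Asymptotics.isBigO_iff]
  refine ⟨C/2, ?_⟩
  filter_upwards [eventually_ge_atTop T] with t ht
  have ht1 : (1:ℝ) ≤ t := le_trans hT1 ht
  have ht0 : (0:ℝ) < t := by linarith
  have htt₀ : t₀ ≤ t := le_trans hTt₀ ht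
  have hx : 0 < h t := hpos t htt₀
  have hq : (0:ℝ) < t ^ ((1:ℝ)/4) := Real.rpow_pos_of_pos ht0 _
  have hs2 : (1:ℝ) ≤ Real.sqrt 2 := by
    rw [show (1:ℝ) = Real.sqrt 1 by simp]
    exact Real.sqrt_le_sqrt (by norm_num)
  have hy : 0 < Real.sqrt 2 * t ^ ((1:ℝ)/4) := by positivity
  set y := Real.sqrt 2 * t ^ ((1:ℝ)/4) with hydef
  have hq4 : (t ^ ((1:ℝ)/4))^(4:ℕ) = t := by
    rw [← Real.rpow_natCast (t ^ ((1:ℝ)/4)) 4, ← Real.rpow_mul ht0.le]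
    norm_num
  have hq3 : (t ^ ((1:ℝ)/4))^(3:ℕ) = t ^ ((3:ℝ)/4) := by
    rw [← Real.rpow_natCast (t ^ ((1:ℝ)/4)) 3, ← Real.rpow_mul ht0.le]
    norm_num
  have hs4 : (Real.sqrt 2)^(4:ℕ) = 4 := by
    rw [show (4:ℕ) = 2*2 from rfl, pow_mul, Real.sq_sqrt (by norm_num : (0:ℝ) ≤ 2)]
    norm_num
  have hy4 : y^(4:ℕ) = 4 * t := by
    rw [hydef, mul_pow, hs4, hq4]
  have htp : (0:ℝ) < t ^ ((3:ℝ)/4) := Real.rpow_pos_of_pos ht0 _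
  have hy3 : 2 * t ^ ((3:ℝ)/4) ≤ y^(3:ℕ) := by
    rw [hydef, mul_pow, hq3]
    have hsq : (Real.sqrt 2)^2 = 2 := Real.sq_sqrt (by norm_num)
    have hs3 : (Real.sqrt 2)^(3:ℕ) = 2 * Real.sqrt 2 := by
      rw [pow_succ, hsq]
    rw [hs3]
    nlinarith
  set x := h t with hxdef
  have hfac : x^4 - y^4 = (x - y)*(x^3 + x^2*y + x*y^2 + y^3) := by ring
  have hsumpos : 0 < x^3 + x^2*y + x*y^2 + y^3 := by positivity
  have habs : |x - y| * y^3 ≤ |x^4 - y^4| := by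
    rw [hfac, abs_mul, abs_of_pos hsumpos]
    have h1 : y^3 ≤ x^3 + x^2*y + x*y^2 + y^3 := by
      have h2 : 0 ≤ x^3 + x^2*y + x*y^2 := by positivity
      linarith
    exact mul_le_mul_of_nonneg_left h1 (abs_nonneg _)
  have hw4 : |x^4 - y^4| ≤ C * t ^ ((3:ℝ)/4) := by
    rw [hy4]
    exact hWb t ht
  have hfin : |x - y| ≤ C/2 := by nlinarith [abs_nonneg (x - y)]
  simpa [Real.norm_eq_abs] using hfin
end

section
/- Let g be the left maximal solution of (1 − (3/4)z·g(z) − z²·g'(z))·g(z) = 1 with g(z₀) = g₀, where z₀ > 0 and g₀ > 0. Then g is defined and positive on (0, z₀], and lim_{z→0⁺} g(z) = 1. -/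
open Set Filter Topology

set_option maxHeartbeats 2000000

private lemma barrier_lo (g : ℝ → ℝ) (a r c : ℝ) (har : a ≤ r)
    (hcont : ContinuousOn g (Icc a r))
    (hdiff : ∀ z ∈ Icc a r, DifferentiableAt ℝ g z)
    (hc : ∀ z ∈ Icc a r, g z ≤ c → deriv g z < 0)
    (hga : g a ≤ c) (hgr : c < g r) : False := by
  set S := {z ∈ Icc a r | g z ≤ c} with hS
  have hSne : S.Nonempty := ⟨a, ⟨⟨le_rfl, har⟩, hga⟩⟩
  have hScl : IsClosed S := by
    have : S = Icc a r ∩ g ⁻¹' (Iic c) := by ext z; simp [hS, and_comm]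
    rw [this]
    exact hcont.preimage_isClosed_of_isClosed isClosed_Icc isClosed_Iic
  have hSbd : BddAbove S := ⟨r, fun x hx => hx.1.2⟩
  set b := sSup S with hb
  have hbS : b ∈ S := hScl.csSup_mem hSne hSbd
  have hbr : b < r := by
    rcases lt_or_eq_of_le hbS.1.2 with h | h
    · exact h
    · exact absurd hgr (by rw [← h]; exact not_lt.mpr hbS.2)
  have hderiv : HasDerivAt g (deriv g b) b := (hdiff b hbS.1).hasDerivAt
  have hslope : 0 ≤ deriv g b := by
    rw [hasDerivAt_iff_tendsto_slope] at hderiv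
    have hd' : Tendsto (slope g b) (𝓝[>] b) (𝓝 (deriv g b)) :=
      hderiv.mono_left (nhdsWithin_mono _ fun x hx => ne_of_gt hx)
    refine ge_of_tendsto hd' ?_
    filter_upwards [Ioc_mem_nhdsGT_of_mem ⟨le_rfl, hbr⟩] with z hz
    have hgz : ¬ g z ≤ c := fun h =>
      absurd (le_csSup hSbd ⟨⟨hbS.1.1.trans hz.1.le, hz.2⟩, h⟩) (not_le.mpr hz.1)
    rw [slope_def_field]
    have : g b ≤ g z := le_of_lt (lt_of_le_of_lt hbS.2 (not_le.mp hgz))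
    exact div_nonneg (by linarith) (by linarith [hz.1])
  exact absurd hslope (not_le.mpr (hc b hbS.1 hbS.2))

private lemma barrier_hi (g : ℝ → ℝ) (a r c : ℝ) (har : a ≤ r)
    (hcont : ContinuousOn g (Icc a r))
    (hdiff : ∀ z ∈ Icc a r, DifferentiableAt ℝ g z)
    (hc : ∀ z ∈ Icc a r, c ≤ g z → 0 < deriv g z)
    (hga : c ≤ g a) (hgr : g r < c) : False := by
  set S := {z ∈ Icc a r | c ≤ g z} with hS
  have hSne : S.Nonempty := ⟨a, ⟨⟨le_rfl, har⟩, hga⟩⟩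
  have hScl : IsClosed S := by
    have : S = Icc a r ∩ g ⁻¹' (Ici c) := by ext z; simp [hS, and_comm]
    rw [this]
    exact hcont.preimage_isClosed_of_isClosed isClosed_Icc isClosed_Ici
  have hSbd : BddAbove S := ⟨r, fun x hx => hx.1.2⟩
  set b := sSup S with hb
  have hbS : b ∈ S := hScl.csSup_mem hSne hSbd
  have hbr : b < r := by
    rcases lt_or_eq_of_le hbS.1.2 with h | h
    · exact h
    · exact absurd hgr (by rw [← h]; exact not_lt.mpr hbS.2)
  have hderiv : HasDerivAt g (deriv g b) b := (hdiff b hbS.1).hasDerivAt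
  have hslope : deriv g b ≤ 0 := by
    rw [hasDerivAt_iff_tendsto_slope] at hderiv
    have hd' : Tendsto (slope g b) (𝓝[>] b) (𝓝 (deriv g b)) :=
      hderiv.mono_left (nhdsWithin_mono _ fun x hx => ne_of_gt hx)
    refine le_of_tendsto hd' ?_
    filter_upwards [Ioc_mem_nhdsGT_of_mem ⟨le_rfl, hbr⟩] with z hz
    have hgz : ¬ c ≤ g z := fun h =>
      absurd (le_csSup hSbd ⟨⟨hbS.1.1.trans hz.1.le, hz.2⟩, h⟩) (not_le.mpr hz.1)
    rw [slope_def_field]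
    have : g z ≤ g b := le_of_lt (lt_of_lt_of_le (not_le.mp hgz) hbS.2)
    exact div_nonpos_of_nonpos_of_nonneg (by linarith) (by linarith [hz.1])
  exact absurd hslope (not_le.mpr (hc b hbS.1 hbS.2))

/-- The left maximal solution `g` of `(1 − (3/4) z g − z² g') g = 1`, `g z₀ = g₀`
(with `z₀ > 0`, `g₀ > 0`) is defined and positive on `(0, z₀]`, and `g(z) → 1`
as `z → 0⁺`.  Formally: if `g` solves the equation on `(γ, z₀]` with `γ ≥ 0` and
cannot be extended as a solution to any larger interval `(γ', z₀]` with
`γ' < γ`, then `γ = 0`, `g > 0` on `(0, z₀]`, and `g → 1` at `0⁺`. -/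
theorem stmt_5 (z₀ g₀ γ : ℝ) (hz₀ : 0 < z₀) (hg₀ : 0 < g₀)
    (g : ℝ → ℝ) (hγ : 0 ≤ γ) (hγz : γ < z₀) (hinit : g z₀ = g₀)
    (hsol : ∀ z ∈ Ioc γ z₀, DifferentiableAt ℝ g z ∧
      (1 - 3 / 4 * z * g z - z ^ 2 * deriv g z) * g z = 1)
    (hmax : ¬ ∃ γ' : ℝ, ∃ g' : ℝ → ℝ, γ' < γ ∧ g' z₀ = g₀ ∧
      (∀ z ∈ Ioc γ z₀, g' z = g z) ∧
      (∀ z ∈ Ioc γ' z₀, DifferentiableAt ℝ g' z ∧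
        (1 - 3 / 4 * z * g' z - z ^ 2 * deriv g' z) * g' z = 1)) :
    γ = 0 ∧ (∀ z ∈ Ioc (0 : ℝ) z₀, 0 < g z) ∧
      Tendsto g (nhdsWithin 0 (Ioi 0)) (nhds 1) := by
  -- basic facts
  have hcont : ContinuousOn g (Ioc γ z₀) := fun z hz =>
    (hsol z hz).1.continuousAt.continuousWithinAt
  have hne : ∀ z ∈ Ioc γ z₀, g z ≠ 0 := by
    intro z hz h0
    have := (hsol z hz).2
    rw [h0] at this; simp at this
  have hpos : ∀ z ∈ Ioc γ z₀, 0 < g z := by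
    intro z hz
    by_contra h
    have hlt : g z < 0 := lt_of_le_of_ne (not_lt.mp h) (hne z hz)
    have hsub : Icc z z₀ ⊆ Ioc γ z₀ := fun w hw => ⟨lt_of_lt_of_le hz.1 hw.1, hw.2⟩
    have hiv := intermediate_value_Icc hz.2 (hcont.mono hsub)
    have h0 : (0 : ℝ) ∈ Icc (g z) (g z₀) := ⟨hlt.le, by rw [hinit]; exact hg₀.le⟩
    obtain ⟨w, hw, hgw⟩ := hiv h0
    exact hne w (hsub hw) hgw
  have hderiv_eq : ∀ z ∈ Ioc γ z₀,
      deriv g z = (1 - (g z)⁻¹) / z ^ 2 - 3 / 4 * g z / z := by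
    intro z hz
    have hzpos : 0 < z := lt_of_le_of_lt hγ hz.1
    have hgz := hpos z hz
    have h := (hsol z hz).2
    field_simp at h ⊢
    nlinarith [h, sq_nonneg z, sq_nonneg (g z)]
  set m : ℝ := min 1 g₀ with hm
  have hmpos : 0 < m := lt_min one_pos hg₀
  have hm1 : m ≤ 1 := min_le_left _ _
  have hlow : ∀ z ∈ Ioc γ z₀, m ≤ g z := by
    intro a ha
    by_contra h
    push_neg at h
    have hsub : Icc a z₀ ⊆ Ioc γ z₀ := fun w hw => ⟨lt_of_lt_of_le ha.1 hw.1, hw.2⟩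
    refine barrier_lo g a z₀ (g a) ha.2 (hcont.mono hsub)
      (fun w hw => (hsol w (hsub hw)).1) ?_ le_rfl
      (by rw [hinit]; exact lt_of_lt_of_le h (min_le_right 1 g₀))
    intro w hw hgw
    have hw' := hsub hw
    have hwpos : 0 < w := lt_of_le_of_lt hγ hw'.1
    have hgpos := hpos w hw'
    have hglt1 : g w < 1 := lt_of_le_of_lt hgw (lt_of_lt_of_le h hm1)
    have hinv : 1 < (g w)⁻¹ := (one_lt_inv₀ hgpos).mpr hglt1
    rw [hderiv_eq w hw']
    have h1 : (1 - (g w)⁻¹) / w ^ 2 < 0 :=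
      div_neg_of_neg_of_pos (by linarith) (by positivity)
    have h2 : 0 < 3 / 4 * g w / w := by positivity
    linarith
  set K : ℝ := g₀ ^ 4 * z₀ ^ 3 + 4 * z₀ ^ 2 with hK
  have hphi : ∀ z ∈ Ioc γ z₀, (g z) ^ 4 * z ^ 3 ≤ K := by
    intro a ha
    have hapos : 0 < a := lt_of_le_of_lt hγ ha.1
    have hsub : Icc a z₀ ⊆ Ioc γ z₀ := fun w hw => ⟨lt_of_lt_of_le ha.1 hw.1, hw.2⟩
    set ψ : ℝ → ℝ := fun z => (g z) ^ 4 * z ^ 3 + 4 * z₀ * z with hψ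
    have hmono : MonotoneOn ψ (Icc a z₀) := by
      apply monotoneOn_of_deriv_nonneg (convex_Icc a z₀)
      · exact (((hcont.mono hsub).pow 4).mul ((continuous_pow 3).continuousOn)).add
          ((continuous_const.mul continuous_id).continuousOn)
      · intro z hz
        rw [interior_Icc] at hz
        have hz' := hsub (Ioo_subset_Icc_self hz)
        exact ((((hsol z hz').1.pow 4).mul (differentiableAt_pow 3)).add
          ((differentiableAt_fun_id.const_mul _))).differentiableWithinAt
      · intro z hz
        rw [interior_Icc] at hz
        have hz' := hsub (Ioo_subset_Icc_self hz)
        have hzpos : 0 < z := lt_of_le_of_lt hγ hz'.1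
        have hgpos := hpos z hz'
        have hgd : HasDerivAt g (deriv g z) z := (hsol z hz').1.hasDerivAt
        have h1 : HasDerivAt ψ
            ((4 * g z ^ 3 * deriv g z) * z ^ 3 + g z ^ 4 * (3 * z ^ 2) + 4 * z₀ * 1) z := by
          have := ((hgd.pow 4).mul (hasDerivAt_pow 3 z)).add ((hasDerivAt_id z).const_mul (4 * z₀))
          refine this.congr_deriv ?_
          norm_num
        have hval : deriv ψ z = 4 * z * ((g z) ^ 3 - (g z) ^ 2) + 4 * z₀ := by
          rw [h1.deriv, hderiv_eq z hz']
          field_simp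
          ring
        rw [hval]
        rcases le_or_gt (g z) 1 with hg1 | hg1
        · have hsq : g z ^ 2 ≤ 1 := by nlinarith
          have h3 : g z ^ 2 * (1 - g z) ≤ 1 := by nlinarith
          have h4 : z * (g z ^ 2 * (1 - g z)) ≤ z * 1 :=
            mul_le_mul_of_nonneg_left h3 hzpos.le
          nlinarith [hz.2]
        · have h3 : 0 ≤ g z ^ 3 - g z ^ 2 := by nlinarith
          nlinarith [mul_nonneg hzpos.le h3]
    have := hmono (⟨le_rfl, ha.2⟩ : a ∈ Icc a z₀) ⟨ha.2, le_rfl⟩ ha.2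
    simp only [hψ, hinit] at this
    nlinarith [mul_pos (mul_pos (by norm_num : (0:ℝ) < 4) hz₀) hapos]
  have hKpos : 0 < K := by positivity
  -- Part A : γ = 0, by extending the solution otherwise
  have hgam : γ = 0 := by
    by_contra hγ0
    have hγpos : 0 < γ := lt_of_le_of_ne hγ (Ne.symm hγ0)
    -- upper bound M
    set M : ℝ := max 1 (K / γ ^ 3) with hMdef
    have hM1 : (1:ℝ) ≤ M := le_max_left _ _
    have hgM : ∀ z ∈ Ioc γ z₀, g z ≤ M := by
      intro z hz
      rcases le_or_gt (g z) 1 with h | h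
      · exact h.trans hM1
      · have hzpos : 0 < z := hγpos.trans hz.1
        have h1 : g z ≤ g z ^ 4 := by nlinarith [sq_nonneg (g z - 1), sq_nonneg (g z), sq_nonneg (g z + 1), sq_nonneg (g z ^ 2 - 1)]
        have h2 : g z ^ 4 ≤ K / z ^ 3 :=
          (le_div_iff₀ (pow_pos hzpos 3)).mpr (hphi z hz)
        have h3 : K / z ^ 3 ≤ K / γ ^ 3 :=
          div_le_div_of_nonneg_left hKpos.le (pow_pos hγpos 3)
            (pow_le_pow_left₀ hγpos.le hz.1.le 3)
        calc g z ≤ K / γ ^ 3 := by linarith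
          _ ≤ M := le_max_right _ _
    -- the modified (clamped) vector field
    set ρ : ℝ → ℝ := fun x => max x (m / 2) with hρdef
    set τ : ℝ → ℝ := fun z => max z (γ / 2) with hτdef
    set v : ℝ → ℝ → ℝ := fun z x => (1 - (ρ x)⁻¹) / (τ z) ^ 2 - 3 / 4 * x / τ z with hvdef
    have hτge : ∀ z, γ / 2 ≤ τ z := fun z => le_max_right _ _
    have hτpos : ∀ z, 0 < τ z := fun z => lt_of_lt_of_le (by linarith) (hτge z)
    have hρge : ∀ x, m / 2 ≤ ρ x := fun x => le_max_right _ _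
    have hρpos : ∀ x, 0 < ρ x := fun x => lt_of_lt_of_le (by linarith) (hρge x)
    have hveq : ∀ z ∈ Ioc γ z₀, v z (g z) = deriv g z := by
      intro z hz
      have h1 : τ z = z := max_eq_left (by linarith [hz.1])
      have h2 : ρ (g z) = g z := max_eq_left (by linarith [hlow z hz])
      rw [hvdef, hderiv_eq z hz]
      simp only [h1, h2]
    -- Lipschitz constant
    set K₁ : ℝ := 4 / γ ^ 2 * (4 / m ^ 2) + 3 / 4 * (2 / γ) with hK₁def
    have hK₁pos : 0 < K₁ := by positivity
    have hlip : ∀ t, LipschitzWith K₁.toNNReal (v t) := by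
      intro t
      apply LipschitzWith.of_dist_le_mul
      intro x y
      rw [Real.dist_eq, Real.dist_eq, Real.coe_toNNReal _ hK₁pos.le]
      have hρx := hρge x
      have hρy := hρge y
      have hρxp := hρpos x
      have hρyp := hρpos y
      have hT := hτge t
      have hTp := hτpos t
      have h1 : |(ρ y)⁻¹ - (ρ x)⁻¹| ≤ 4 / m ^ 2 * |x - y| := by
        have e : (ρ y)⁻¹ - (ρ x)⁻¹ = (ρ x - ρ y) / (ρ x * ρ y) := by
          field_simp
        rw [e, abs_div]
        have h2 : |ρ x - ρ y| ≤ |x - y| := abs_max_sub_max_le_abs x y (m / 2)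
        have h3 : m ^ 2 / 4 ≤ |ρ x * ρ y| := by
          rw [abs_of_pos (mul_pos hρxp hρyp)]
          nlinarith
        calc |ρ x - ρ y| / |ρ x * ρ y| ≤ |x - y| / (m ^ 2 / 4) :=
              div_le_div₀ (abs_nonneg _) h2 (by positivity) h3
          _ = 4 / m ^ 2 * |x - y| := by field_simp
      have e2 : v t x - v t y = ((ρ y)⁻¹ - (ρ x)⁻¹) / (τ t) ^ 2 - 3 / 4 * (x - y) / τ t := by
        rw [hvdef]; ring
      have hinv2 : ((τ t) ^ 2)⁻¹ ≤ 4 / γ ^ 2 := by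
        have h4 : γ ^ 2 / 4 ≤ (τ t) ^ 2 := by nlinarith
        have h5 : ((τ t) ^ 2)⁻¹ ≤ (γ ^ 2 / 4)⁻¹ :=
          inv_anti₀ (by positivity) h4
        rwa [inv_div] at h5
      have hX : |((ρ y)⁻¹ - (ρ x)⁻¹) / (τ t) ^ 2| ≤ 4 / m ^ 2 * |x - y| * (4 / γ ^ 2) := by
        rw [abs_div, abs_of_pos (pow_pos hTp 2), div_eq_mul_inv]
        calc |(ρ y)⁻¹ - (ρ x)⁻¹| * ((τ t) ^ 2)⁻¹ ≤ (4 / m ^ 2 * |x - y|) * (4 / γ ^ 2) := by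
              apply mul_le_mul h1 hinv2 (by positivity) (by positivity)
          _ = 4 / m ^ 2 * |x - y| * (4 / γ ^ 2) := by ring
      have hY : |3 / 4 * (x - y) / τ t| ≤ 3 / 4 * |x - y| * (2 / γ) := by
        rw [abs_div, abs_of_pos hTp, abs_mul]
        have h6 : |(3:ℝ) / 4| = 3 / 4 := by norm_num
        rw [h6, div_eq_mul_inv]
        have h7 : (τ t)⁻¹ ≤ 2 / γ := by
          have := inv_anti₀ (by linarith : (0:ℝ) < γ / 2) hT
          rwa [inv_div] at this
        apply mul_le_mul le_rfl h7 (by positivity) (by positivity)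
      calc |v t x - v t y| = |(((ρ y)⁻¹ - (ρ x)⁻¹) / (τ t) ^ 2) - (3 / 4 * (x - y) / τ t)| := by
            rw [e2]
        _ ≤ |((ρ y)⁻¹ - (ρ x)⁻¹) / (τ t) ^ 2| + |3 / 4 * (x - y) / τ t| := abs_sub _ _
        _ ≤ 4 / m ^ 2 * |x - y| * (4 / γ ^ 2) + 3 / 4 * |x - y| * (2 / γ) := by
            linarith
        _ = K₁ * |x - y| := by rw [hK₁def]; ring
    have hτinv : ∀ t, (τ t)⁻¹ ≤ 2 / γ := by
      intro t
      have := inv_anti₀ (by linarith : (0:ℝ) < γ / 2) (hτge t)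
      rwa [inv_div] at this
    have hτinv2 : ∀ t, ((τ t) ^ 2)⁻¹ ≤ 4 / γ ^ 2 := by
      intro t
      have h4 : γ ^ 2 / 4 ≤ (τ t) ^ 2 := by nlinarith [hτge t, hτpos t]
      have h5 := inv_anti₀ (by positivity : (0:ℝ) < γ ^ 2 / 4) h4
      rwa [inv_div] at h5
    have hρinv : ∀ x, (ρ x)⁻¹ ≤ 2 / m := by
      intro x
      have := inv_anti₀ (by linarith : (0:ℝ) < m / 2) (hρge x)
      rwa [inv_div] at this
    -- bound on the vector field
    set C₀ : ℝ := (1 + 2 / m) * (4 / γ ^ 2) + 3 / 4 * (M + 1) * (2 / γ) with hC₀def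
    have hC₀pos : 0 < C₀ := by
      have h1 : 0 < 2 / m := by positivity
      have h2 : 0 < 4 / γ ^ 2 := by positivity
      have h3 : 0 < 2 / γ := by positivity
      have h4 : 0 < M + 1 := by linarith
      positivity
    have hvb : ∀ t x, |x| ≤ M + 1 → |v t x| ≤ C₀ := by
      intro t x hx
      have hρxp := hρpos x
      have hTp := hτpos t
      have h1 : |1 - (ρ x)⁻¹| ≤ 1 + 2 / m := by
        have h2 := hρinv x
        have h3 : 0 < (ρ x)⁻¹ := inv_pos.mpr hρxp
        rw [abs_le]
        constructor <;> [linarith; linarith]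
      have hX : |(1 - (ρ x)⁻¹) / (τ t) ^ 2| ≤ (1 + 2 / m) * (4 / γ ^ 2) := by
        rw [abs_div, abs_of_pos (pow_pos hTp 2), div_eq_mul_inv]
        exact mul_le_mul h1 (hτinv2 t) (by positivity) (by positivity)
      have hY : |3 / 4 * x / τ t| ≤ 3 / 4 * (M + 1) * (2 / γ) := by
        rw [abs_div, abs_of_pos hTp, abs_mul, div_eq_mul_inv]
        have h6 : |(3:ℝ) / 4| = 3 / 4 := by norm_num
        rw [h6]
        apply mul_le_mul
        · exact mul_le_mul le_rfl hx (abs_nonneg _) (by norm_num)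
        · exact hτinv t
        · positivity
        · positivity
      calc |v t x| = |((1 - (ρ x)⁻¹) / (τ t) ^ 2) - (3 / 4 * x / τ t)| := by rw [hvdef]
        _ ≤ |(1 - (ρ x)⁻¹) / (τ t) ^ 2| + |3 / 4 * x / τ t| := abs_sub _ _
        _ ≤ C₀ := by rw [hC₀def]; linarith
    -- choose the Picard interval
    set ε₀ : ℝ := min (min γ ((z₀ - γ) / 2)) (1 / (C₀ + 1)) with hε₀def
    have hε₀pos : 0 < ε₀ :=
      lt_min (lt_min hγpos (by linarith)) (by positivity)
    have hε₀γ : ε₀ ≤ γ := (min_le_left _ _).trans (min_le_left _ _)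
    have hε₀z : ε₀ ≤ (z₀ - γ) / 2 := (min_le_left _ _).trans (min_le_right _ _)
    have hε₀C : ε₀ ≤ 1 / (C₀ + 1) := min_le_right _ _
    set c : ℝ := γ + ε₀ / 2 with hcdef
    have hγc : γ < c := by rw [hcdef]; linarith
    have hcz₀ : c ≤ z₀ := by rw [hcdef]; linarith
    have hcmem : c ∈ Ioc γ z₀ := ⟨hγc, hcz₀⟩
    have htMin : γ / 2 ≤ c - ε₀ := by rw [hcdef]; linarith
    have htMinγ : c - ε₀ < γ := by rw [hcdef]; linarith
    have htMax : c + ε₀ ≤ z₀ := by rw [hcdef]; linarith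
    have hgcM : g c ≤ M := hgM c hcmem
    have hgcm : m ≤ g c := hlow c hcmem
    -- Picard–Lindelöf
    have hpl : IsPicardLindelof v (tmin := c - ε₀) (tmax := c + ε₀) ⟨c, by constructor <;> linarith⟩
        (g c) 1 0 ⟨C₀, hC₀pos.le⟩ K₁.toNNReal :=
      { lipschitzOnWith := fun t _ => (hlip t).lipschitzOnWith
        continuousOn := fun x _ => by
          apply Continuous.continuousOn
          apply Continuous.sub
          · exact continuous_const.div ((continuous_id.max continuous_const).pow 2)
              (fun t => (pow_pos (hτpos t) 2).ne')
          · exact continuous_const.div (continuous_id.max continuous_const)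
              (fun t => (hτpos t).ne')
        norm_le := fun t _ x hx => by
          rw [Real.norm_eq_abs]
          apply hvb
          have h1 : |x - g c| ≤ 1 := by
            rw [← Real.dist_eq]; exact_mod_cast Metric.mem_closedBall.mp hx
          have h2 : |g c| ≤ M := by
            rw [abs_of_pos (by linarith : 0 < g c)]; exact hgcM
          calc |x| = |(x - g c) + g c| := by ring_nf
            _ ≤ |x - g c| + |g c| := abs_add_le _ _
            _ ≤ M + 1 := by linarith
        mul_max_le := by
          show C₀ * max (c + ε₀ - c) (c - (c - ε₀)) ≤ ((1:NNReal):ℝ) - ((0:NNReal):ℝ)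
          rw [NNReal.coe_one, NNReal.coe_zero, sub_zero]
          have : max (c + ε₀ - c) (c - (c - ε₀)) = ε₀ := by
            simp
          rw [this]
          have h1 : C₀ * ε₀ ≤ C₀ * (1 / (C₀ + 1)) :=
            mul_le_mul_of_nonneg_left hε₀C hC₀pos.le
          have h2 : C₀ * (1 / (C₀ + 1)) < 1 := by
            rw [mul_one_div, div_lt_one (by linarith)]
            linarith
          exact (h1.trans_lt h2).le }
    obtain ⟨f, hfc, hfd⟩ := hpl.exists_eq_forall_mem_Icc_hasDerivWithinAt₀
    have hfderiv : ∀ z ∈ Ioo (c - ε₀) (c + ε₀), HasDerivAt f (v z (f z)) z := fun z hz =>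
      (hfd z (Ioo_subset_Icc_self hz)).hasDerivAt (Icc_mem_nhds hz.1 hz.2)
    -- backward uniqueness: f = g on (γ, c]
    have huniq : ∀ w ∈ Ioc γ c, f w = g w := by
      intro a ha
      have hsubf : Icc a c ⊆ Icc (c - ε₀) (c + ε₀) := fun w hw =>
        ⟨by linarith [hw.1, ha.1, htMinγ], by linarith [hw.2, hε₀pos]⟩
      have hsubg : Icc a c ⊆ Ioc γ z₀ := fun w hw =>
        ⟨lt_of_lt_of_le ha.1 hw.1, hw.2.trans hcz₀⟩
      have key : EqOn f g (Icc a c) := by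
        apply ODE_solution_unique_of_mem_Icc_left
          (v := v) (s := fun _ => univ) (K := K₁.toNNReal)
          (fun t _ => (hlip t).lipschitzOnWith)
          (fun w hw => ((hfd w (hsubf hw)).continuousWithinAt).mono (hsubf))
          (fun t ht => (hfderiv t ⟨by linarith [ht.1, ha.1, htMinγ],
            by linarith [ht.2, hε₀pos]⟩).hasDerivWithinAt)
          (fun t _ => mem_univ _)
          (hcont.mono hsubg)
          ?_
          (fun t _ => mem_univ _)
          hfc
        intro t ht
        have ht' : t ∈ Ioc γ z₀ := ⟨lt_of_lt_of_le ha.1 ht.1.le, ht.2.trans hcz₀⟩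
        have hd := (hsol t ht').1.hasDerivAt
        rw [← hveq t ht'] at hd
        exact hd.hasDerivWithinAt
      exact key ⟨le_rfl, ha.2⟩
    -- continuity of f at γ and positivity nearby
    have hγIoo : γ ∈ Ioo (c - ε₀) (c + ε₀) := ⟨htMinγ, by linarith [hε₀pos]⟩
    have hfγd := hfderiv γ hγIoo
    have hfcont : ContinuousAt f γ := hfγd.differentiableAt.continuousAt
    have hfγ : m ≤ f γ := by
      have ht : Tendsto f (𝓝[>] γ) (𝓝 (f γ)) :=
        (hfcont.tendsto).mono_left nhdsWithin_le_nhds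
      refine ge_of_tendsto ht ?_
      filter_upwards [Ioo_mem_nhdsGT hγc] with w hw
      rw [huniq w ⟨hw.1, hw.2.le⟩]
      exact hlow w ⟨hw.1, hw.2.le.trans hcz₀⟩
    have hev : ∀ᶠ w in 𝓝 γ, m / 2 < f w :=
      hfcont.tendsto.eventually (eventually_gt_nhds (by linarith))
    obtain ⟨θ, hθpos, hθ⟩ := Metric.eventually_nhds_iff.mp hev
    -- the extension point
    set γ' : ℝ := max (γ - θ / 2) (c - ε₀) with hγ'def
    have hγ'lt : γ' < γ := max_lt (by linarith) htMinγ
    have hγ'ge : c - ε₀ ≤ γ' := le_max_right _ _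
    have hγ'θ : γ - θ / 2 ≤ γ' := le_max_left _ _
    have hγ'pos : 0 < γ' := lt_of_lt_of_le (by linarith) (htMin.trans hγ'ge)
    -- the glued function
    set G : ℝ → ℝ := fun z => if γ < z then g z else f z with hGdef
    have hGg : ∀ z ∈ Ioc γ z₀, G z = g z := fun z hz => if_pos hz.1
    have hGf : ∀ w ∈ Iio c, G w = f w := by
      intro w hw
      rcases le_or_gt w γ with h | h
      · exact if_neg (not_lt.mpr h)
      · have : G w = g w := if_pos h
        rw [this]
        exact (huniq w ⟨h, le_of_lt hw⟩).symm
    apply hmax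
    refine ⟨γ', G, hγ'lt, ?_, hGg, ?_⟩
    · rw [hGg z₀ ⟨hγz, le_rfl⟩, hinit]
    intro z hz
    rcases le_or_gt z γ with hzγ | hzγ
    · -- the new part: G = f near z
      have hzc : z < c := lt_of_le_of_lt hzγ hγc
      have hev' : G =ᶠ[𝓝 z] f := eventually_of_mem (Iio_mem_nhds hzc) hGf
      have hzIoo : z ∈ Ioo (c - ε₀) (c + ε₀) :=
        ⟨lt_of_le_of_lt hγ'ge hz.1, by linarith [hε₀pos]⟩
      have hfz := hfderiv z hzIoo
      have hdiffG : DifferentiableAt ℝ G z :=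
        (hev'.differentiableAt_iff).mpr hfz.differentiableAt
      have hzpos : 0 < z := lt_trans hγ'pos hz.1
      have hfzm : m / 2 < f z := by
        apply hθ
        rw [Real.dist_eq, abs_of_nonpos (by linarith)]
        have : γ - z < γ - γ' := by linarith [hz.1]
        linarith
      have hderivG : deriv G z = v z (f z) := by
        rw [hev'.deriv_eq, hfz.deriv]
      have hGz : G z = f z := hGf z hzc
      refine ⟨hdiffG, ?_⟩
      rw [hGz, hderivG]
      have hτz : τ z = z := max_eq_left (le_of_lt (lt_of_le_of_lt (htMin.trans hγ'ge) hz.1))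
      have hρf : ρ (f z) = f z := max_eq_left (by linarith)
      rw [hvdef]
      simp only [hτz, hρf]
      have hfne : f z ≠ 0 := by linarith
      field_simp
      ring
    · -- the old part: G = g near z
      have hz' : z ∈ Ioc γ z₀ := ⟨hzγ, hz.2⟩
      have hev' : G =ᶠ[𝓝 z] g :=
        eventually_of_mem (Ioi_mem_nhds hzγ) (fun w hw => if_pos hw)
      have hdiffG : DifferentiableAt ℝ G z :=
        (hev'.differentiableAt_iff).mpr (hsol z hz').1
      refine ⟨hdiffG, ?_⟩
      rw [hGg z hz', hev'.deriv_eq]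
      exact (hsol z hz').2
  subst hgam
  refine ⟨rfl, hpos, ?_⟩
  -- Part B : the limit at 0⁺
  rw [Metric.tendsto_nhdsWithin_nhds]
  intro ε hε
  set ε' : ℝ := min (ε / 2) (1 / 2) with hε'def
  have hε'pos : 0 < ε' := lt_min (by linarith) (by norm_num)
  have hε'lt : ε' < 1 := lt_of_le_of_lt (min_le_right _ _) (by norm_num)
  have hε'le : ε' < ε := lt_of_le_of_lt (min_le_left _ _) (by linarith)
  set η : ℝ := ε' / (2 * (1 + ε')) with hηdef
  have hηpos : 0 < η := by positivity
  set δ' : ℝ := min z₀ ((4 * η / 3) ^ 4 / K) with hδ'def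
  have hδ'pos : 0 < δ' := lt_min hz₀ (by positivity)
  have hδ'le : δ' ≤ z₀ := min_le_left _ _
  have hsubδ : Ioc 0 δ' ⊆ Ioc 0 z₀ := Ioc_subset_Ioc_right hδ'le
  -- the weight bound
  have hGz : ∀ z ∈ Ioc 0 δ', 3 / 4 * (g z * z) ≤ η := by
    intro z hz
    have hz' := hsubδ hz
    have h1 : (g z * z) ^ 4 ≤ (4 * η / 3) ^ 4 := by
      have h2 : (g z * z) ^ 4 = (g z) ^ 4 * z ^ 3 * z := by ring
      have h3 : (g z) ^ 4 * z ^ 3 * z ≤ K * z :=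
        mul_le_mul_of_nonneg_right (hphi z hz') hz.1.le
      have h4 : K * z ≤ K * δ' := mul_le_mul_of_nonneg_left hz.2 hKpos.le
      have h5 : K * δ' ≤ (4 * η / 3) ^ 4 := by
        rw [hδ'def]
        calc K * min z₀ ((4 * η / 3) ^ 4 / K) ≤ K * ((4 * η / 3) ^ 4 / K) :=
              mul_le_mul_of_nonneg_left (min_le_right _ _) hKpos.le
          _ = (4 * η / 3) ^ 4 := by field_simp
      rw [← h2] at h3
      exact h3.trans (h4.trans h5)
    have h6 : g z * z ≤ 4 * η / 3 :=
      le_of_pow_le_pow_left₀ (by norm_num) (by positivity) h1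
    linarith
  -- derivative bounds in the two regions
  have hup : ∀ z ∈ Ioc 0 δ', 1 + ε' < g z → η / z ^ 2 ≤ deriv g z := by
    intro z hz hg1
    have hz' := hsubδ hz
    have hzpos := hz.1
    have hgpos := hpos z hz'
    have hinv : (g z)⁻¹ ≤ (1 + ε')⁻¹ := by
      apply inv_anti₀ (by linarith) hg1.le
    have h2η : 2 * η ≤ 1 - (g z)⁻¹ := by
      have : (1 : ℝ) - (1 + ε')⁻¹ = 2 * η := by
        rw [hηdef]; field_simp; ring
      linarith
    have h34 : 3 / 4 * g z / z = 3 / 4 * (g z * z) / z ^ 2 := by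
      field_simp
    rw [hderiv_eq z hz', h34, div_sub_div_same]
    apply div_le_div_of_nonneg_right ?_ (by positivity)
    · linarith [hGz z hz]
  have hdown : ∀ z ∈ Ioc 0 z₀, g z < 1 - ε' → deriv g z ≤ -(ε' / z ^ 2) := by
    intro z hz hg1
    have hzpos := hz.1
    have hgpos := hpos z hz
    have hinv : (1 - ε')⁻¹ ≤ (g z)⁻¹ := by
      apply inv_anti₀ hgpos hg1.le
    have hkey : 1 - (g z)⁻¹ ≤ -ε' := by
      have h1 : (1 : ℝ) - (1 - ε')⁻¹ ≤ -ε' := by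
        rw [sub_le_iff_le_add]
        have h2 : (1 : ℝ) ≤ (1 - ε') * (1 - ε')⁻¹ + 0 := by
          rw [mul_inv_cancel₀ (by linarith : (1:ℝ) - ε' ≠ 0)]; norm_num
        nlinarith [inv_pos.mpr (by linarith : (0:ℝ) < 1 - ε')]
      linarith
    have h2 : (1 - (g z)⁻¹) / z ^ 2 ≤ -ε' / z ^ 2 :=
      div_le_div_of_nonneg_right hkey (by positivity)
    rw [hderiv_eq z hz]
    have h3 : 0 ≤ 3 / 4 * g z / z := by positivity
    rw [neg_div] at h2
    linarith
  -- there is a point where g ≤ 1+ε'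
  have hz₁ex : ∃ z₁ ∈ Ioc 0 δ', g z₁ ≤ 1 + ε' := by
    by_contra hno
    push_neg at hno
    set B : ℝ := g δ' + η * δ'⁻¹ with hBdef
    have hδ'mem : δ' ∈ Ioc 0 δ' := ⟨hδ'pos, le_rfl⟩
    have hBpos : 0 < B := by
      have := hpos δ' (hsubδ hδ'mem)
      have : 0 < η * δ'⁻¹ := by positivity
      positivity
    set a : ℝ := min δ' (η / (B + 1)) with hadef
    have hapos : 0 < a := lt_min hδ'pos (by positivity)
    have haδ : a ≤ δ' := min_le_left _ _
    have hsuba : Icc a δ' ⊆ Ioc 0 δ' := fun w hw => ⟨lt_of_lt_of_le hapos hw.1, hw.2⟩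
    set ψ : ℝ → ℝ := fun z => g z + η * z⁻¹ with hψdef
    have hψd : ∀ z ∈ Ioc 0 δ', HasDerivAt ψ (deriv g z + η * (-(z ^ 2)⁻¹)) z := by
      intro z hz
      exact ((hsol z (hsubδ hz)).1.hasDerivAt).add ((hasDerivAt_inv hz.1.ne').const_mul η)
    have hmono : MonotoneOn ψ (Icc a δ') := by
      apply monotoneOn_of_deriv_nonneg (convex_Icc a δ')
      · exact fun w hw => ((hψd w (hsuba hw)).continuousAt).continuousWithinAt
      · intro w hw
        rw [interior_Icc] at hw
        exact (hψd w (hsuba (Ioo_subset_Icc_self hw))).differentiableAt.differentiableWithinAt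
      · intro w hw
        rw [interior_Icc] at hw
        have hw' := hsuba (Ioo_subset_Icc_self hw)
        rw [(hψd w hw').deriv]
        have h1 := hup w hw' (hno w hw')
        have h2 : η * (-(w ^ 2)⁻¹) = -(η / w ^ 2) := by
          rw [div_eq_mul_inv]; ring
        rw [h2]
        linarith
    have hcmp := hmono ⟨le_rfl, haδ⟩ ⟨haδ, le_rfl⟩ haδ
    have hψa : ψ a = g a + η * a⁻¹ := rfl
    have hBval : ψ δ' = B := rfl
    have hB1 : B + 1 ≤ η * a⁻¹ := by
      have ha2 : a ≤ η / (B + 1) := min_le_right _ _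
      have hB1pos : 0 < B + 1 := by linarith
      have h : (B + 1) * a ≤ η := by
        rw [mul_comm]
        exact (le_div_iff₀ hB1pos).mp ha2
      rw [← div_eq_mul_inv]
      exact (le_div_iff₀ hapos).mpr h
    have hga := hpos a (hsubδ ⟨hapos, haδ⟩)
    rw [hψa, hBval] at hcmp
    linarith
  obtain ⟨z₁, hz₁mem, hz₁⟩ := hz₁ex
  have hsub₁ : Ioc 0 z₁ ⊆ Ioc 0 δ' := Ioc_subset_Ioc_right hz₁mem.2
  -- there is a point below z₁ where g ≥ 1-ε'
  have hz₂ex : ∃ z₂ ∈ Ioc 0 z₁, 1 - ε' ≤ g z₂ := by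
    by_contra hno
    push_neg at hno
    set a : ℝ := min z₁ (ε' / (1 + ε' * z₁⁻¹)) with hadef
    have hz₁pos : 0 < z₁ := hz₁mem.1
    have hd1 : 0 < 1 + ε' * z₁⁻¹ := by positivity
    have hapos : 0 < a := lt_min hz₁pos (by positivity)
    have haz : a ≤ z₁ := min_le_left _ _
    have hsuba : Icc a z₁ ⊆ Ioc 0 z₁ := fun w hw => ⟨lt_of_lt_of_le hapos hw.1, hw.2⟩
    set ψ : ℝ → ℝ := fun z => g z - ε' * z⁻¹ with hψdef
    have hψd : ∀ z ∈ Ioc 0 z₁, HasDerivAt ψ (deriv g z - ε' * (-(z ^ 2)⁻¹)) z := by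
      intro z hz
      exact ((hsol z (hsubδ (hsub₁ hz))).1.hasDerivAt).sub
        ((hasDerivAt_inv hz.1.ne').const_mul ε')
    have hanti : AntitoneOn ψ (Icc a z₁) := by
      apply antitoneOn_of_deriv_nonpos (convex_Icc a z₁)
      · exact fun w hw => ((hψd w (hsuba hw)).continuousAt).continuousWithinAt
      · intro w hw
        rw [interior_Icc] at hw
        exact (hψd w (hsuba (Ioo_subset_Icc_self hw))).differentiableAt.differentiableWithinAt
      · intro w hw
        rw [interior_Icc] at hw
        have hw' := hsuba (Ioo_subset_Icc_self hw)
        rw [(hψd w hw').deriv]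
        have h1 := hdown w (hsubδ (hsub₁ hw')) (hno w hw')
        have h2 : ε' * (-(w ^ 2)⁻¹) = -(ε' / w ^ 2) := by
          rw [div_eq_mul_inv]; ring
        rw [h2]
        linarith
    have hcmp := hanti ⟨le_rfl, haz⟩ ⟨haz, le_rfl⟩ haz
    have hψa : ψ z₁ ≤ ψ a := hcmp
    have hkey : 1 + ε' * z₁⁻¹ ≤ ε' * a⁻¹ := by
      have ha2 : a ≤ ε' / (1 + ε' * z₁⁻¹) := min_le_right _ _
      have h : (1 + ε' * z₁⁻¹) * a ≤ ε' := by
        rw [mul_comm]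
        exact (le_div_iff₀ hd1).mp ha2
      rw [← div_eq_mul_inv]
      exact (le_div_iff₀ hapos).mpr h
    have hga := hno a ⟨hapos, haz⟩
    have hgz₁ := hpos z₁ (hsubδ hz₁mem)
    simp only [hψdef] at hψa
    linarith
  obtain ⟨z₂, hz₂mem, hz₂⟩ := hz₂ex
  -- trapping on (0, z₂]
  have htrap : ∀ z ∈ Ioc 0 z₂, 1 - ε' ≤ g z ∧ g z ≤ 1 + ε' := by
    intro z hz
    have hzz₁ : z ≤ z₁ := hz.2.trans hz₂mem.2
    have hzmem : z ∈ Ioc 0 z₀ := ⟨hz.1, hzz₁.trans (hz₁mem.2.trans hδ'le)⟩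
    constructor
    · by_contra h
      push_neg at h
      have hsubz : Icc z z₂ ⊆ Ioc 0 z₀ := fun w hw =>
        ⟨lt_of_lt_of_le hz.1 hw.1, hw.2.trans (hz₂mem.2.trans (hz₁mem.2.trans hδ'le))⟩
      refine barrier_lo g z z₂ (g z) hz.2 (hcont.mono hsubz)
        (fun w hw => (hsol w (hsubz hw)).1) ?_ le_rfl (by linarith)
      intro w hw hgw
      have hw' := hsubz hw
      have h2 : (0:ℝ) < ε' / w ^ 2 := div_pos hε'pos (pow_pos hw'.1 2)
      linarith [hdown w hw' (by linarith : g w < 1 - ε')]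
    · by_contra h
      push_neg at h
      have hsubz : Icc z z₁ ⊆ Ioc 0 δ' := fun w hw =>
        ⟨lt_of_lt_of_le hz.1 hw.1, hw.2.trans hz₁mem.2⟩
      refine barrier_hi g z z₁ (g z) hzz₁ (hcont.mono fun w hw => hsubδ (hsubz hw))
        (fun w hw => (hsol w (hsubδ (hsubz hw))).1) ?_ le_rfl (by linarith)
      intro w hw hgw
      have hw' := hsubz hw
      have h1 := hup w hw' (by linarith)
      have h2 : (0:ℝ) < η / w ^ 2 := div_pos hηpos (pow_pos hw'.1 2)
      linarith
  -- conclude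
  refine ⟨z₂, hz₂mem.1, fun x hx hdx => ?_⟩
  rw [Real.dist_eq] at hdx ⊢
  have hxpos : (0:ℝ) < x := hx
  have hxz₂ : x ≤ z₂ := by
    rw [sub_zero, abs_of_pos hxpos] at hdx
    exact hdx.le
  obtain ⟨h1, h2⟩ := htrap x ⟨hxpos, hxz₂⟩
  have habs : |g x - 1| ≤ ε' := abs_le.mpr ⟨by linarith, by linarith⟩
  linarith
end

section
/- Let g be the left maximal solution of g'(z) = z⁻²(1 − 1/g(z)) − (3/4)g(z)/z with g(z₀) = g₀ > 0, z₀ > 0, which is positive on (0,z₀] with g(z) → 1 as z → 0⁺. Then g(z)² = 2 z^{−3/2} ∫₀ᶻ s^{−1/2} (g(s) − 1) ds for all z ∈ (0, z₀]. -/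
open Set Filter MeasureTheory

/-- If `g` solves `g' = z⁻²(1 − 1/g) − (3/4) g/z` on `(0, z₀]` with `g z₀ = g₀ > 0`,
positive on `(0, z₀]` and `g → 1` at `0⁺`, then
`g(z)² = 2 z^{−3/2} ∫₀ᶻ s^{−1/2}(g(s) − 1) ds` for all `z ∈ (0, z₀]`. -/
theorem stmt_6 (z₀ g₀ : ℝ) (hz₀ : 0 < z₀) (hg₀ : 0 < g₀)
    (g : ℝ → ℝ) (hinit : g z₀ = g₀)
    (hpos : ∀ z ∈ Ioc (0 : ℝ) z₀, 0 < g z)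
    (hsol : ∀ z ∈ Ioc (0 : ℝ) z₀,
      HasDerivAt g ((z ^ 2)⁻¹ * (1 - (g z)⁻¹) - 3 / 4 * g z / z) z)
    (hlim : Tendsto g (nhdsWithin 0 (Ioi 0)) (nhds 1)) :
    ∀ z ∈ Ioc (0 : ℝ) z₀,
      (g z) ^ 2 = 2 * z ^ (-(3 : ℝ) / 2) *
        ∫ s in (0 : ℝ)..z, s ^ (-(1 : ℝ) / 2) * (g s - 1) := by
  intro z hz
  obtain ⟨hz0, hzle⟩ := hz
  set h : ℝ → ℝ := fun s => s ^ (-(1:ℝ)/2) * (g s - 1) with hh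
  set F : ℝ → ℝ := fun t => t ^ ((3:ℝ)/2) * (g t) ^ 2 with hF
  have hgcont : ContinuousOn g (Ioc 0 z₀) := fun t ht =>
    ((hsol t ht).continuousAt).continuousWithinAt
  have hhcont : ContinuousOn h (Ioc 0 z₀) := fun s hs =>
    ((Real.continuousAt_rpow_const s _ (Or.inl hs.1.ne')).continuousWithinAt).mul
      ((hgcont s hs).sub continuousWithinAt_const)
  -- derivative of F
  have hFderiv : ∀ t ∈ Ioc (0:ℝ) z₀, HasDerivAt F (2 * h t) t := by
    intro t ht
    obtain ⟨ht0, htle⟩ := ht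
    have hgt := hpos t ⟨ht0, htle⟩
    have h1 : HasDerivAt (fun x : ℝ => x ^ ((3:ℝ)/2)) ((3:ℝ)/2 * t ^ ((3:ℝ)/2 - 1)) t :=
      Real.hasDerivAt_rpow_const (Or.inl ht0.ne')
    have h2 := (hsol t ⟨ht0, htle⟩).pow 2
    have hD := h1.mul h2
    convert hD using 1
    · rfl
    · rfl
    · rfl
    set A := t ^ ((1:ℝ)/2) with hA
    have hApos : 0 < A := Real.rpow_pos_of_pos ht0 _
    have hA2 : A ^ 2 = t := by
      rw [hA, ← Real.rpow_natCast (t ^ ((1:ℝ)/2)) 2, ← Real.rpow_mul ht0.le]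
      norm_num
    have h32 : t ^ ((3:ℝ)/2) = A ^ 3 := by
      rw [hA, ← Real.rpow_natCast (t ^ ((1:ℝ)/2)) 3, ← Real.rpow_mul ht0.le]
      norm_num
    have hm12 : t ^ (-(1:ℝ)/2) = A⁻¹ := by
      rw [hA, ← Real.rpow_neg_one (t ^ ((1:ℝ)/2)), ← Real.rpow_mul ht0.le]
      norm_num
    have h12 : t ^ ((3:ℝ)/2 - 1) = A := by
      rw [hA]; norm_num
    simp only [hh, hm12, h32, h12, Pi.pow_apply]
    push_cast
    rw [← hA2]
    have hgne : g (A ^ 2) ≠ 0 := by rw [hA2]; exact hgt.ne'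
    field_simp
    ring
  -- boundedness of g - 1 on (0, z₀]
  have hbdd : ∃ C, 0 ≤ C ∧ ∀ s ∈ Ioc (0:ℝ) z₀, |g s - 1| ≤ C := by
    rw [Metric.tendsto_nhdsWithin_nhds] at hlim
    obtain ⟨δ, hδ0, hδ⟩ := hlim 1 one_pos
    set c := min (δ/2) z₀ with hc
    have hc0 : 0 < c := lt_min (by linarith) hz₀
    obtain ⟨C, hC⟩ := isCompact_Icc.exists_bound_of_continuousOn
      (hgcont.mono (fun x hx => ⟨lt_of_lt_of_le hc0 hx.1, hx.2⟩))
    refine ⟨max (|C| + 1) 1, le_max_of_le_right zero_le_one, fun s hs => ?_⟩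
    by_cases hsc : s ≤ c
    · have hdist : dist (g s) 1 < 1 := by
        apply hδ hs.1
        rw [Real.dist_eq, sub_zero, abs_of_pos hs.1]
        calc s ≤ δ/2 := hsc.trans (min_le_left _ _)
          _ < δ := by linarith
      rw [Real.dist_eq] at hdist
      exact (hdist.le).trans (le_max_right _ _)
    · have hs' : s ∈ Icc c z₀ := ⟨le_of_not_ge hsc, hs.2⟩
      have h1 := hC s hs'
      rw [Real.norm_eq_abs] at h1
      have : |g s - 1| ≤ |g s| + 1 := by
        calc |g s - 1| ≤ |g s| + |(1:ℝ)| := abs_sub _ _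
          _ = |g s| + 1 := by norm_num
      refine this.trans (le_max_of_le_left ?_)
      have : |g s| ≤ |C| := h1.trans (le_abs_self C)
      linarith
  -- integrability of h on [0, y]
  have hint : IntervalIntegrable h volume 0 z := by
    obtain ⟨C, hC0, hC⟩ := hbdd
    rw [intervalIntegrable_iff, uIoc_of_le hz0.le]
    have hmeas : AEStronglyMeasurable h (volume.restrict (Ioc 0 z)) :=
      ContinuousOn.aestronglyMeasurable
        (hhcont.mono (fun x hx => ⟨hx.1, hx.2.trans hzle⟩)) measurableSet_Ioc
    have hdom : IntegrableOn (fun s : ℝ => C * s ^ (-(1:ℝ)/2)) (Ioc 0 z) := by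
      have hri : IntervalIntegrable (fun s : ℝ => s ^ (-(1:ℝ)/2)) volume 0 z :=
        intervalIntegral.intervalIntegrable_rpow' (by norm_num)
      rw [intervalIntegrable_iff, uIoc_of_le hz0.le] at hri
      exact hri.const_mul C
    refine hdom.mono' hmeas ?_
    filter_upwards [ae_restrict_mem measurableSet_Ioc] with s hs
    have hsr : (0:ℝ) ≤ s ^ (-(1:ℝ)/2) := Real.rpow_nonneg hs.1.le _
    rw [hh, Real.norm_eq_abs, abs_mul, abs_of_nonneg hsr]
    rw [mul_comm C _]
    exact mul_le_mul_of_nonneg_left (hC s ⟨hs.1, hs.2.trans hzle⟩) hsr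
  -- FTC on [a, z]
  have hFTC : ∀ a ∈ Ioc (0:ℝ) z, (∫ s in a..z, 2 * h s) = F z - F a := by
    intro a ha
    apply intervalIntegral.integral_eq_sub_of_hasDerivAt
    · intro t ht
      rw [uIcc_of_le ha.2] at ht
      exact hFderiv t ⟨lt_of_lt_of_le ha.1 ht.1, ht.2.trans hzle⟩
    · apply ContinuousOn.intervalIntegrable
      rw [uIcc_of_le ha.2]
      exact continuousOn_const.mul (hhcont.mono
        (fun s hs => ⟨lt_of_lt_of_le ha.1 hs.1, hs.2.trans hzle⟩))
  -- limits as a → 0⁺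
  have hFlim : Tendsto F (nhdsWithin 0 (Ioi 0)) (nhds 0) := by
    have h1 : Tendsto (fun t : ℝ => t ^ ((3:ℝ)/2)) (nhdsWithin 0 (Ioi 0)) (nhds 0) := by
      have := (Real.continuousAt_rpow_const 0 ((3:ℝ)/2) (Or.inr (by norm_num))).tendsto
      rw [Real.zero_rpow (by norm_num)] at this
      exact this.mono_left nhdsWithin_le_nhds
    have h2 : Tendsto (fun t => (g t) ^ 2) (nhdsWithin 0 (Ioi 0)) (nhds 1) := by
      simpa using hlim.pow 2
    simpa using h1.mul h2
  have hint2 : IntervalIntegrable (fun s => 2 * h s) volume 0 z := hint.const_mul 2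
  have hIlim : Tendsto (fun a => ∫ s in a..z, 2 * h s) (nhdsWithin 0 (Ioi 0))
      (nhds (∫ s in (0:ℝ)..z, 2 * h s)) := by
    have hprim : ContinuousOn (fun b => ∫ s in (0:ℝ)..b, 2 * h s) (uIcc (0:ℝ) z) :=
      intervalIntegral.continuousOn_primitive_interval' hint2 left_mem_uIcc
    have h0mem : (0:ℝ) ∈ uIcc (0:ℝ) z := left_mem_uIcc
    have hcw : ContinuousWithinAt (fun b => ∫ s in (0:ℝ)..b, 2 * h s) (uIcc (0:ℝ) z) 0 :=
      hprim 0 h0mem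
    have hten : Tendsto (fun a => ∫ s in (0:ℝ)..a, 2 * h s) (nhdsWithin 0 (Ioi 0)) (nhds 0) := by
      have : Tendsto (fun a => ∫ s in (0:ℝ)..a, 2 * h s)
          (nhdsWithin 0 (Ioc (0:ℝ) z)) (nhds (∫ s in (0:ℝ)..(0:ℝ), 2 * h s)) := by
        apply hcw.tendsto.mono_left
        apply nhdsWithin_mono
        rw [uIcc_of_le hz0.le]
        exact Ioc_subset_Icc_self
      rw [intervalIntegral.integral_same] at this
      rwa [nhdsWithin_Ioc_eq_nhdsGT hz0] at this
    -- ∫_a^z = ∫_0^z - ∫_0^a eventually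
    have ev : ∀ᶠ a in nhdsWithin 0 (Ioi 0),
        (∫ s in a..z, 2 * h s) = (∫ s in (0:ℝ)..z, 2 * h s) - ∫ s in (0:ℝ)..a, 2 * h s := by
      filter_upwards [Ioo_mem_nhdsGT_of_mem ⟨le_refl 0, hz0⟩] with a ha
      have h1 : IntervalIntegrable (fun s => 2 * h s) volume 0 a :=
        hint2.mono_set (by rw [uIcc_of_le hz0.le, uIcc_of_le ha.1.le]; exact Icc_subset_Icc le_rfl ha.2.le)
      have h2 : IntervalIntegrable (fun s => 2 * h s) volume a z :=
        hint2.mono_set (by rw [uIcc_of_le hz0.le, uIcc_of_le ha.2.le]; exact Icc_subset_Icc ha.1.le le_rfl)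
      have := intervalIntegral.integral_add_adjacent_intervals h1 h2
      linarith
    have : Tendsto (fun a => (∫ s in (0:ℝ)..z, 2 * h s) - ∫ s in (0:ℝ)..a, 2 * h s)
        (nhdsWithin 0 (Ioi 0)) (nhds ((∫ s in (0:ℝ)..z, 2 * h s) - 0)) :=
      tendsto_const_nhds.sub hten
    rw [sub_zero] at this
    exact this.congr' (ev.mono fun a ha => ha.symm)
  -- conclude F z = ∫_0^z 2h
  have key : F z = ∫ s in (0:ℝ)..z, 2 * h s := by
    have ev : ∀ᶠ a in nhdsWithin 0 (Ioi 0),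
        (fun _ : ℝ => F z) a = F a + ∫ s in a..z, 2 * h s := by
      filter_upwards [Ioo_mem_nhdsGT_of_mem ⟨le_refl 0, hz0⟩] with a ha
      have := hFTC a ⟨ha.1, ha.2.le⟩
      show F z = _
      linarith
    have h1 : Tendsto (fun a => F a + ∫ s in a..z, 2 * h s) (nhdsWithin 0 (Ioi 0))
        (nhds (0 + ∫ s in (0:ℝ)..z, 2 * h s)) := hFlim.add hIlim
    rw [zero_add] at h1
    exact tendsto_nhds_unique (tendsto_const_nhds.congr' ev) h1
  have hmul : z ^ (-(3:ℝ)/2) * z ^ ((3:ℝ)/2) = 1 := by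
    rw [← Real.rpow_add hz0]
    norm_num
  have hci : (∫ s in (0:ℝ)..z, 2 * h s) = 2 * ∫ s in (0:ℝ)..z, h s :=
    intervalIntegral.integral_const_mul 2 h
  calc (g z) ^ 2 = (z ^ (-(3:ℝ)/2) * z ^ ((3:ℝ)/2)) * (g z) ^ 2 := by rw [hmul, one_mul]
    _ = z ^ (-(3:ℝ)/2) * F z := by rw [hF]; ring
    _ = z ^ (-(3:ℝ)/2) * (2 * ∫ s in (0:ℝ)..z, h s) := by rw [key, hci]
    _ = 2 * z ^ (-(3:ℝ)/2) * ∫ s in (0:ℝ)..z, h s := by ring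
end

section
/- For every β ≥ 0, e^{−1/z} ∫_z¹ s^{β−2} e^{1/s} ds = O(z^β) as z → 0⁺. -/
open Set Filter

/-- For every `β ≥ 0`, `e^{−1/z} ∫_z¹ s^{β−2} e^{1/s} ds = O(z^β)` as `z → 0⁺`. -/
theorem stmt_7 (β : ℝ) (hβ : 0 ≤ β) :
    (fun z : ℝ => Real.exp (-(1 / z)) * ∫ s in z..1, s ^ (β - 2) * Real.exp (1 / s))
      =O[nhdsWithin 0 (Ioi 0)] (fun z : ℝ => z ^ β) := by
  set f : ℝ → ℝ := fun s => s ^ (β - 2) * Real.exp (1 / s) with hf_def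
  set F : ℝ → ℝ := fun s => s ^ β * Real.exp (1 / s) with hF_def
  -- basic continuity
  have hf_cont : ContinuousOn f (Ioi 0) := by
    intro s hs
    have hs0 : (0:ℝ) < s := hs
    exact ((Real.continuousAt_rpow_const s (β - 2) (Or.inl hs0.ne')).mul
      (Real.continuous_exp.continuousAt.comp
        ((continuousAt_const.div continuousAt_id hs0.ne')))).continuousWithinAt
  have hf_int : ∀ {c d : ℝ}, 0 < c → 0 < d → IntervalIntegrable f MeasureTheory.volume c d := by
    intro c d hc hd
    refine (hf_cont.mono ?_).intervalIntegrable
    intro x hx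
    exact lt_of_lt_of_le (lt_min hc hd) hx.1
  -- the derivative of -F
  have hderiv : ∀ s : ℝ, 0 < s →
      HasDerivAt (fun t => -(F t)) (f s * (1 - β * s)) s := by
    intro s hs
    have h1 : HasDerivAt (fun t : ℝ => t ^ β) (β * s ^ (β - 1)) s :=
      Real.hasDerivAt_rpow_const (Or.inl hs.ne')
    have hinv : HasDerivAt (fun t : ℝ => 1 / t) (-(s ^ 2)⁻¹) s := by
      simpa [one_div] using hasDerivAt_inv hs.ne'
    have h2 : HasDerivAt (fun t : ℝ => Real.exp (1 / t))
        (Real.exp (1 / s) * -(s ^ 2)⁻¹) s := (Real.hasDerivAt_exp (1 / s)).comp s hinv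
    have h3 := (h1.mul h2).neg
    have e1 : s ^ (β - 1) = s ^ (β - 2) * s := by
      rw [show β - 1 = (β - 2) + 1 by ring, Real.rpow_add_one hs.ne']
    have e2 : s ^ β = s ^ (β - 2) * s ^ 2 := by
      rw [show β = (β - 2) + 2 by ring, Real.rpow_add hs, Real.rpow_two]
      norm_num
    refine HasDerivAt.congr_deriv (f := fun t => -(F t)) h3 ?_
    rw [hf_def]
    simp only [e1, e2]
    field_simp
    ring
  -- the cutoff point
  set a : ℝ := min (1 / (2 * (β + 1))) 1 with ha_def
  have hβ1 : (0:ℝ) < β + 1 := by linarith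
  have ha0 : 0 < a := lt_min (by positivity) one_pos
  have ha1 : a ≤ 1 := min_le_right _ _
  have hβa : β * a ≤ 1 / 2 := by
    have h1 : a ≤ 1 / (2 * (β + 1)) := min_le_left _ _
    have h2 : β * a ≤ β * (1 / (2 * (β + 1))) := by
      apply mul_le_mul_of_nonneg_left h1 hβ
    have h3 : β * (1 / (2 * (β + 1))) ≤ 1 / 2 := by
      rw [mul_one_div, div_le_div_iff₀ (by positivity) (by norm_num : (0:ℝ) < 2)]
      nlinarith
    linarith
  set M : ℝ := (a ^ (β - 2) + 1) * Real.exp (1 / a) with hM_def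
  have hM0 : 0 ≤ M := by positivity
  -- f is nonneg on positives
  have hf_nonneg : ∀ s : ℝ, 0 < s → 0 ≤ f s := by
    intro s hs; exact mul_nonneg (Real.rpow_nonneg hs.le _) (Real.exp_pos _).le
  -- bound on the integral over [a,1]
  have hI2 : (∫ s in a..1, f s) ≤ M := by
    have hb : ∀ x ∈ Icc a 1, f x ≤ M := by
      intro x hx
      have hx0 : 0 < x := lt_of_lt_of_le ha0 hx.1
      have h1 : x ^ (β - 2) ≤ a ^ (β - 2) + 1 := by
        rcases le_or_gt β 2 with h | h
        · have := Real.rpow_le_rpow_of_nonpos ha0 hx.1 (by linarith : β - 2 ≤ 0)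
          linarith
        · have := Real.rpow_le_one hx0.le hx.2 (by linarith : (0:ℝ) ≤ β - 2)
          have h2 : (0:ℝ) ≤ a ^ (β - 2) := Real.rpow_nonneg ha0.le _
          linarith
      have h2 : Real.exp (1 / x) ≤ Real.exp (1 / a) :=
        Real.exp_le_exp.2 (by
          apply div_le_div_of_nonneg_left (by norm_num) ha0 hx.1)
      calc f x = x ^ (β - 2) * Real.exp (1 / x) := rfl
        _ ≤ (a ^ (β - 2) + 1) * Real.exp (1 / a) :=
            mul_le_mul h1 h2 (Real.exp_pos _).le (by positivity)
    calc (∫ s in a..1, f s) ≤ ∫ _ in a..1, M :=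
          intervalIntegral.integral_mono_on ha1 (hf_int ha0 one_pos)
            intervalIntegrable_const hb
      _ = (1 - a) * M := by simp [hM_def, one_div]; ring
      _ ≤ 1 * M := by nlinarith
      _ = M := one_mul M
  -- tendsto fact
  have hT : Tendsto (fun z : ℝ => z ^ β * Real.exp (1 / z)) (nhdsWithin 0 (Ioi 0)) atTop := by
    have h := (tendsto_exp_div_rpow_atTop β).comp
      (by simpa [one_div] using (tendsto_inv_nhdsGT_zero : Tendsto (fun x:ℝ => x⁻¹) (nhdsWithin 0 (Ioi 0)) atTop))
    refine h.congr' ?_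
    filter_upwards [self_mem_nhdsWithin] with z hz
    have hz0 : (0:ℝ) < z := hz
    simp only [Function.comp]
    rw [one_div, Real.inv_rpow hz0.le, div_eq_mul_inv, inv_inv, mul_comm]
  -- main estimate
  rw [Asymptotics.isBigO_iff]
  refine ⟨3, ?_⟩
  filter_upwards [self_mem_nhdsWithin, Ioc_mem_nhdsGT_of_mem (⟨le_refl 0, ha0⟩ : (0:ℝ) ∈ Ico 0 a),
    hT.eventually_ge_atTop M] with z hz hza hM
  have hz0 : (0:ℝ) < z := hz
  have hza' : z ≤ a := hza.2
  -- split
  have hsplit : (∫ s in z..1, f s) = (∫ s in z..a, f s) + ∫ s in a..1, f s :=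
    (intervalIntegral.integral_add_adjacent_intervals (hf_int hz0 ha0) (hf_int ha0 one_pos)).symm
  -- bound on [z,a]
  have hI1 : (∫ s in z..a, f s) ≤ 2 * (z ^ β * Real.exp (1 / z)) := by
    have hmono : (∫ s in z..a, f s) ≤ ∫ s in z..a, 2 * (f s * (1 - β * s)) := by
      apply intervalIntegral.integral_mono_on hza' (hf_int hz0 ha0)
      · apply IntervalIntegrable.const_mul
        refine (ContinuousOn.intervalIntegrable ?_)
        apply ContinuousOn.mul
        · refine hf_cont.mono ?_
          intro x hx; exact lt_of_lt_of_le (lt_min hz0 ha0) hx.1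
        · fun_prop
      · intro x hx
        have hx0 : 0 < x := lt_of_lt_of_le hz0 hx.1
        have hxa : β * x ≤ 1 / 2 := by
          have : β * x ≤ β * a := mul_le_mul_of_nonneg_left hx.2 hβ
          linarith
        have hfx : 0 ≤ f x := hf_nonneg x hx0
        nlinarith
    have heq : (∫ s in z..a, 2 * (f s * (1 - β * s)))
        = 2 * ((-(F a)) - (-(F z))) := by
      rw [intervalIntegral.integral_const_mul]
      congr 1
      refine intervalIntegral.integral_eq_sub_of_hasDerivAt
        (f := fun t => -(F t)) (f' := fun s => f s * (1 - β * s)) ?_ ?_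
      · intro x hx
        rw [Set.uIcc_of_le hza'] at hx
        exact hderiv x (lt_of_lt_of_le hz0 hx.1)
      · refine (ContinuousOn.intervalIntegrable ?_)
        apply ContinuousOn.mul
        · refine hf_cont.mono ?_
          intro x hx; exact lt_of_lt_of_le (lt_min hz0 ha0) hx.1
        · fun_prop
    have hFa : 0 ≤ F a := mul_nonneg (Real.rpow_nonneg ha0.le _) (Real.exp_pos _).le
    have : 2 * ((-(F a)) - (-(F z))) ≤ 2 * F z := by simp [hF_def] at hFa ⊢; nlinarith
    calc (∫ s in z..a, f s) ≤ ∫ s in z..a, 2 * (f s * (1 - β * s)) := hmono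
      _ = 2 * ((-(F a)) - (-(F z))) := heq
      _ ≤ 2 * F z := this
      _ = 2 * (z ^ β * Real.exp (1 / z)) := rfl
  have hInonneg : 0 ≤ ∫ s in z..1, f s := by
    apply intervalIntegral.integral_nonneg (le_trans hza' ha1)
    intro x hx
    exact hf_nonneg x (lt_of_lt_of_le hz0 hx.1)
  have hItot : (∫ s in z..1, f s) ≤ 3 * (z ^ β * Real.exp (1 / z)) := by
    rw [hsplit]
    have : (∫ s in a..1, f s) ≤ z ^ β * Real.exp (1 / z) := le_trans hI2 hM
    linarith
  have hnorm1 : ‖Real.exp (-(1 / z)) * ∫ s in z..1, f s‖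
      = Real.exp (-(1 / z)) * ∫ s in z..1, f s := by
    rw [Real.norm_eq_abs, abs_of_nonneg (mul_nonneg (Real.exp_pos _).le hInonneg)]
  rw [hnorm1, Real.norm_eq_abs, abs_of_nonneg (Real.rpow_nonneg hz0.le _)]
  calc Real.exp (-(1 / z)) * ∫ s in z..1, f s
      ≤ Real.exp (-(1 / z)) * (3 * (z ^ β * Real.exp (1 / z))) :=
        mul_le_mul_of_nonneg_left hItot (Real.exp_pos _).le
    _ = 3 * z ^ β * (Real.exp (-(1 / z)) * Real.exp (1 / z)) := by ring
    _ = 3 * z ^ β := by rw [← Real.exp_add]; simp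
end

section
/- Let δ > 0 and ν ∈ ℝ. Then for every n ∈ ℕ, z^{−ν} e^{−1/z} ∫_z^δ s^{ν−2} e^{1/s} ds = Σ_{j=0}^{n−1} (ν)_j z^j + O(z^n) as z → 0⁺, where (ν)_j = ν(ν+1)⋯(ν+j−1) is the rising Pochhammer symbol with (ν)₀ = 1. -/
open Set Filter Finset

private lemma myIntegrable (α : ℝ) {a b : ℝ} (ha : 0 < a) (hb : 0 < b) :
    IntervalIntegrable (fun s : ℝ => s ^ α * Real.exp (1 / s))
      MeasureTheory.volume a b := by
  apply ContinuousOn.intervalIntegrable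
  intro s hs
  have hs0 : 0 < s := lt_of_lt_of_le (lt_min ha hb) hs.1
  exact ((Real.continuousAt_rpow_const s α (Or.inl hs0.ne')).mul
    ((Real.continuous_exp.continuousAt).comp
      (continuousAt_const.div continuousAt_id hs0.ne'))).continuousWithinAt

private lemma myDeriv (α : ℝ) {s : ℝ} (hs : 0 < s) :
    HasDerivAt (fun t : ℝ => t ^ α * Real.exp (1 / t))
      ((α * s ^ (α - 1) - s ^ (α - 2)) * Real.exp (1 / s)) s := by
  have h1 : HasDerivAt (fun t : ℝ => t ^ α) (α * s ^ (α - 1)) s :=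
    Real.hasDerivAt_rpow_const (Or.inl hs.ne')
  have h2 : HasDerivAt (fun t : ℝ => 1 / t) (-(s ^ 2)⁻¹) s := by
    simpa [one_div] using hasDerivAt_inv hs.ne'
  have h4 := h1.mul h2.exp
  refine h4.congr_deriv ?_
  have hpow : s ^ (α - 2) = s ^ α / s ^ (2 : ℕ) := by
    rw [Real.rpow_sub hs, show ((2 : ℝ)) = ((2 : ℕ) : ℝ) by norm_num, Real.rpow_natCast]
  have hs' : s ≠ 0 := hs.ne'
  rw [hpow]
  field_simp
  ring

private lemma myIBP (α : ℝ) {a b : ℝ} (ha : 0 < a) (hb : 0 < b) :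
    ∫ s in a..b, s ^ (α - 2) * Real.exp (1 / s)
      = a ^ α * Real.exp (1 / a) - b ^ α * Real.exp (1 / b)
        + α * ∫ s in a..b, s ^ (α - 1) * Real.exp (1 / s) := by
  have hderiv : ∀ s ∈ Set.uIcc a b, HasDerivAt (fun t : ℝ => t ^ α * Real.exp (1 / t))
      ((α * s ^ (α - 1) - s ^ (α - 2)) * Real.exp (1 / s)) s := fun s hs =>
    myDeriv α (lt_of_lt_of_le (lt_min ha hb) hs.1)
  have heq : (fun s : ℝ => (α * s ^ (α - 1) - s ^ (α - 2)) * Real.exp (1 / s))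
      = fun s : ℝ => α * (s ^ (α - 1) * Real.exp (1 / s)) - s ^ (α - 2) * Real.exp (1 / s) := by
    funext s; ring
  have hint : IntervalIntegrable
      (fun s : ℝ => (α * s ^ (α - 1) - s ^ (α - 2)) * Real.exp (1 / s))
      MeasureTheory.volume a b := by
    rw [heq]
    exact ((myIntegrable (α - 1) ha hb).const_mul α).sub (myIntegrable (α - 2) ha hb)
  have key := intervalIntegral.integral_eq_sub_of_hasDerivAt hderiv hint
  have hsplit : ∫ s in a..b, (α * s ^ (α - 1) - s ^ (α - 2)) * Real.exp (1 / s)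
      = α * (∫ s in a..b, s ^ (α - 1) * Real.exp (1 / s))
        - ∫ s in a..b, s ^ (α - 2) * Real.exp (1 / s) := by
    rw [heq, intervalIntegral.integral_sub
      ((myIntegrable (α - 1) ha hb).const_mul α) (myIntegrable (α - 2) ha hb),
      intervalIntegral.integral_const_mul]
  rw [hsplit] at key
  linarith

private lemma myExpand (ν : ℝ) {δ : ℝ} (hδ : 0 < δ) {z : ℝ} (hz : 0 < z) (n : ℕ) :
    ∫ s in z..δ, s ^ (ν - 2) * Real.exp (1 / s)
      = (∑ j ∈ range n, (∏ i ∈ range j, (ν + i)) *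
            (z ^ (ν + j) * Real.exp (1 / z) - δ ^ (ν + j) * Real.exp (1 / δ)))
        + (∏ i ∈ range n, (ν + i)) *
            ∫ s in z..δ, s ^ (ν + n - 2) * Real.exp (1 / s) := by
  induction n with
  | zero => simp
  | succ n ih =>
    rw [ih, Finset.sum_range_succ, Finset.prod_range_succ]
    have h := myIBP (ν + n) hz hδ
    have e2 : ν + ((n + 1 : ℕ) : ℝ) - 2 = ν + (n : ℝ) - 1 := by push_cast; ring
    rw [e2, h]
    ring

/-- For `δ > 0`, `ν ∈ ℝ` and every `n ∈ ℕ`,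
`z^{−ν} e^{−1/z} ∫_z^δ s^{ν−2} e^{1/s} ds = Σ_{j<n} (ν)_j z^j + O(z^n)` as `z → 0⁺`,
where `(ν)_j = ν(ν+1)⋯(ν+j−1)` is the rising factorial. -/
theorem stmt_8 (δ ν : ℝ) (hδ : 0 < δ) (n : ℕ) :
    (fun z : ℝ =>
        z ^ (-ν) * Real.exp (-(1 / z)) *
            (∫ s in z..δ, s ^ (ν - 2) * Real.exp (1 / s)) -
          ∑ j ∈ range n, (∏ i ∈ range j, (ν + i)) * z ^ j)
      =O[nhdsWithin 0 (Ioi 0)] (fun z : ℝ => z ^ n) := by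
  set P : ℕ → ℝ := fun j => ∏ i ∈ range j, (ν + i) with hPdef
  set z0 : ℝ := min δ (1 / (2 * (|ν| + n + 1))) with hz0def
  have hz0pos : 0 < z0 := lt_min hδ (by positivity)
  have hz0δ : z0 ≤ δ := min_le_left _ _
  have hz0small : (|ν| + n) * z0 ≤ 1 / 2 := by
    have h1 : z0 ≤ 1 / (2 * (|ν| + n + 1)) := min_le_right _ _
    have h2 : (0 : ℝ) ≤ |ν| + n := by positivity
    have h3 : (|ν| + n) * z0 ≤ (|ν| + n) * (1 / (2 * (|ν| + n + 1))) :=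
      mul_le_mul_of_nonneg_left h1 h2
    have h4 : (|ν| + n) * (1 / (2 * (|ν| + n + 1))) ≤ 1 / 2 := by
      rw [mul_one_div, div_le_div_iff₀ (by positivity) (by norm_num : (0:ℝ) < 2)]
      nlinarith
    linarith
  set K2 : ℝ := ∫ s in z0..δ, s ^ (ν + n - 2) * Real.exp (1 / s) with hK2def
  have hK2 : 0 ≤ K2 :=
    intervalIntegral.integral_nonneg hz0δ (fun s hs => by
      have hs0 : 0 < s := lt_of_lt_of_le hz0pos hs.1
      positivity)
  set C : ℝ := ∑ j ∈ range n, P j * (δ ^ (ν + (j : ℝ)) * Real.exp (1 / δ)) with hCdef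
  -- eventual smallness of z ^ (-(ν+n)) * exp (-(1/z))
  have hev3 : ∀ᶠ z in nhdsWithin (0:ℝ) (Ioi 0),
      z ^ (-(ν + (n : ℝ))) * Real.exp (-(1 / z)) < 1 := by
    have hinf : Tendsto (fun z : ℝ => 1 / z) (nhdsWithin 0 (Ioi 0)) atTop := by
      simpa [one_div] using tendsto_inv_nhdsGT_zero (𝕜 := ℝ)
    have htend := (tendsto_rpow_mul_exp_neg_mul_atTop_nhds_zero (ν + n) 1
      one_pos).comp hinf
    have hcongr : Tendsto (fun z : ℝ => z ^ (-(ν + (n : ℝ))) * Real.exp (-(1 / z)))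
        (nhdsWithin 0 (Ioi 0)) (nhds 0) := by
      apply htend.congr'
      filter_upwards [self_mem_nhdsWithin] with z hz
      have hz0 : 0 < z := hz
      simp only [Function.comp]
      rw [one_div, Real.inv_rpow hz0.le, ← Real.rpow_neg hz0.le]
      ring_nf
    exact hcongr.eventually_lt_const one_pos
  rw [Asymptotics.isBigO_iff]
  refine ⟨|C| + |P n| * (2 + K2), ?_⟩
  have hmem : Ioo (0:ℝ) z0 ∈ nhdsWithin (0:ℝ) (Ioi 0) := Ioo_mem_nhdsGT hz0pos
  filter_upwards [hmem, hev3] with z hz hgz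
  obtain ⟨hzpos, hzz0⟩ := hz
  set E : ℝ := z ^ (-ν) * Real.exp (-(1 / z)) with hEdef
  have hEpos : 0 < E := by
    have := Real.rpow_pos_of_pos hzpos (-ν)
    positivity
  have hterm : ∀ β : ℝ, E * (z ^ (ν + β) * Real.exp (1 / z)) = z ^ β := by
    intro β
    have h1 : z ^ (-ν) * z ^ (ν + β) = z ^ β := by
      rw [← Real.rpow_add hzpos]; ring_nf
    have h2 : Real.exp (-(1 / z)) * Real.exp (1 / z) = 1 := by
      rw [← Real.exp_add]; simp
    calc E * (z ^ (ν + β) * Real.exp (1 / z))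
        = (z ^ (-ν) * z ^ (ν + β)) * (Real.exp (-(1 / z)) * Real.exp (1 / z)) := by
          rw [hEdef]; ring
      _ = z ^ β := by rw [h1, h2, mul_one]
  set In : ℝ := ∫ s in z..δ, s ^ (ν + n - 2) * Real.exp (1 / s) with hIndef
  have hkey : z ^ (-ν) * Real.exp (-(1 / z)) *
        (∫ s in z..δ, s ^ (ν - 2) * Real.exp (1 / s)) -
        ∑ j ∈ range n, P j * z ^ j
      = P n * (E * In) - C * E := by
    simp only [hPdef, hCdef]
    rw [myExpand ν hδ hzpos n, ← hIndef]
    rw [mul_add, Finset.mul_sum]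
    have hjterm : ∀ j ∈ range n,
        E * ((∏ i ∈ range j, (ν + (i:ℝ))) * (z ^ (ν + (j : ℝ)) * Real.exp (1 / z)
            - δ ^ (ν + (j : ℝ)) * Real.exp (1 / δ)))
          = (∏ i ∈ range j, (ν + (i:ℝ))) * z ^ j - (∏ i ∈ range j, (ν + (i:ℝ))) * (δ ^ (ν + (j : ℝ)) * Real.exp (1 / δ)) * E := by
      intro j _
      have h := hterm (j : ℝ)
      calc E * ((∏ i ∈ range j, (ν + (i:ℝ))) * (z ^ (ν + (j : ℝ)) * Real.exp (1 / z)
            - δ ^ (ν + (j : ℝ)) * Real.exp (1 / δ)))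
          = (∏ i ∈ range j, (ν + (i:ℝ))) * (E * (z ^ (ν + (j : ℝ)) * Real.exp (1 / z)))
            - (∏ i ∈ range j, (ν + (i:ℝ))) * (δ ^ (ν + (j : ℝ)) * Real.exp (1 / δ)) * E := by ring
        _ = (∏ i ∈ range j, (ν + (i:ℝ))) * z ^ ((j : ℝ)) - (∏ i ∈ range j, (ν + (i:ℝ))) * (δ ^ (ν + (j : ℝ)) * Real.exp (1 / δ)) * E := by
            rw [h]
        _ = (∏ i ∈ range j, (ν + (i:ℝ))) * z ^ j - (∏ i ∈ range j, (ν + (i:ℝ))) * (δ ^ (ν + (j : ℝ)) * Real.exp (1 / δ)) * E := by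
            rw [Real.rpow_natCast]
    rw [Finset.sum_congr rfl hjterm, Finset.sum_sub_distrib, ← Finset.sum_mul]
    ring
  -- split In
  have hsplit : (∫ s in z..z0, s ^ (ν + n - 2) * Real.exp (1 / s)) + K2 = In := by
    rw [hK2def, hIndef]
    exact intervalIntegral.integral_add_adjacent_intervals
      (myIntegrable _ hzpos hz0pos) (myIntegrable _ hz0pos hδ)
  set J : ℝ := ∫ s in z..z0, s ^ (ν + n - 2) * Real.exp (1 / s) with hJdef
  have hJ0 : 0 ≤ J :=
    intervalIntegral.integral_nonneg hzz0.le (fun s hs => by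
      have hs0 : 0 < s := lt_of_lt_of_le hzpos hs.1
      positivity)
  have hJbound : J ≤ 2 * (z ^ (ν + (n : ℝ)) * Real.exp (1 / z)) := by
    have hIBP := myIBP (ν + n) hzpos hz0pos
    have hmono : (ν + n) * (∫ s in z..z0, s ^ (ν + (n : ℝ) - 1) * Real.exp (1 / s))
        ≤ (1 / 2) * J := by
      have hint1 := (myIntegrable (ν + (n : ℝ) - 1) hzpos hz0pos).const_mul (ν + (n : ℝ))
      have hint2 := (myIntegrable (ν + (n : ℝ) - 2) hzpos hz0pos).const_mul (1 / 2 : ℝ)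
      have hptwise : ∀ s ∈ Icc z z0,
          (ν + (n : ℝ)) * (s ^ (ν + (n : ℝ) - 1) * Real.exp (1 / s))
            ≤ (1 / 2) * (s ^ (ν + (n : ℝ) - 2) * Real.exp (1 / s)) := by
        intro s hs
        have hs0 : 0 < s := lt_of_lt_of_le hzpos hs.1
        have h1 : s ^ (ν + (n : ℝ) - 1) = s ^ (ν + (n : ℝ) - 2) * s := by
          rw [show ν + (n : ℝ) - 1 = (ν + (n : ℝ) - 2) + 1 by ring,
            Real.rpow_add_one hs0.ne']
        have h2 : (ν + (n : ℝ)) * s ≤ 1 / 2 := by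
          have ha : ν + (n : ℝ) ≤ |ν| + n := by
            have := le_abs_self ν; linarith
          have hb : (ν + (n : ℝ)) * s ≤ (|ν| + n) * s :=
            mul_le_mul_of_nonneg_right ha hs0.le
          have hc : (|ν| + n) * s ≤ (|ν| + n) * z0 :=
            mul_le_mul_of_nonneg_left hs.2 (by positivity)
          linarith
        have h3 : (0 : ℝ) ≤ s ^ (ν + (n : ℝ) - 2) * Real.exp (1 / s) := by positivity
        calc (ν + (n : ℝ)) * (s ^ (ν + (n : ℝ) - 1) * Real.exp (1 / s))
            = ((ν + (n : ℝ)) * s) * (s ^ (ν + (n : ℝ) - 2) * Real.exp (1 / s)) := by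
              rw [h1]; ring
          _ ≤ (1 / 2) * (s ^ (ν + (n : ℝ) - 2) * Real.exp (1 / s)) :=
              mul_le_mul_of_nonneg_right h2 h3
      have := intervalIntegral.integral_mono_on hzz0.le hint1 hint2 hptwise
      rw [intervalIntegral.integral_const_mul, intervalIntegral.integral_const_mul] at this
      rw [hJdef]
      exact this
    have hz0term : (0 : ℝ) ≤ z0 ^ (ν + (n : ℝ)) * Real.exp (1 / z0) := by positivity
    rw [← hJdef] at hIBP
    linarith
  have hEJ : E * J ≤ 2 * z ^ n := by
    calc E * J ≤ E * (2 * (z ^ (ν + (n : ℝ)) * Real.exp (1 / z))) :=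
          mul_le_mul_of_nonneg_left hJbound hEpos.le
      _ = 2 * (E * (z ^ (ν + (n : ℝ)) * Real.exp (1 / z))) := by ring
      _ = 2 * z ^ ((n : ℝ)) := by rw [hterm (n : ℝ)]
      _ = 2 * z ^ n := by rw [Real.rpow_natCast]
  have hEsmall : E ≤ z ^ n := by
    have hx : z ^ ((n : ℝ)) * z ^ (-(ν + (n : ℝ))) = z ^ (-ν) := by
      rw [← Real.rpow_add hzpos]; ring_nf
    have hE2 : E = z ^ n * (z ^ (-(ν + (n : ℝ))) * Real.exp (-(1 / z))) := by
      rw [hEdef, ← Real.rpow_natCast z n]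
      calc z ^ (-ν) * Real.exp (-(1 / z))
          = (z ^ ((n : ℝ)) * z ^ (-(ν + (n : ℝ)))) * Real.exp (-(1 / z)) := by rw [hx]
        _ = z ^ ((n : ℝ)) * (z ^ (-(ν + (n : ℝ))) * Real.exp (-(1 / z))) := by ring
    rw [hE2]
    calc z ^ n * (z ^ (-(ν + (n : ℝ))) * Real.exp (-(1 / z)))
        ≤ z ^ n * 1 := mul_le_mul_of_nonneg_left hgz.le (pow_nonneg hzpos.le n)
      _ = z ^ n := mul_one _
  have hzn : (0 : ℝ) ≤ z ^ n := pow_nonneg hzpos.le n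
  have hEK2 : E * K2 ≤ z ^ n * K2 := mul_le_mul_of_nonneg_right hEsmall hK2
  have hEIn : E * In ≤ (2 + K2) * z ^ n := by
    have : E * In = E * J + E * K2 := by rw [← hsplit]; ring
    rw [this]; nlinarith
  have hIn0 : 0 ≤ In := by rw [← hsplit]; positivity
  have hEIn0 : 0 ≤ E * In := mul_nonneg hEpos.le hIn0
  -- final assembly
  simp only [Real.norm_eq_abs]
  rw [hkey, abs_of_nonneg hzn]
  calc |P n * (E * In) - C * E| ≤ |P n * (E * In)| + |C * E| := abs_sub _ _
    _ = |P n| * (E * In) + |C| * E := by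
        rw [abs_mul (P n), abs_mul C, abs_of_nonneg hEIn0, abs_of_nonneg hEpos.le]
    _ ≤ |P n| * ((2 + K2) * z ^ n) + |C| * z ^ n := by
        have h1 : |P n| * (E * In) ≤ |P n| * ((2 + K2) * z ^ n) :=
          mul_le_mul_of_nonneg_left hEIn (abs_nonneg _)
        have h2 : |C| * E ≤ |C| * z ^ n :=
          mul_le_mul_of_nonneg_left hEsmall (abs_nonneg _)
        linarith
    _ = (|C| + |P n| * (2 + K2)) * z ^ n := by ring
end

section
/- For every n ∈ ℕ and δ > 0, ν ∈ ℝ, the identity e^{−1/z} ∫_z^δ s^{ν−2} e^{1/s} ds = −e^{1/δ − 1/z} Σ_{j=0}^{n−1} (ν)_j δ^{ν+j} + Σ_{j=0}^{n−1} (ν)_j z^{ν+j} + (ν)_n e^{−1/z} ∫_z^δ s^{ν+n−2} e^{1/s} ds holds for all z ∈ (0, δ). -/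
open Set Filter Finset

lemma cont_on (μ : ℝ) {z δ : ℝ} (hz : 0 < z) (hzδ : z ≤ δ) :
    IntervalIntegrable (fun s => s ^ μ * Real.exp (1 / s)) MeasureTheory.volume z δ := by
  apply ContinuousOn.intervalIntegrable
  have hpos : ∀ x ∈ Set.uIcc z δ, 0 < x := by
    intro x hx
    rw [Set.uIcc_of_le hzδ] at hx
    linarith [hx.1]
  apply ContinuousOn.mul
  · exact fun x hx => (Real.continuousAt_rpow_const x μ (Or.inl (hpos x hx).ne')).continuousWithinAt
  · exact Real.continuous_exp.comp_continuousOn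
      (ContinuousOn.div continuousOn_const continuousOn_id fun x hx => (hpos x hx).ne')

lemma ibp (μ : ℝ) {z δ : ℝ} (hz : 0 < z) (hzδ : z ≤ δ) :
    ∫ s in z..δ, s ^ (μ - 2) * Real.exp (1 / s)
      = z ^ μ * Real.exp (1 / z) - δ ^ μ * Real.exp (1 / δ)
        + μ * ∫ s in z..δ, s ^ (μ - 1) * Real.exp (1 / s) := by
  have i1 := cont_on (μ-1) hz hzδ
  have i2 := cont_on (μ-2) hz hzδ
  have key : ∫ s in z..δ, (μ * (s ^ (μ - 1) * Real.exp (1 / s)) - s ^ (μ - 2) * Real.exp (1 / s))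
      = δ ^ μ * Real.exp (1 / δ) - z ^ μ * Real.exp (1 / z) := by
    apply intervalIntegral.integral_eq_sub_of_hasDerivAt
    · intro x hx
      have hx0 : 0 < x := by
        rw [Set.uIcc_of_le hzδ] at hx
        linarith [hx.1]
      have h1 : HasDerivAt (fun s : ℝ => s ^ μ) (μ * x ^ (μ - 1)) x :=
        Real.hasDerivAt_rpow_const (Or.inl hx0.ne')
      have h2 : HasDerivAt (fun s : ℝ => Real.exp (1 / s)) (Real.exp (1 / x) * (-(1 / x ^ 2))) x := by
        have := ((hasDerivAt_inv hx0.ne').exp)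
        simpa [one_div] using this
      have := h1.mul h2
      refine this.congr_deriv ?_
      have hxm : x ^ (μ - 2) = x ^ μ / x ^ (2:ℝ) := by
        rw [← Real.rpow_sub hx0]
      have hx2 : x ^ (2:ℝ) = x ^ 2 := Real.rpow_two x
      rw [hxm, hx2]
      field_simp
      ring
    · exact (i1.const_mul μ).sub i2
  rw [intervalIntegral.integral_sub (i1.const_mul μ) i2,
    intervalIntegral.integral_const_mul] at key
  linarith

/-- For every `n ∈ ℕ`, `δ > 0`, `ν ∈ ℝ` and `z ∈ (0, δ)`,
`e^{−1/z} ∫_z^δ s^{ν−2} e^{1/s} ds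
  = −e^{1/δ−1/z} Σ_{j<n} (ν)_j δ^{ν+j} + Σ_{j<n} (ν)_j z^{ν+j}
    + (ν)_n e^{−1/z} ∫_z^δ s^{ν+n−2} e^{1/s} ds`. -/
theorem stmt_9 (n : ℕ) (δ ν : ℝ) (hδ : 0 < δ) (z : ℝ) (hz : z ∈ Ioo 0 δ) :
    Real.exp (-(1 / z)) * ∫ s in z..δ, s ^ (ν - 2) * Real.exp (1 / s)
      = -Real.exp (1 / δ - 1 / z) *
          (∑ j ∈ range n, (∏ i ∈ range j, (ν + i)) * δ ^ (ν + j)) +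
        (∑ j ∈ range n, (∏ i ∈ range j, (ν + i)) * z ^ (ν + j)) +
        (∏ i ∈ range n, (ν + i)) * Real.exp (-(1 / z)) *
          ∫ s in z..δ, s ^ (ν + n - 2) * Real.exp (1 / s) := by
  obtain ⟨hz0, hzδ⟩ := hz
  induction n with
  | zero => simp
  | succ n ih =>
    rw [ih]
    have hibp := ibp (ν + n) hz0 hzδ.le
    have e1 : ν + n - 1 = ν + (n+1:ℕ) - 2 := by push_cast; ring
    rw [e1] at hibp
    rw [Finset.sum_range_succ, Finset.sum_range_succ, Finset.prod_range_succ, hibp]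
    have hexp : Real.exp (1/δ - 1/z) = Real.exp (1/δ) * (Real.exp (1/z))⁻¹ := by
      rw [← Real.exp_neg, ← Real.exp_add]; ring_nf
    have hneg : Real.exp (-(1/z)) = (Real.exp (1/z))⁻¹ := Real.exp_neg _
    rw [hexp, hneg]
    field_simp
    ring
end

section
/- The formal power series g̃(z) = Σ_{k≥0} α_k z^k with α₀ = 1 and α_{k+1} = (k/2 + 3/4) Σ_{j=0}^k α_j α_{k−j} is the unique formal power series solution of (1 − (3/4)z·g − z²·g')·g = 1 in ℝ[[z]]. -/
open Finset PowerSeries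

lemma symm_sum (β : ℕ → ℝ) (k : ℕ) :
    ∑ i ∈ range (k+1), (i:ℝ) * (β i * β (k-i)) =
    (k:ℝ)/2 * ∑ i ∈ range (k+1), β i * β (k-i) := by
  have h := Finset.sum_range_reflect (fun i => (i:ℝ) * (β i * β (k-i))) (k+1)
  simp only [Nat.add_sub_cancel] at h
  have h2 : ∑ i ∈ range (k+1), ((i:ℝ) * (β i * β (k-i)) + ((k - i : ℕ):ℝ) * (β (k-i) * β (k-(k-i))))
        = ∑ i ∈ range (k+1), (k:ℝ) * (β i * β (k-i)) := by
    apply Finset.sum_congr rfl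
    intro i hi
    have hik : i ≤ k := Nat.lt_succ_iff.mp (mem_range.mp hi)
    rw [Nat.cast_sub hik, Nat.sub_sub_self hik]
    ring
  rw [Finset.sum_add_distrib, h] at h2
  rw [← Finset.mul_sum] at h2
  linear_combination h2 / 2

lemma coeff_lhs_succ (f : ℝ⟦X⟧) (k : ℕ) :
    coeff (k+1) ((1 - PowerSeries.C (3/4 : ℝ) * PowerSeries.X * f
        - PowerSeries.X ^ 2 * d⁄dX ℝ f) * f) =
    coeff (k+1) f - ((k:ℝ)/2 + 3/4) * ∑ j ∈ range (k+1), coeff j f * coeff (k-j) f := by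
  have hexp : (1 - PowerSeries.C (3/4 : ℝ) * PowerSeries.X * f
        - PowerSeries.X ^ 2 * d⁄dX ℝ f) * f
      = f - PowerSeries.C (3/4 : ℝ) * (PowerSeries.X * (f*f))
        - PowerSeries.X ^ 2 * ((d⁄dX ℝ f) * f) := by ring
  rw [hexp, map_sub, map_sub, coeff_C_mul, coeff_succ_X_mul, coeff_mul,
    Finset.Nat.sum_antidiagonal_eq_sum_range_succ_mk]
  cases k with
  | zero =>
      rw [coeff_X_pow_mul']
      norm_num
  | succ m =>
      rw [show m + 1 + 1 = m + 2 from rfl, coeff_X_pow_mul, coeff_mul,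
        Finset.Nat.sum_antidiagonal_eq_sum_range_succ_mk]
      have hT : ∑ j ∈ range (m+1), coeff j (d⁄dX ℝ f) * coeff (m-j) f
          = ∑ i ∈ range (m+1+1), (i:ℝ) * (coeff i f * coeff (m+1-i) f) := by
        rw [Finset.sum_range_succ' (fun i => (i:ℝ) * (coeff i f * coeff (m+1-i) f)) (m+1)]
        simp only [Nat.cast_zero, zero_mul, add_zero, coeff_derivative]
        apply Finset.sum_congr rfl
        intro i _
        have : m + 1 - (i + 1) = m - i := by omega
        rw [this]
        push_cast
        ring
      rw [hT, symm_sum (fun i => coeff i f) (m+1)]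
      ring

lemma eqn_iff (f : ℝ⟦X⟧) :
    (1 - PowerSeries.C (3/4 : ℝ) * PowerSeries.X * f
        - PowerSeries.X ^ 2 * d⁄dX ℝ f) * f = 1 ↔
    (coeff 0 f = 1 ∧ ∀ k : ℕ, coeff (k+1) f =
      ((k:ℝ)/2 + 3/4) * ∑ j ∈ range (k+1), coeff j f * coeff (k-j) f) := by
  rw [PowerSeries.ext_iff]
  constructor
  · intro h
    constructor
    · have h0 := h 0
      simpa [mul_comm] using h0
    · intro k
      have hk := h (k+1)
      rw [coeff_lhs_succ] at hk
      simp only [coeff_one, Nat.succ_ne_zero, if_false] at hk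
      linarith
  · rintro ⟨h0, hrec⟩ n
    cases n with
    | zero => simpa [mul_comm] using h0
    | succ k =>
      rw [coeff_lhs_succ]
      simp only [coeff_one, Nat.succ_ne_zero, if_false]
      rw [hrec k]
      ring

/-- The formal power series `g̃ = Σ α_k z^k` with `α₀ = 1` and
`α_{k+1} = (k/2 + 3/4) Σ_{j≤k} α_j α_{k−j}` is the unique formal power series
solution of `(1 − (3/4) z g − z² g') g = 1` in `ℝ⟦X⟧`. -/
theorem stmt_10 (α : ℕ → ℝ) (hα0 : α 0 = 1)
    (hαrec : ∀ k : ℕ, α (k + 1) =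
      ((k : ℝ) / 2 + 3 / 4) * ∑ j ∈ range (k + 1), α j * α (k - j)) :
    (1 - PowerSeries.C (3 / 4 : ℝ) * PowerSeries.X * PowerSeries.mk α
        - PowerSeries.X ^ 2 * d⁄dX ℝ (PowerSeries.mk α)) * PowerSeries.mk α = 1 ∧
    ∀ f : ℝ⟦X⟧,
      (1 - PowerSeries.C (3 / 4 : ℝ) * PowerSeries.X * f
          - PowerSeries.X ^ 2 * d⁄dX ℝ f) * f = 1 →
      f = PowerSeries.mk α := by
  constructor
  · rw [eqn_iff]
    constructor
    · simpa using hα0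
    · intro k
      simpa using hαrec k
  · intro f hf
    rw [eqn_iff] at hf
    obtain ⟨h0, hrec⟩ := hf
    have key : ∀ n : ℕ, coeff n f = α n := by
      intro n
      induction n using Nat.strong_induction_on with
      | _ n ih =>
        cases n with
        | zero => rw [h0, hα0]
        | succ k =>
          rw [hrec k, hαrec k]
          congr 1
          apply Finset.sum_congr rfl
          intro j hj
          have hjk : j ≤ k := Nat.lt_succ_iff.mp (mem_range.mp hj)
          rw [ih j (by omega), ih (k - j) (by omega)]
    ext n
    rw [key n, coeff_mk]
end
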